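/- arXiv:0906.3853 — 9 statements merged into one kernel-verified Lean document; each statement's English description precedes it below -/
import Mathlib

section
/- For all integers n ≥ 1 and k ≥ 1, there is a one-to-one correspondence (a bijection) between the set of strings (s_i)_{i∈[0,kn−1]} with s_i ∈ [0,n−1] satisfying rules (R1) and (R2), and the set of isomorphism classes of initially-connected complete deterministic finite automaton structures (ICDFA∅'s) with n states over an alphabet of k symbols. -/
/-- Rule (R1): for every `m ∈ [2,n-1]` and every index `i`, if `s i = m` then
some earlier position carries `m - 1`. -/
def RuleR1 (n k : ℕ) (s : Fin (k * n) → Fin n) : Prop :=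
  ∀ m : ℕ, 2 ≤ m → m ≤ n - 1 → ∀ i : Fin (k * n), (s i : ℕ) = m →
    ∃ j : Fin (k * n), (j : ℕ) < (i : ℕ) ∧ (s j : ℕ) = m - 1

/-- Rule (R2): every `m ∈ [1,n-1]` occurs at some position `j < k*m`. -/
def RuleR2 (n k : ℕ) (s : Fin (k * n) → Fin n) : Prop :=
  ∀ m : ℕ, 1 ≤ m → m ≤ n - 1 → ∃ j : Fin (k * n), (j : ℕ) < k * m ∧ (s j : ℕ) = m

/-- A complete DFA structure with `n` states over a `k`-letter alphabet
(final states disregarded): a transition function and an initial state. -/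
structure DFAStruct (n k : ℕ) where
  delta : Fin n → Fin k → Fin n
  q0 : Fin n

/-- Extension of the transition function to words. -/
def deltaStar {n k : ℕ} (d : Fin n → Fin k → Fin n) : Fin n → List (Fin k) → Fin n
  | q, [] => q
  | q, a :: w => deltaStar d (d q a) w

/-- Initially connected: every state is reachable from the initial state. -/
def InitiallyConn {n k : ℕ} (A : DFAStruct n k) : Prop :=
  ∀ q : Fin n, ∃ w : List (Fin k), deltaStar A.delta A.q0 w = q

/-- Isomorphism of DFA structures. -/
def IsIso {n k : ℕ} (A B : DFAStruct n k) : Prop :=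
  ∃ f : Fin n ≃ Fin n, f A.q0 = B.q0 ∧ ∀ q σ, f (A.delta q σ) = B.delta (f q) σ

namespace ICDFAProof
variable {n : ℕ}


/-- One-position-at-a-time BFS exploration of a DFA.  `g q i` is the transition
from state `q` reading the letter `i % k`. -/
def bfs1 (k : ℕ) (g : Fin n → ℕ → Fin n) (q0 : Fin n) : ℕ → List (Fin n)
  | 0 => [q0]
  | i + 1 =>
    let l := bfs1 k g q0 i
    if h : i / k < l.length then
      let v := g l[i / k] i
      if v ∈ l then l else l ++ [v]
    else l

variable {k : ℕ} {g : Fin n → ℕ → Fin n} {q0 : Fin n}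

lemma bfs1_zero : bfs1 k g q0 0 = [q0] := rfl

lemma bfs1_prefix_succ (i : ℕ) : bfs1 k g q0 i <+: bfs1 k g q0 (i + 1) := by
  rw [bfs1]
  dsimp only
  split_ifs with h1 h2
  · exact List.prefix_refl _
  · exact List.prefix_append _ _
  · exact List.prefix_refl _

lemma bfs1_prefix {i j : ℕ} (h : i ≤ j) : bfs1 k g q0 i <+: bfs1 k g q0 j := by
  induction j with
  | zero => simp_all
  | succ j ih =>
    rcases Nat.lt_or_ge i (j+1) with h' | h'
    · exact (ih (by omega)).trans (bfs1_prefix_succ j)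
    · have : i = j + 1 := by omega
      subst this; exact List.prefix_refl _

lemma bfs1_nodup (i : ℕ) : (bfs1 k g q0 i).Nodup := by
  induction i with
  | zero => simp [bfs1]
  | succ i ih =>
    rw [bfs1]
    dsimp only
    split_ifs with h1 h2
    · exact ih
    · simp [List.nodup_append, ih, h2]; intro a ha hav; exact h2 (hav ▸ ha)
    · exact ih

lemma bfs1_length_zero : (bfs1 k g q0 0).length = 1 := rfl

lemma bfs1_length_mono {i j : ℕ} (h : i ≤ j) :
    (bfs1 k g q0 i).length ≤ (bfs1 k g q0 j).length :=
  (bfs1_prefix h).length_le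

lemma bfs1_length_succ_le (i : ℕ) :
    (bfs1 k g q0 (i + 1)).length ≤ (bfs1 k g q0 i).length + 1 := by
  rw [bfs1]
  dsimp only
  split_ifs with h1 h2
  · omega
  · simp
  · omega

lemma bfs1_length_le (i : ℕ) : (bfs1 k g q0 i).length ≤ n := by
  simpa using (bfs1_nodup (k := k) (g := g) (q0 := q0) i).length_le_card

lemma mem_bfs1_zero {x : Fin n} : x ∈ bfs1 k g q0 0 ↔ x = q0 := by simp [bfs1]

lemma q0_mem_bfs1 (i : ℕ) : q0 ∈ bfs1 k g q0 i :=
  (bfs1_prefix (Nat.zero_le i)).subset (by simp [bfs1])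

/-- If the step is actually processed, the produced value is in the next list. -/
lemma produced_mem_bfs1_succ {i : ℕ} (h : i / k < (bfs1 k g q0 i).length) :
    g (bfs1 k g q0 i)[i / k] i ∈ bfs1 k g q0 (i + 1) := by
  rw [bfs1]
  dsimp only
  rw [dif_pos h]
  split_ifs with h2
  · exact h2
  · simp

/-- Conversely, anything in the next list was there before or was just produced. -/
lemma mem_bfs1_succ {x : Fin n} {i : ℕ} (hx : x ∈ bfs1 k g q0 (i + 1)) :
    x ∈ bfs1 k g q0 i ∨
      ∃ h : i / k < (bfs1 k g q0 i).length, x = g (bfs1 k g q0 i)[i / k] i := by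
  rw [bfs1] at hx
  dsimp only at hx
  split_ifs at hx with h1 h2
  · exact Or.inl hx
  · rcases List.mem_append.mp hx with h | h
    · exact Or.inl h
    · exact Or.inr ⟨h1, by simpa using h⟩
  · exact Or.inl hx


lemma bfs1_length_key (hk : 0 < k) (hg : ∀ q i, g q i = g q (i % k))
    (hcl : ∀ S : Set (Fin n), q0 ∈ S → (∀ q ∈ S, ∀ i, g q i ∈ S) → ∀ x, x ∈ S) :
    ∀ m, m < n → m < (bfs1 k g q0 (k * m)).length := by
  intro m
  induction m using Nat.strong_induction_on with
  | _ m ih =>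
    intro hmn
    by_contra hle
    push_neg at hle
    -- the explored set is closed under transitions
    have hclosed : ∀ q ∈ bfs1 k g q0 (k * m), ∀ i, g q i ∈ bfs1 k g q0 (k * m) := by
      intro q hq i
      obtain ⟨⟨p, hp⟩, hget⟩ := List.mem_iff_get.mp hq
      have hpm : p < m := lt_of_lt_of_le hp hle
      set j : ℕ := k * p + i % k with hjdef
      have hik : i % k < k := Nat.mod_lt _ hk
      have hjm : j < k * m := by
        have : k * p + i % k < k * (p + 1) := by
          rw [Nat.mul_add, Nat.mul_one]; omega
        exact lt_of_lt_of_le this (Nat.mul_le_mul_left k (by omega))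
      have hjk : j / k = p := by
        rw [hjdef, Nat.mul_add_div hk, Nat.div_eq_of_lt hik, Nat.add_zero]
      have hskip : j / k < (bfs1 k g q0 j).length := by
        rw [hjk]
        calc p < (bfs1 k g q0 (k * p)).length := ih p hpm (by omega)
        _ ≤ (bfs1 k g q0 j).length := bfs1_length_mono (by omega)
      have hmem := produced_mem_bfs1_succ hskip
      have hgetj : (bfs1 k g q0 j)[j / k] = q := by
        have h1 : (bfs1 k g q0 j)[j / k] = (bfs1 k g q0 (k * m))[j / k]'(by
            rw [hjk]; exact lt_of_lt_of_le hp le_rfl) :=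
          (bfs1_prefix (le_of_lt hjm)).getElem hskip
        rw [h1]
        have := hget
        rw [List.get_eq_getElem] at this
        simp only [hjk]
        exact this
      have hval : g (bfs1 k g q0 j)[j / k] j = g q i := by
        rw [hgetj, hg q j, hg q i, hjdef, Nat.mul_add_mod, Nat.mod_mod_of_dvd]
        exact dvd_refl k
      rw [hval] at hmem
      exact (bfs1_prefix (by omega : j + 1 ≤ k * m)).subset hmem
    have hall := hcl {x | x ∈ bfs1 k g q0 (k * m)} (q0_mem_bfs1 _) hclosed
    have : n ≤ (bfs1 k g q0 (k * m)).length := by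
      have h1 : Finset.univ ⊆ (bfs1 k g q0 (k * m)).toFinset := by
        intro x _; simpa using hall x
      have h2 := Finset.card_le_card h1
      rwa [Finset.card_univ, Fintype.card_fin,
        List.toFinset_card_of_nodup (bfs1_nodup _)] at h2
    omega


lemma pos_lt {n k : ℕ} (q : Fin n) (a : Fin k) : k * (q : ℕ) + (a : ℕ) < k * n := by
  have h1 : k * (q : ℕ) + (a : ℕ) < k * ((q : ℕ) + 1) := by
    rw [Nat.mul_add, Nat.mul_one]; omega
  exact lt_of_lt_of_le h1 (Nat.mul_le_mul_left k q.isLt)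

lemma exists_string {n k : ℕ} (hn : 1 ≤ n) (hk : 1 ≤ k) (A : DFAStruct n k)
    (hA : InitiallyConn A) :
    ∃ s : Fin (k * n) → Fin n, RuleR1 n k s ∧ RuleR2 n k s ∧
      ∃ f : Fin n ≃ Fin n, f ⟨0, hn⟩ = A.q0 ∧
        ∀ (q : Fin n) (a : Fin k), f (s ⟨k * (q : ℕ) + (a : ℕ), pos_lt q a⟩)
          = A.delta (f q) a := by
  classical
  set g : Fin n → ℕ → Fin n := fun q i => A.delta q ⟨i % k, Nat.mod_lt _ hk⟩ with hgdef
  set q0 : Fin n := A.q0 with hq0def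
  have hg : ∀ q i, g q i = g q (i % k) := by
    intro q i
    simp only [hgdef]
    congr 1
    exact Fin.ext (Nat.mod_mod_of_dvd i (dvd_refl k)).symm
  have hcl : ∀ S : Set (Fin n), q0 ∈ S → (∀ q ∈ S, ∀ i, g q i ∈ S) → ∀ x, x ∈ S := by
    intro S h0 hstep x
    obtain ⟨w, hw⟩ := hA x
    rw [← hw]
    have : ∀ (w : List (Fin k)) (q : Fin n), q ∈ S → deltaStar A.delta q w ∈ S := by
      intro w
      induction w with
      | nil => intro q hq; exact hq
      | cons a w ih =>
        intro q hq
        have : A.delta q a ∈ S := by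
          have h := hstep q hq (a : ℕ)
          simp only [hgdef] at h
          have : (⟨(a : ℕ) % k, Nat.mod_lt _ hk⟩ : Fin k) = a :=
            Fin.ext (Nat.mod_eq_of_lt a.isLt)
          rwa [this] at h
        exact ih _ this
    exact this w q0 h0
  have key := bfs1_length_key hk hg hcl
  set B : ℕ → List (Fin n) := bfs1 k g q0 with hBdef
  set L : List (Fin n) := B (k * n) with hLdef
  have Bnodup : ∀ i, (B i).Nodup := fun i => bfs1_nodup i
  have Bpre : ∀ {i j : ℕ}, i ≤ j → B i <+: B j := fun h => bfs1_prefix h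
  have Blen_le : ∀ i, (B i).length ≤ n := fun i => bfs1_length_le i
  have Blen_mono : ∀ {i j : ℕ}, i ≤ j → (B i).length ≤ (B j).length :=
    fun h => bfs1_length_mono h
  have hLnd : L.Nodup := Bnodup (k * n)
  have hLlen : L.length = n := by
    refine le_antisymm (Blen_le _) ?_
    have h1 := key (n - 1) (by omega)
    have h2 : (B (k * (n-1))).length ≤ L.length :=
      Blen_mono (Nat.mul_le_mul_left k (by omega))
    omega
  set idx : ℕ → Fin n := fun r => L.getD r q0 with hidxdef
  have hidx : ∀ (r : ℕ) (hr : r < n), idx r = L[r]'(by omega) := by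
    intro r hr
    exact List.getD_eq_getElem L q0 (by omega)
  have hidxinj : ∀ (r r' : ℕ), r < n → r' < n → idx r = idx r' → r = r' := by
    intro r r' hr hr' h
    rw [hidx r hr, hidx r' hr'] at h
    exact (List.Nodup.getElem_inj_iff hLnd).mp h
  have hL0 : idx 0 = q0 := by
    rw [hidx 0 hn]
    have hpre : B 0 <+: L := Bpre (Nat.zero_le _)
    rw [hBdef, bfs1_zero] at hpre
    have := hpre.getElem (i := 0) (by simp)
    simpa using this.symm
  have noskip : ∀ j, j < k * n → j / k < (B j).length := by
    intro j hj
    have h1 : j / k < n := (Nat.div_lt_iff_lt_mul hk).2 (by rw [Nat.mul_comm]; exact hj)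
    calc j / k < (B (k * (j / k))).length := key _ h1
      _ ≤ (B j).length := Blen_mono (Nat.mul_div_le j k)
  have hBget : ∀ (j : ℕ) (hj : j < k * n),
      (B j)[j / k]'(noskip j hj) = idx (j / k) := by
    intro j hj
    have h1 : j / k < n := (Nat.div_lt_iff_lt_mul hk).2 (by rw [Nat.mul_comm]; exact hj)
    rw [hidx _ h1]
    exact (Bpre (le_of_lt hj)).getElem (noskip j hj)
  set v : ℕ → Fin n := fun j => g (idx (j / k)) j with hvdef
  have prodmem : ∀ (j : ℕ), j < k * n → v j ∈ B (j + 1) := by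
    intro j hj
    have := produced_mem_bfs1_succ (noskip j hj)
    rwa [hBget j hj] at this
  have memlt : ∀ (m : ℕ) (hm : m < n) (i : ℕ) (hi : i ≤ k * n),
      (idx m ∈ B i ↔ m < (B i).length) := by
    intro m hm i hi
    constructor
    · intro h
      obtain ⟨⟨r, hr⟩, hget⟩ := List.mem_iff_get.mp h
      rw [List.get_eq_getElem] at hget
      have h1 : (B i)[r] = L[r]'(by have := Blen_le i; omega) :=
        (Bpre hi).getElem hr
      rw [h1, hidx m hm] at hget
      have := (List.Nodup.getElem_inj_iff hLnd).mp hget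
      omega
    · intro h
      have h1 : (B i)[m] = L[m]'(by omega) := (Bpre hi).getElem h
      rw [hidx m hm, ← h1]
      exact List.getElem_mem _
  have memprod : ∀ (i : ℕ), i ≤ k * n → ∀ (m : ℕ), 1 ≤ m → m < n →
      idx m ∈ B i → ∃ j, j < i ∧ v j = idx m := by
    intro i
    induction i with
    | zero =>
      intro _ m h1 hm hmem
      rw [hBdef, bfs1_zero] at hmem
      simp only [List.mem_singleton] at hmem
      rw [← hL0] at hmem
      have := hidxinj m 0 hm hn hmem
      omega
    | succ i ih =>
      intro hi m h1 hm hmem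
      rcases mem_bfs1_succ hmem with h | ⟨hh, hval⟩
      · obtain ⟨j, hj, hvj⟩ := ih (by omega) m h1 hm h
        exact ⟨j, by omega, hvj⟩
      · refine ⟨i, by omega, ?_⟩
        rw [hvdef]
        dsimp only
        rw [← hBget i (by omega)]
        exact hval.symm
  have hEx : ∀ (m : ℕ), 1 ≤ m → m < n → ∃ j, j < k * n ∧ v j = idx m := by
    intro m h1 hm
    have : idx m ∈ B (k * n) := by
      rw [memlt m hm (k * n) le_rfl]
      have : (B (k * n)).length = n := hLlen
      omega
    exact memprod (k * n) le_rfl m h1 hm this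
  obtain ⟨J, hJspec, hJle⟩ : ∃ J : ℕ → ℕ,
      (∀ m, 1 ≤ m → m < n → J m < k * n ∧ v (J m) = idx m) ∧
      (∀ m, 1 ≤ m → m < n → ∀ j, j < k * n → v j = idx m → J m ≤ j) := by
    refine ⟨fun m => if h : 1 ≤ m ∧ m < n then Nat.find (hEx m h.1 h.2) else 0, ?_, ?_⟩
    · intro m h1 hm
      dsimp only
      rw [dif_pos (⟨h1, hm⟩ : 1 ≤ m ∧ m < n)]
      exact Nat.find_spec (hEx m h1 hm)
    · intro m h1 hm j hj hvj
      dsimp only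
      rw [dif_pos (⟨h1, hm⟩ : 1 ≤ m ∧ m < n)]
      exact Nat.find_le ⟨hj, hvj⟩
  have hJlt : ∀ m, 1 ≤ m → m < n → J m < k * m := by
    intro m h1 hm
    have hkm : k * m ≤ k * n := Nat.mul_le_mul_left k (le_of_lt hm)
    have hmem : idx m ∈ B (k * m) := by
      rw [memlt m hm (k * m) hkm]
      exact key m hm
    obtain ⟨j, hj, hvj⟩ := memprod (k * m) hkm m h1 hm hmem
    exact lt_of_le_of_lt (hJle m h1 hm j (by omega) hvj) hj
  have hJlen : ∀ m, 1 ≤ m → m < n → (B (J m)).length = m := by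
    intro m h1 hm
    have hspec := hJspec m h1 hm
    have hub : ¬ (m < (B (J m)).length) := by
      intro hlt
      have hmem : idx m ∈ B (J m) := (memlt m hm (J m) (by omega)).2 hlt
      obtain ⟨j, hj, hvj⟩ := memprod (J m) (by omega) m h1 hm hmem
      have := hJle m h1 hm j (by omega) hvj
      omega
    have hlb : m < (B (J m + 1)).length := by
      have hmem : v (J m) ∈ B (J m + 1) := prodmem (J m) hspec.1
      rw [hspec.2] at hmem
      exact (memlt m hm (J m + 1) (by omega)).1 hmem
    have : (B (J m + 1)).length ≤ (B (J m)).length + 1 := bfs1_length_succ_le (J m)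
    omega
  have hJmono : ∀ m m', 1 ≤ m' → m' < m → m < n → J m' < J m := by
    intro m m' h1 hm'm hm
    have hmem : idx m' ∈ B (J m) := by
      rw [memlt m' (by omega) (J m) (by have := hJspec m (by omega) hm; omega)]
      rw [hJlen m (by omega) hm]
      exact hm'm
    obtain ⟨j, hj, hvj⟩ := memprod (J m) (by have := hJspec m (by omega) hm; omega)
      m' h1 (by omega) hmem
    exact lt_of_le_of_lt (hJle m' h1 (by omega) j (by have := hJspec m (by omega) hm; omega) hvj) hj
  -- the canonical numbering equivalence
  have hFinj : Function.Injective (fun r : Fin n => idx (r : ℕ)) := by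
    intro r r' h
    exact Fin.ext (hidxinj r r' r.isLt r'.isLt h)
  set e : Fin n ≃ Fin n := Equiv.ofBijective _ (Finite.injective_iff_bijective.mp hFinj)
    with hedef
  have he : ∀ r : Fin n, e r = idx (r : ℕ) := fun r => rfl
  set s : Fin (k * n) → Fin n := fun i => e.symm (v (i : ℕ)) with hsdef
  have hs : ∀ (j : ℕ) (hj : j < k * n) (m : ℕ) (hm : m < n),
      ((s ⟨j, hj⟩ : ℕ) = m ↔ v j = idx m) := by
    intro j hj m hm
    rw [hsdef]
    dsimp only
    constructor
    · intro h
      have : e.symm (v j) = ⟨m, hm⟩ := Fin.ext h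
      rw [Equiv.symm_apply_eq, he] at this
      exact this
    · intro h
      have : e.symm (v j) = ⟨m, hm⟩ := by
        rw [Equiv.symm_apply_eq, he]
        exact h
      rw [this]
  refine ⟨s, ?_, ?_, e, ?_, ?_⟩
  · -- R1
    intro m h2 hm1 i hsi
    have hm : m < n := by omega
    have hvi : v (i : ℕ) = idx m := by
      rw [← hs i.1 i.isLt m hm]
      simpa using hsi
    have hJmi : J m ≤ (i : ℕ) := hJle m (by omega) hm i.1 i.isLt hvi
    have hmono := hJmono m (m - 1) (by omega) (by omega) hm
    have hspec := hJspec (m - 1) (by omega) (by omega)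
    refine ⟨⟨J (m - 1), hspec.1⟩, by simpa using lt_of_lt_of_le hmono hJmi, ?_⟩
    rw [hs (J (m - 1)) hspec.1 (m - 1) (by omega)]
    exact hspec.2
  · -- R2
    intro m h1 hm1
    have hm : m < n := by omega
    have hspec := hJspec m h1 hm
    refine ⟨⟨J m, hspec.1⟩, by simpa using hJlt m h1 hm, ?_⟩
    rw [hs (J m) hspec.1 m hm]
    exact hspec.2
  · rw [he]
    simpa using hL0
  · intro q a
    have hpos := pos_lt (k := k) q a
    have hdiv : (k * (q : ℕ) + (a : ℕ)) / k = (q : ℕ) := by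
      rw [Nat.mul_add_div hk, Nat.div_eq_of_lt a.isLt, Nat.add_zero]
    have hmod : (k * (q : ℕ) + (a : ℕ)) % k = (a : ℕ) := by
      rw [Nat.mul_add_mod, Nat.mod_eq_of_lt a.isLt]
    rw [hsdef]
    dsimp only
    rw [Equiv.apply_symm_apply, hvdef]
    dsimp only
    rw [hdiv, hg, hmod, hgdef]
    dsimp only
    rw [he]
    congr 1
    exact Fin.ext (Nat.mod_eq_of_lt a.isLt)


/-- The DFA structure associated with a string. -/
def toDFA {n k : ℕ} (hn : 1 ≤ n) (s : Fin (k * n) → Fin n) : DFAStruct n k :=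
  ⟨fun q a => s ⟨k * (q : ℕ) + (a : ℕ), pos_lt q a⟩, ⟨0, hn⟩⟩

lemma deltaStar_snoc {n k : ℕ} (d : Fin n → Fin k → Fin n) (q : Fin n)
    (w : List (Fin k)) (a : Fin k) :
    deltaStar d q (w ++ [a]) = d (deltaStar d q w) a := by
  induction w generalizing q with
  | nil => rfl
  | cons b w ih => simpa [deltaStar] using ih (d q b)

lemma toDFA_conn {n k : ℕ} (hn : 1 ≤ n) (hk : 1 ≤ k) (s : Fin (k * n) → Fin n)
    (h2 : RuleR2 n k s) : InitiallyConn (toDFA hn s) := by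
  have main : ∀ m : ℕ, ∀ hm : m < n,
      ∃ w : List (Fin k), deltaStar (toDFA hn s).delta ⟨0, hn⟩ w = ⟨m, hm⟩ := by
    intro m
    induction m using Nat.strong_induction_on with
    | _ m ih =>
      intro hm
      rcases Nat.eq_zero_or_pos m with h0 | h1
      · subst h0; exact ⟨[], rfl⟩
      · obtain ⟨j, hjlt, hsj⟩ := h2 m h1 (by omega)
        have hp : (j : ℕ) / k < m := (Nat.div_lt_iff_lt_mul hk).2
          (lt_of_lt_of_eq hjlt (Nat.mul_comm k m))
        obtain ⟨w, hw⟩ := ih ((j : ℕ) / k) hp (by omega)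
        refine ⟨w ++ [⟨(j : ℕ) % k, Nat.mod_lt _ hk⟩], ?_⟩
        rw [deltaStar_snoc, hw]
        have hd : (toDFA hn s).delta ⟨(j : ℕ) / k, by omega⟩ ⟨(j : ℕ) % k, Nat.mod_lt _ hk⟩
            = s j := by
          show s _ = s j
          congr 1
          exact Fin.ext (by simpa using Nat.div_add_mod (j : ℕ) k)
        rw [hd]
        exact Fin.ext hsj
  intro q
  obtain ⟨w, hw⟩ := main (q : ℕ) q.isLt
  refine ⟨w, ?_⟩
  show deltaStar (toDFA hn s).delta ⟨0, hn⟩ w = q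
  rw [hw]

/-- Rigidity: an isomorphism between the DFAs of two canonical strings forces
the strings to be equal. -/
lemma string_eq {n k : ℕ} (hn : 1 ≤ n) (hk : 1 ≤ k) {s t : Fin (k * n) → Fin n}
    (hs1 : RuleR1 n k s) (hs2 : RuleR2 n k s) (ht1 : RuleR1 n k t)
    (h : IsIso (toDFA hn s) (toDFA hn t)) : s = t := by
  classical
  obtain ⟨f, hf0, hfd⟩ := h
  have hdivlt : ∀ j : Fin (k * n), (j : ℕ) / k < n := fun j =>
    (Nat.div_lt_iff_lt_mul hk).2 (lt_of_lt_of_eq j.isLt (Nat.mul_comm k n))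
  -- occurrences propagate downwards thanks to R1
  have occ : ∀ mv : ℕ, 1 ≤ mv → ∀ v : ℕ, ∀ i : Fin (k * n), (s i : ℕ) = v → mv ≤ v →
      ∃ i' : Fin (k * n), (i' : ℕ) ≤ (i : ℕ) ∧ (s i' : ℕ) = mv := by
    intro mv hmv v
    induction v using Nat.strong_induction_on with
    | _ v ih =>
      intro i hsi hle
      rcases eq_or_lt_of_le hle with heq | hlt
      · exact ⟨i, le_rfl, by omega⟩
      · have hv2 : 2 ≤ v := by omega
        have hvn : v ≤ n - 1 := by have := (s i).isLt; omega
        obtain ⟨j, hji, hsj⟩ := hs1 v hv2 hvn i hsi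
        obtain ⟨i', hi', hsi'⟩ := ih (v - 1) (by omega) j hsj (by omega)
        exact ⟨i', by omega, hsi'⟩
  -- transitions translate along f
  have htrans : ∀ (j : Fin (k * n)),
      f (s j) = t ⟨k * ((f ⟨(j : ℕ) / k, hdivlt j⟩ : Fin n) : ℕ) + (j : ℕ) % k,
        pos_lt (f ⟨(j : ℕ) / k, hdivlt j⟩) ⟨(j : ℕ) % k, Nat.mod_lt _ hk⟩⟩ := by
    intro j
    have h1 := hfd ⟨(j : ℕ) / k, hdivlt j⟩ ⟨(j : ℕ) % k, Nat.mod_lt _ hk⟩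
    have h2 : (toDFA hn s).delta ⟨(j : ℕ) / k, hdivlt j⟩ ⟨(j : ℕ) % k, Nat.mod_lt _ hk⟩
        = s j := by
      show s _ = s j
      congr 1
      exact Fin.ext (by simpa using Nat.div_add_mod (j : ℕ) k)
    rw [h2] at h1
    exact h1
  have htr : ∀ (mv : ℕ),
      (∀ p : ℕ, p < mv → ∀ hp : p < n, f ⟨p, hp⟩ = ⟨p, hp⟩) →
      ∀ j : Fin (k * n), (j : ℕ) / k < mv → t j = f (s j) := by
    intro mv ih j hjk
    have h1 := htrans j
    rw [ih ((j : ℕ) / k) hjk (hdivlt j)] at h1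
    rw [h1]
    congr 1
    exact Fin.ext (by simpa using (Nat.div_add_mod (j : ℕ) k).symm)
  -- f is the identity
  have fid : ∀ mv : ℕ, ∀ hmv : mv < n, f ⟨mv, hmv⟩ = ⟨mv, hmv⟩ := by
    intro mv
    induction mv using Nat.strong_induction_on with
    | _ mv ih =>
      intro hmv
      rcases Nat.eq_zero_or_pos mv with h0 | h1
      · subst h0; exact hf0
      · -- f fixes everything below mv, so (f mv).val ≥ mv
        have hge : mv ≤ ((f ⟨mv, hmv⟩ : Fin n) : ℕ) := by
          by_contra hlt
          push_neg at hlt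
          have he1 : f ⟨((f ⟨mv, hmv⟩ : Fin n) : ℕ), (f ⟨mv, hmv⟩).isLt⟩
              = ⟨((f ⟨mv, hmv⟩ : Fin n) : ℕ), (f ⟨mv, hmv⟩).isLt⟩ :=
            ih _ hlt _
          have he2 : f (f ⟨mv, hmv⟩) = f ⟨mv, hmv⟩ := he1
          have := f.injective he2
          rw [this] at hlt
          exact lt_irrefl _ hlt
        -- first occurrence of mv in s
        obtain ⟨j0, hj0, hsj0⟩ := hs2 mv h1 (by omega)
        have hP : ∃ i : ℕ, ∃ h : i < k * n, (s ⟨i, h⟩ : ℕ) = mv :=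
          ⟨(j0 : ℕ), j0.isLt, hsj0⟩
        set istar := Nat.find hP with histardef
        obtain ⟨histar, hsistar⟩ := Nat.find_spec hP
        have histar2 : istar < k * mv :=
          lt_of_le_of_lt (Nat.find_le ⟨j0.isLt, hsj0⟩) hj0
        have hidiv : istar / k < mv := (Nat.div_lt_iff_lt_mul hk).2
          (lt_of_lt_of_eq histar2 (Nat.mul_comm k mv))
        have hfm : f ⟨mv, hmv⟩ = t ⟨istar, histar⟩ := by
          have hsval : s ⟨istar, histar⟩ = ⟨mv, hmv⟩ := Fin.ext hsistar
          rw [← hsval]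
          exact (htr mv (fun p hp hpn => ih p hp hpn) ⟨istar, histar⟩
            (by simpa using hidiv)).symm
        by_contra hne
        have hgt : mv < ((f ⟨mv, hmv⟩ : Fin n) : ℕ) := by
          rcases eq_or_lt_of_le hge with heq | hlt
          · exact absurd (Fin.ext heq.symm) hne
          · exact hlt
        set m' := ((f ⟨mv, hmv⟩ : Fin n) : ℕ) with hm'def
        have htval : (t ⟨istar, histar⟩ : ℕ) = m' := by rw [← hfm]
        obtain ⟨j, hji, htj⟩ := ht1 m' (by omega)
          (by have := (f ⟨mv, hmv⟩).isLt; omega) ⟨istar, histar⟩ htval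
        have hjlt' : (j : ℕ) < istar := by simpa using hji
        have hjlt : (j : ℕ) < k * mv := lt_trans hjlt' histar2
        have hjk : (j : ℕ) / k < mv := (Nat.div_lt_iff_lt_mul hk).2
          (lt_of_lt_of_eq hjlt (Nat.mul_comm k mv))
        have htj2 : t j = f (s j) := htr mv (fun p hp hpn => ih p hp hpn) j hjk
        have hslb : mv ≤ ((s j : Fin n) : ℕ) := by
          by_contra hlt2
          push_neg at hlt2
          have hfs : f (s j) = s j := ih ((s j : Fin n) : ℕ) hlt2 (s j).isLt
          have hval : ((s j : Fin n) : ℕ) = m' - 1 := by rw [← htj, htj2, hfs]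
          omega
        obtain ⟨i', hi'le, hsi'⟩ := occ mv h1 ((s j : Fin n) : ℕ) j rfl hslb
        have hnot : ¬ ∃ h : (i' : ℕ) < k * n, ((s ⟨(i' : ℕ), h⟩ : Fin n) : ℕ) = mv :=
          Nat.find_min hP (by omega)
        exact hnot ⟨i'.isLt, hsi'⟩
  have : ∀ j : Fin (k * n), t j = s j := by
    intro j
    have h1 := htr n (fun p hp hpn => fid p hpn) j (hdivlt j)
    exact h1.trans (fid ((s j : Fin n) : ℕ) (s j).isLt)
  exact funext fun j => (this j).symm


lemma isIso_equivalence (n k : ℕ) : Equivalence (fun A B : DFAStruct n k => IsIso A B) := by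
  constructor
  · intro A
    exact ⟨Equiv.refl _, rfl, fun q σ => rfl⟩
  · rintro A B ⟨f, h0, hd⟩
    refine ⟨f.symm, by rw [← h0, Equiv.symm_apply_apply], fun q σ => ?_⟩
    apply f.injective
    rw [Equiv.apply_symm_apply, hd, Equiv.apply_symm_apply]
  · rintro A B C ⟨f, hf0, hfd⟩ ⟨g, hg0, hgd⟩
    refine ⟨f.trans g, by simp [hf0, hg0], fun q σ => ?_⟩
    simp [hfd, hgd]


end ICDFAProof

/-- There is a bijection between strings satisfying (R1) and (R2) and
isomorphism classes of initially-connected DFA structures with `n` states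
over a `k`-letter alphabet. -/
theorem stmt0 (n k : ℕ) (hn : 1 ≤ n) (hk : 1 ≤ k) :
    Nonempty
      ({s : Fin (k * n) → Fin n // RuleR1 n k s ∧ RuleR2 n k s} ≃
        Quot (fun A B : {A : DFAStruct n k // InitiallyConn A} => IsIso A.1 B.1)) := by
  classical
  set r : {A : DFAStruct n k // InitiallyConn A} → {A : DFAStruct n k // InitiallyConn A} → Prop
    := fun A B => IsIso A.1 B.1 with hrdef
  have hrequiv : Equivalence r := by
    have h := ICDFAProof.isIso_equivalence n k
    exact ⟨fun A => h.refl A.1, fun hab => h.symm hab, fun hab hbc => h.trans hab hbc⟩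
  set F : {s : Fin (k * n) → Fin n // RuleR1 n k s ∧ RuleR2 n k s} → Quot r :=
    fun s => Quot.mk r ⟨ICDFAProof.toDFA hn s.1, ICDFAProof.toDFA_conn hn hk s.1 s.2.2⟩
    with hFdef
  have hinj : Function.Injective F := by
    intro s1 s2 h
    have h2 := Quot.eq.mp h
    have h3 : r _ _ := (Equivalence.eqvGen_iff hrequiv).mp h2
    exact Subtype.ext (ICDFAProof.string_eq hn hk s1.2.1 s1.2.2 s2.2.1 h3)
  have hsurj : Function.Surjective F := by
    intro x
    induction x using Quot.ind with
    | _ a =>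
      obtain ⟨A, hA⟩ := a
      obtain ⟨s, h1, h2, f, hf0, hfd⟩ := ICDFAProof.exists_string hn hk A hA
      refine ⟨⟨s, h1, h2⟩, ?_⟩
      apply Quot.sound
      show IsIso (ICDFAProof.toDFA hn s) A
      refine ⟨f, ?_, ?_⟩
      · exact hf0
      · intro q σ
        exact hfd q σ
  exact ⟨Equiv.ofBijective F ⟨hinj, hsurj⟩⟩
end

section
/- For all integers n ≥ 1 and k ≥ 1, if a string (s_i)_{i∈[0,kn−1]} with s_i ∈ [0,n−1] satisfies rules (R1) and (R2), then the deterministic automaton structure with state set {0,…,n−1}, initial state 0, and transition function δ(q,σ_j) = s_{kq+j} for q ∈ [0,n−1] and j ∈ [0,k−1] is initially connected, i.e., every state is reachable from 0 by some word. -/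
/-- The transition function determined by a string: `δ(q, σ_j) = s_{k q + j}`. -/
def stringDelta {n k : ℕ} (s : Fin (k * n) → Fin n) (q : Fin n) (σ : Fin k) : Fin n :=
  s ⟨k * (q : ℕ) + (σ : ℕ), by
    calc k * (q : ℕ) + (σ : ℕ) < k * (q : ℕ) + k := Nat.add_lt_add_left σ.isLt _
      _ = k * ((q : ℕ) + 1) := (Nat.mul_succ k (q : ℕ)).symm
      _ ≤ k * n := Nat.mul_le_mul_left k q.isLt⟩

lemma deltaStar_append {n k : ℕ} (d : Fin n → Fin k → Fin n) (q : Fin n)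
    (w1 w2 : List (Fin k)) :
    deltaStar d q (w1 ++ w2) = deltaStar d (deltaStar d q w1) w2 := by
  induction w1 generalizing q with
  | nil => rfl
  | cons a w ih => simp [deltaStar, ih]

/-- The automaton structure determined by a string satisfying (R1) and (R2),
with state set `{0, …, n-1}`, initial state `0`, and `δ(q, σ_j) = s_{k q + j}`,
is initially connected: every state is reachable from `0`. -/
theorem stmt2 (n k : ℕ) (hn : 1 ≤ n) (hk : 1 ≤ k)
    (s : Fin (k * n) → Fin n) (h1 : RuleR1 n k s) (h2 : RuleR2 n k s) :
    ∀ q : Fin n, ∃ w : List (Fin k), deltaStar (stringDelta s) ⟨0, hn⟩ w = q := by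
  have key : ∀ m : ℕ, ∀ q : Fin n, (q : ℕ) = m →
      ∃ w : List (Fin k), deltaStar (stringDelta s) ⟨0, hn⟩ w = q := by
    intro m
    induction m using Nat.strong_induction_on with
    | _ m ih =>
      intro q hq
      rcases Nat.eq_zero_or_pos m with h0 | hpos
      · exact ⟨[], by apply Fin.ext; simp [deltaStar, hq, h0]⟩
      · have hm : m ≤ n - 1 := by have := q.isLt; omega
        obtain ⟨j, hj, hsj⟩ := h2 m hpos hm
        have hq' : (j : ℕ) / k < m := Nat.div_lt_of_lt_mul (by omega)
        have hq'n : (j : ℕ) / k < n := by omega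
        obtain ⟨w, hw⟩ := ih ((j : ℕ) / k) hq' ⟨(j : ℕ) / k, hq'n⟩ rfl
        refine ⟨w ++ [⟨(j : ℕ) % k, Nat.mod_lt _ hk⟩], ?_⟩
        rw [deltaStar_append, hw]
        show stringDelta s _ _ = q
        apply Fin.ext
        have hjj : k * ((j : ℕ) / k) + (j : ℕ) % k = (j : ℕ) := Nat.div_add_mod _ _
        simp only [stringDelta]
        have : (⟨k * ((j : ℕ) / k) + (j : ℕ) % k, by omega⟩ : Fin (k * n)) = j :=
          Fin.ext hjj
        rw [this, hsj, hq]
  intro q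
  exact key (q : ℕ) q rfl
end

section
/- For all integers n ≥ 1 and k ≥ 1, if two strings (s_i)_{i∈[0,kn−1]} and (s'_i)_{i∈[0,kn−1]} with entries in [0,n−1] both satisfy rules (R1) and (R2) and are distinct, then the corresponding automaton structures (state set {0,…,n−1}, initial state 0, transitions δ(q,σ_j) = s_{kq+j} and δ'(q,σ_j) = s'_{kq+j}) are not isomorphic. -/
/-- Key lemma: if a string satisfies (R1) and some position `j` carries a value `≥ m ≥ 1`,
then some position `≤ j` carries exactly the value `m` (descending chain from R1). -/
lemma key_chain {n k : ℕ} {s : Fin (k * n) → Fin n} (h1 : RuleR1 n k s)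
    (m : ℕ) (hm : 1 ≤ m) :
    ∀ d : ℕ, ∀ j : Fin (k * n), (s j : ℕ) = m + d →
      ∃ j' : Fin (k * n), (j' : ℕ) ≤ (j : ℕ) ∧ (s j' : ℕ) = m := by
  intro d
  induction d with
  | zero => intro j hj; exact ⟨j, le_refl _, by simpa using hj⟩
  | succ d ih =>
    intro j hj
    have hlt : (s j : ℕ) < n := (s j).isLt
    have h2le : 2 ≤ m + (d + 1) := by omega
    have hle : m + (d + 1) ≤ n - 1 := by omega
    obtain ⟨j₁, hj₁lt, hj₁⟩ := h1 (m + (d + 1)) h2le hle j hj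
    obtain ⟨j', hj'le, hj'⟩ := ih j₁ (by omega)
    exact ⟨j', by omega, hj'⟩

/-- Two distinct strings satisfying (R1) and (R2) yield non-isomorphic
automaton structures (state set `{0,…,n-1}`, initial state `0`,
transitions `δ(q,σ_j) = s_{kq+j}` and `δ'(q,σ_j) = s'_{kq+j}`). -/
theorem stmt3 (n k : ℕ) (hn : 1 ≤ n) (hk : 1 ≤ k)
    (s s' : Fin (k * n) → Fin n)
    (h1 : RuleR1 n k s) (h2 : RuleR2 n k s)
    (h1' : RuleR1 n k s') (h2' : RuleR2 n k s')
    (hne : s ≠ s') :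
    ¬ ∃ f : Fin n ≃ Fin n, f ⟨0, hn⟩ = ⟨0, hn⟩ ∧
        ∀ (q : Fin n) (σ : Fin k), f (stringDelta s q σ) = stringDelta s' (f q) σ := by
  classical
  rintro ⟨f, hf0, hcomm⟩
  have hk0 : 0 < k := hk
  -- the inverse also commutes
  have hcomm' : ∀ (q : Fin n) (σ : Fin k),
      f.symm (stringDelta s' q σ) = stringDelta s (f.symm q) σ := by
    intro q σ
    apply f.injective
    rw [hcomm (f.symm q) σ, Equiv.apply_symm_apply, Equiv.apply_symm_apply]
  -- every state is fixed by f
  have hid' : ∀ t : ℕ, ∀ p : Fin n, (p : ℕ) = t → f p = p := by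
    intro t
    induction t using Nat.strong_induction_on with
    | _ t IHt =>
    intro p hpt
    have IH : ∀ q : Fin n, (q : ℕ) < (p : ℕ) → f q = q :=
      fun q hq => IHt (q : ℕ) (hpt ▸ hq) q rfl
    clear IHt hpt
    rcases Nat.eq_zero_or_pos (p : ℕ) with hp0 | hp1
    · have : p = ⟨0, hn⟩ := Fin.ext hp0
      rw [this, hf0]
    · -- p ≥ 1
      have hpn : (p : ℕ) ≤ n - 1 := by have := p.isLt; omega
      -- f p ≥ p
      have hfp : (p : ℕ) ≤ (f p : ℕ) := by
        by_contra h
        push_neg at h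
        have := IH (f p) h
        have := f.injective this
        rw [this] at h
        omega
      have hfsp : (p : ℕ) ≤ (f.symm p : ℕ) := by
        by_contra h
        push_neg at h
        have h' := IH (f.symm p) h
        rw [Equiv.apply_symm_apply] at h'
        rw [← h'] at h
        omega
      -- minimal occurrence of p in s
      obtain ⟨j₀, hj₀lt, hj₀⟩ := h2 (p : ℕ) hp1 hpn
      obtain ⟨j, hjmem, hjmin⟩ :=
        (Finset.univ.filter (fun j : Fin (k * n) => (s j : ℕ) = (p : ℕ))).exists_min_image
          (fun j => (j : ℕ)) ⟨j₀, by simp [hj₀]⟩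
      simp only [Finset.mem_filter, Finset.mem_univ, true_and] at hjmem
      have hjlt : (j : ℕ) < k * (p : ℕ) := lt_of_le_of_lt
        (hjmin j₀ (by simp [hj₀])) hj₀lt
      -- minimal occurrence of p in s'
      obtain ⟨j₀', hj₀'lt, hj₀'⟩ := h2' (p : ℕ) hp1 hpn
      obtain ⟨j', hj'mem, hj'min⟩ :=
        (Finset.univ.filter (fun j : Fin (k * n) => (s' j : ℕ) = (p : ℕ))).exists_min_image
          (fun j => (j : ℕ)) ⟨j₀', by simp [hj₀']⟩
      simp only [Finset.mem_filter, Finset.mem_univ, true_and] at hj'mem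
      have hj'lt : (j' : ℕ) < k * (p : ℕ) := lt_of_le_of_lt
        (hj'min j₀' (by simp [hj₀'])) hj₀'lt
      -- decompose j and j' as state/letter
      have hqj : (j : ℕ) / k < (p : ℕ) := by
        rw [Nat.div_lt_iff_lt_mul hk0]; exact hjlt.trans_eq (Nat.mul_comm k _)
      have hqj' : (j' : ℕ) / k < (p : ℕ) := by
        rw [Nat.div_lt_iff_lt_mul hk0]; exact hj'lt.trans_eq (Nat.mul_comm k _)
      have hqjn : (j : ℕ) / k < n := lt_of_lt_of_le hqj (le_of_lt p.isLt)
      have hqj'n : (j' : ℕ) / k < n := lt_of_lt_of_le hqj' (le_of_lt p.isLt)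
      set q : Fin n := ⟨(j : ℕ) / k, hqjn⟩ with hq
      set q' : Fin n := ⟨(j' : ℕ) / k, hqj'n⟩ with hq'
      have hfq : f q = q := IH q hqj
      have hfsq' : f.symm q' = q' :=
        (Equiv.symm_apply_eq f).mpr (IH q' hqj').symm
      -- stringDelta at (q, j%k) is s j
      have hd1 : stringDelta s q ⟨(j : ℕ) % k, Nat.mod_lt _ hk0⟩ = s j := by
        unfold stringDelta
        congr 1
        exact Fin.ext (Nat.div_add_mod (j : ℕ) k)
      have hd1' : stringDelta s' q ⟨(j : ℕ) % k, Nat.mod_lt _ hk0⟩ = s' j := by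
        unfold stringDelta
        congr 1
        exact Fin.ext (Nat.div_add_mod (j : ℕ) k)
      have hd2 : stringDelta s q' ⟨(j' : ℕ) % k, Nat.mod_lt _ hk0⟩ = s j' := by
        unfold stringDelta
        congr 1
        exact Fin.ext (Nat.div_add_mod (j' : ℕ) k)
      have hd2' : stringDelta s' q' ⟨(j' : ℕ) % k, Nat.mod_lt _ hk0⟩ = s' j' := by
        unfold stringDelta
        congr 1
        exact Fin.ext (Nat.div_add_mod (j' : ℕ) k)
      -- f p = s' j
      have hfpj : f p = s' j := by
        have := hcomm q ⟨(j : ℕ) % k, Nat.mod_lt _ hk0⟩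
        rw [hd1, hfq, hd1'] at this
        rw [← this]
        congr 1
        exact Fin.ext hjmem.symm
      -- f.symm p = s j'
      have hfspj : f.symm p = s j' := by
        have := hcomm' q' ⟨(j' : ℕ) % k, Nat.mod_lt _ hk0⟩
        rw [hd2', hfsq', hd2] at this
        rw [← this]
        congr 1
        exact Fin.ext hj'mem.symm
      -- s' j has value ≥ p, so j' ≤ j
      have hv1 : (p : ℕ) ≤ (s' j : ℕ) := by rw [← hfpj]; exact hfp
      have hv2 : (p : ℕ) ≤ (s j' : ℕ) := by rw [← hfspj]; exact hfsp
      obtain ⟨j₂, hj₂le, hj₂⟩ := key_chain h1' (p : ℕ) hp1 ((s' j : ℕ) - (p : ℕ)) j (by omega)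
      obtain ⟨j₃, hj₃le, hj₃⟩ := key_chain h1 (p : ℕ) hp1 ((s j' : ℕ) - (p : ℕ)) j' (by omega)
      have h12 : (j' : ℕ) ≤ (j : ℕ) := le_trans (hj'min j₂ (by simp [hj₂])) hj₂le
      have h21 : (j : ℕ) ≤ (j' : ℕ) := le_trans (hjmin j₃ (by simp [hj₃])) hj₃le
      have hjj : j = j' := Fin.ext (le_antisymm h21 h12)
      apply Fin.ext
      rw [hfpj, hjj, hj'mem]
  have hid : ∀ p : Fin n, f p = p := fun p => hid' (p : ℕ) p rfl
  -- therefore s = s'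
  apply hne
  funext i
  have hin : (i : ℕ) / k < n := by
    rw [Nat.div_lt_iff_lt_mul hk0]
    exact i.isLt.trans_eq (Nat.mul_comm k n)
  set q : Fin n := ⟨(i : ℕ) / k, hin⟩
  have hd : stringDelta s q ⟨(i : ℕ) % k, Nat.mod_lt _ hk0⟩ = s i := by
    unfold stringDelta
    congr 1
    exact Fin.ext (Nat.div_add_mod (i : ℕ) k)
  have hd' : stringDelta s' q ⟨(i : ℕ) % k, Nat.mod_lt _ hk0⟩ = s' i := by
    unfold stringDelta
    congr 1
    exact Fin.ext (Nat.div_add_mod (i : ℕ) k)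
  have := hcomm q ⟨(i : ℕ) % k, Nat.mod_lt _ hk0⟩
  rw [hd, hid (s i), hid q, hd'] at this
  exact this
end

section
/- For all integers n ≥ 1 and k ≥ 1, the number F_{k,n} of sequences of integers (f_j)_{j∈[1,n−1]} with 0 ≤ f_1, f_{j−1} < f_j for all j ∈ [2,n−1], and f_m < km for all m ∈ [1,n−1], equals the generalised Fuss–Catalan number C_n^{(k)} = binom(kn, n) / ((k−1)n + 1). Equivalently, Σ_{f_1=0}^{k−1} Σ_{f_2=f_1+1}^{2k−1} ⋯ Σ_{f_{n−1}=f_{n−2}+1}^{k(n−1)−1} 1 = binom(kn,n)/((k−1)n+1). -/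
open Finset

/-- A flag sequence for `n` and `k`, indexed by `Fin (n-1)` (position `j-1`
holding the flag `f_j`, `j ∈ [1, n-1]`): a strictly increasing sequence with
`f_j < k*j` for all `j ∈ [1, n-1]`.  (All such values lie below `k*(n-1)`.) -/
def IsFlagSeq (n k : ℕ) (f : Fin (n - 1) → Fin (k * (n - 1))) : Prop :=
  StrictMono f ∧ ∀ j : Fin (n - 1), (f j : ℕ) < k * ((j : ℕ) + 1)

namespace FussAux

/-- number of elements of `S` below `t` -/
def cntb (S : Finset ℕ) (t : ℕ) : ℕ := #(S.filter (· < t))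

/-- two-period count -/
def c2 (L : ℕ) (S : Finset ℕ) (t : ℕ) : ℕ :=
  cntb S t + #(S.filter (fun x => x + L < t))

/-- prefix-sum function (ballot statistic) -/
def G (k L : ℕ) (S : Finset ℕ) (t : ℕ) : ℤ := k * c2 L S t - t

/-- the ballot ("good") condition -/
def goodS (k L : ℕ) (S : Finset ℕ) : Prop := ∀ t < L, t ≤ k * cntb S t

instance goodS.decPred (k L : ℕ) : DecidablePred (goodS k L) := fun S => by
  unfold goodS
  infer_instance

/-- rotation of a subset of `range L` by `r` -/
def rotP (L r : ℕ) (S : Finset ℕ) : Finset ℕ := S.image (fun x => (x + r) % L)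

lemma c2_low {L : ℕ} (S : Finset ℕ) {t : ℕ} (ht : t ≤ L) : c2 L S t = cntb S t := by
  have h : S.filter (fun x => x + L < t) = ∅ := filter_eq_empty_iff.mpr (fun x _ => by omega)
  unfold c2
  rw [h, card_empty, add_zero]

lemma c2_high {L : ℕ} {S : Finset ℕ} (hS : S ⊆ range L) {t : ℕ} (_ht : t ≤ L) :
    c2 L S (t + L) = S.card + cntb S t := by
  unfold c2 cntb
  have h1 : S.filter (· < t + L) = S := by
    apply filter_true_of_mem
    intro x hx
    have := mem_range.mp (hS hx)
    omega
  have h2 : S.filter (fun x => x + L < t + L) = S.filter (· < t) := by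
    ext y
    simp only [mem_filter]
    constructor
    · rintro ⟨h, h'⟩; exact ⟨h, by omega⟩
    · rintro ⟨h, h'⟩; exact ⟨h, by omega⟩
  rw [h1, h2]

lemma G_shift {k n L : ℕ} {S : Finset ℕ} (hS : S ⊆ range L) (hc : S.card = n)
    (hL : L = k * n + 1) {t : ℕ} (ht : t ≤ L) :
    G k L S (t + L) = G k L S t - 1 := by
  unfold G
  rw [c2_high hS ht, c2_low S ht, hc]
  have hLz : (L : ℤ) = k * n + 1 := by rw [hL]; push_cast; ring
  push_cast
  rw [hLz]
  ring

lemma rot_subset {L r : ℕ} (hL : 0 < L) (S : Finset ℕ) : rotP L r S ⊆ range L := by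
  intro x hx
  obtain ⟨y, _, rfl⟩ := mem_image.mp hx
  exact mem_range.mpr (Nat.mod_lt _ hL)

lemma rot_injOn {L r : ℕ} {S : Finset ℕ} (hS : S ⊆ range L) :
    Set.InjOn (fun x => (x + r) % L) S := by
  intro a ha b hb hab
  have haL := mem_range.mp (hS ha)
  have hbL := mem_range.mp (hS hb)
  have : (a + r) % L = (b + r) % L := hab
  have h2 : a % L = b % L := Nat.ModEq.add_right_cancel' r this
  rwa [Nat.mod_eq_of_lt haL, Nat.mod_eq_of_lt hbL] at h2

lemma rot_card {L r : ℕ} {S : Finset ℕ} (hS : S ⊆ range L) :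
    (rotP L r S).card = S.card :=
  card_image_of_injOn (rot_injOn hS)

lemma rot_rot {L r : ℕ} (hr : r ≤ L) {S : Finset ℕ} (hS : S ⊆ range L) :
    rotP L (L - r) (rotP L r S) = S := by
  unfold rotP
  rw [image_image]
  have : ∀ x ∈ S, ((x + r) % L + (L - r)) % L = x := by
    intro x hx
    have hxL := mem_range.mp (hS hx)
    have h1 : ((x + r) % L + (L - r)) % L = (x + r + (L - r)) % L := Nat.mod_add_mod _ _ _
    have h2 : x + r + (L - r) = x + L := by omega
    rw [h1, h2, Nat.add_mod_right, Nat.mod_eq_of_lt hxL]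
  calc S.image (fun x => ((x + r) % L + (L - r)) % L) = S.image id := by
        apply image_congr
        intro x hx
        exact this x hx
    _ = S := image_id

lemma rot_rot' {L r : ℕ} (hr : r ≤ L) {S : Finset ℕ} (hS : S ⊆ range L) :
    rotP L r (rotP L (L - r) S) = S := by
  unfold rotP
  rw [image_image]
  have : ∀ x ∈ S, ((x + (L - r)) % L + r) % L = x := by
    intro x hx
    have hxL := mem_range.mp (hS hx)
    have h1 : ((x + (L - r)) % L + r) % L = (x + (L - r) + r) % L := Nat.mod_add_mod _ _ _
    have h2 : x + (L - r) + r = x + L := by omega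
    rw [h1, h2, Nat.add_mod_right, Nat.mod_eq_of_lt hxL]
  calc S.image (fun x => ((x + (L - r)) % L + r) % L) = S.image id := by
        apply image_congr
        intro x hx
        exact this x hx
    _ = S := image_id

lemma rotval {x u L : ℕ} (hx : x < L) (hu : u ≤ L) :
    (x + (L - u)) % L = if x < u then x + (L - u) else x - u := by
  split_ifs with h
  · exact Nat.mod_eq_of_lt (by omega)
  · have : x + (L - u) = (x - u) + L := by omega
    rw [this, Nat.add_mod_right, Nat.mod_eq_of_lt (by omega)]

lemma rot_count {L u t : ℕ} {S : Finset ℕ} (hS : S ⊆ range L) (hu : u ≤ L) (ht : t ≤ L) :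
    c2 L S u + cntb (rotP L (L - u) S) t = c2 L S (u + t) := by
  classical
  have h1 : cntb (rotP L (L - u) S) t = #(S.filter fun x => (x + (L - u)) % L < t) := by
    unfold cntb rotP
    rw [filter_image]
    exact card_image_of_injOn (Set.InjOn.mono (filter_subset _ _) (rot_injOn hS))
  rw [c2_low S hu, h1]
  unfold c2 cntb
  rw [card_filter, card_filter, card_filter, card_filter, ← sum_add_distrib, ← sum_add_distrib]
  apply sum_congr rfl
  intro x hx
  have hxL := mem_range.mp (hS hx)
  rw [rotval hxL hu]
  split_ifs <;> omega

lemma good_rot_iff {k L u : ℕ} {S : Finset ℕ} (hS : S ⊆ range L) (hu : u ≤ L) :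
    goodS k L (rotP L (L - u) S) ↔ ∀ t < L, G k L S u ≤ G k L S (u + t) := by
  unfold goodS
  apply forall_congr'
  intro t
  apply imp_congr_right
  intro ht
  have h := rot_count hS hu ht.le
  unfold G
  rw [← h]
  push_cast
  rw [mul_add]
  constructor
  · intro hh
    have : (t : ℤ) ≤ (k : ℤ) * (cntb (rotP L (L - u) S) t : ℤ) := by exact_mod_cast hh
    linarith
  · intro hh
    have : (t : ℤ) ≤ (k : ℤ) * (cntb (rotP L (L - u) S) t : ℤ) := by linarith
    exact_mod_cast this

lemma exists_unique_rot {k n L : ℕ} {S : Finset ℕ} (hS : S ⊆ range L) (hc : S.card = n)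
    (hL : L = k * n + 1) :
    ∃! r, r < L ∧ goodS k L (rotP L r S) := by
  classical
  have hL0 : 0 < L := by omega
  -- minimizer of G on Icc 1 L
  obtain ⟨u₀, hu₀mem, hu₀min⟩ := exists_min_image (Finset.Icc 1 L) (G k L S) ⟨1, Finset.mem_Icc.mpr ⟨le_refl 1, by omega⟩⟩
  set μ := G k L S u₀ with hμ
  set A := (Finset.Icc 1 L).filter (fun u => G k L S u = μ) with hA
  have hAne : A.Nonempty := ⟨u₀, by simp [hA, hu₀mem, hμ]⟩
  set u' := A.min' hAne with hu'
  have hu'A : u' ∈ A := A.min'_mem hAne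
  have hu'mem : u' ∈ Finset.Icc 1 L := (mem_filter.mp hu'A).1
  have hu'val : G k L S u' = μ := (mem_filter.mp hu'A).2
  have hu'1 : 1 ≤ u' := (Finset.mem_Icc.mp hu'mem).1
  have hu'L : u' ≤ L := (Finset.mem_Icc.mp hu'mem).2
  have hmin : ∀ v ∈ Finset.Icc 1 L, μ ≤ G k L S v := hu₀min
  have hleast : ∀ v ∈ Finset.Icc 1 L, v < u' → μ < G k L S v := by
    intro v hv hvu
    rcases lt_or_eq_of_le (hmin v hv) with h | h
    · exact h
    · exfalso
      have : v ∈ A := mem_filter.mpr ⟨hv, h.symm⟩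
      have := A.min'_le v this
      omega
  refine ⟨L - u', ⟨by omega, ?_⟩, ?_⟩
  · -- existence: rotation by L - u' is good
    rw [good_rot_iff hS hu'L]
    intro t ht
    by_cases hcase : u' + t ≤ L
    · rw [hu'val]
      exact hmin _ (Finset.mem_Icc.mpr ⟨by omega, hcase⟩)
    · have hs1 : u' + t = (u' + t - L) + L := by omega
      set s := u' + t - L with hs
      have hsL : s ≤ L := by omega
      have hs1' : 1 ≤ s := by omega
      have hsu : s < u' := by omega
      rw [hs1, G_shift hS hc hL hsL, hu'val]
      have := hleast s (Finset.mem_Icc.mpr ⟨hs1', hsL⟩) hsu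
      omega
  · -- uniqueness
    rintro r ⟨hrL, hrgood⟩
    set u := L - r with hudef
    have hru : r = L - u := by omega
    have huL : u ≤ L := by omega
    have hu1 : 1 ≤ u := by omega
    rw [hru] at hrgood
    rw [good_rot_iff hS huL] at hrgood
    -- u is a minimizer
    have hmin2 : ∀ v ∈ Finset.Icc 1 L, G k L S u ≤ G k L S v := by
      intro v hv
      have hv1 := (Finset.mem_Icc.mp hv).1
      have hvL := (Finset.mem_Icc.mp hv).2
      by_cases hcase : u ≤ v
      · have h : v = u + (v - u) := by omega
        rw [h]
        exact hrgood (v - u) (by omega)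
      · push_neg at hcase
        have h1 : u + (v + L - u) = v + L := by omega
        have h2 := hrgood (v + L - u) (by omega)
        rw [h1] at h2
        have h4 : G k L S (v + L) = G k L S v - 1 := G_shift hS hc hL (by omega)
        omega
    -- and strictly less than everything before it
    have hstrict : ∀ v, 1 ≤ v → v < u → G k L S u < G k L S v := by
      intro v hv1 hvu
      have h1 : u + (v + L - u) = v + L := by omega
      have h2 := hrgood (v + L - u) (by omega)
      rw [h1] at h2
      have h4 : G k L S (v + L) = G k L S v - 1 := G_shift hS hc hL (by omega)
      omega
    have huval : G k L S u = μ := by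
      have h1 := hmin2 u₀ hu₀mem
      have h2 := hmin u (Finset.mem_Icc.mpr ⟨hu1, huL⟩)
      omega
    have huu' : u = u' := by
      have h1 : u' ≤ u := A.min'_le u (mem_filter.mpr ⟨Finset.mem_Icc.mpr ⟨hu1, huL⟩, huval⟩)
      rcases lt_or_eq_of_le h1 with h | h
      · exfalso
        have := hstrict u' hu'1 h
        omega
      · omega
    omega

lemma filter_good_card_one {k n L : ℕ} {S : Finset ℕ} (hS : S ⊆ range L) (hc : S.card = n)
    (hL : L = k * n + 1) :
    #((range L).filter (fun r => goodS k L (rotP L r S))) = 1 := by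
  classical
  obtain ⟨r, ⟨hrL, hrg⟩, huniq⟩ := exists_unique_rot hS hc hL
  rw [card_eq_one]
  refine ⟨r, ?_⟩
  ext x
  simp only [mem_filter, mem_range, mem_singleton]
  constructor
  · rintro ⟨h1, h2⟩
    exact huniq x ⟨h1, h2⟩
  · rintro rfl
    exact ⟨hrL, hrg⟩

/-- The key double-counting identity. -/
lemma double_count (k n L : ℕ) (hL : L = k * n + 1) :
    Nat.choose L n = L * #((((range L).powersetCard n)).filter (goodS k L)) := by
  classical
  have hL0 : 0 < L := by omega
  set Sub := (range L).powersetCard n with hSub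
  have hmem : ∀ S, S ∈ Sub ↔ S ⊆ range L ∧ S.card = n := by
    intro S
    rw [hSub, mem_powersetCard]
  have h1 : #Sub = ∑ S ∈ Sub, #((range L).filter (fun r => goodS k L (rotP L r S))) := by
    rw [card_eq_sum_ones]
    apply sum_congr rfl
    intro S hS
    obtain ⟨ha, hb⟩ := (hmem S).mp hS
    exact (filter_good_card_one ha hb hL).symm
  have h2 : ∀ S ∈ Sub, #((range L).filter (fun r => goodS k L (rotP L r S)))
      = ∑ r ∈ range L, if goodS k L (rotP L r S) then 1 else 0 := by
    intro S _
    rw [card_filter]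
  have h3 : #Sub = ∑ r ∈ range L, ∑ S ∈ Sub, (if goodS k L (rotP L r S) then 1 else 0) := by
    rw [h1, sum_congr rfl h2, sum_comm]
  have h4 : ∀ r ∈ range L, ∑ S ∈ Sub, (if goodS k L (rotP L r S) then 1 else 0)
      = #(Sub.filter (goodS k L)) := by
    intro r hr
    have hrL := mem_range.mp hr
    rw [← card_filter]
    apply card_bij (fun S _ => rotP L r S)
    · intro S hS
      obtain ⟨hS1, hS2⟩ := mem_filter.mp hS
      obtain ⟨hS1a, hS1b⟩ := (hmem S).mp hS1
      exact mem_filter.mpr ⟨(hmem _).mpr ⟨rot_subset hL0 _, by rw [rot_card hS1a, hS1b]⟩, hS2⟩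
    · intro S hS S' hS' hSS
      obtain ⟨hS1a, _⟩ := (hmem S).mp (mem_filter.mp hS).1
      obtain ⟨hS1a', _⟩ := (hmem S').mp (mem_filter.mp hS').1
      have := congrArg (rotP L (L - r)) hSS
      rwa [rot_rot hrL.le hS1a, rot_rot hrL.le hS1a'] at this
    · intro S hS
      obtain ⟨hS1, hS2⟩ := mem_filter.mp hS
      obtain ⟨hS1a, hS1b⟩ := (hmem S).mp hS1
      refine ⟨rotP L (L - r) S, mem_filter.mpr ⟨(hmem _).mpr
        ⟨rot_subset hL0 _, by rw [rot_card hS1a, hS1b]⟩, ?_⟩, rot_rot' hrL.le hS1a⟩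
      rw [rot_rot' hrL.le hS1a]
      exact hS2
  calc L.choose n = #Sub := by rw [hSub, card_powersetCard, card_range]
    _ = ∑ _r ∈ range L, #(Sub.filter (goodS k L)) := by rw [h3]; exact sum_congr rfl h4
    _ = L * #(Sub.filter (goodS k L)) := by rw [sum_const, card_range, smul_eq_mul]

lemma good_iff_local {k n L : ℕ} {S : Finset ℕ} (hS : S ⊆ range L) (hc : S.card = n)
    (hL : L = k * n + 1) :
    goodS k L S ↔ ∀ x ∈ S, x ≤ k * cntb S x := by
  constructor
  · intro h x hx
    exact h x (mem_range.mp (hS hx))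
  · intro h t ht
    by_cases hcase : (S.filter (t ≤ ·)).Nonempty
    · set x₀ := (S.filter (t ≤ ·)).min' hcase with hx₀
      have hx₀mem := (S.filter (t ≤ ·)).min'_mem hcase
      have hx₀S : x₀ ∈ S := (mem_filter.mp hx₀mem).1
      have hx₀t : t ≤ x₀ := (mem_filter.mp hx₀mem).2
      have hcnt : cntb S x₀ = cntb S t := by
        unfold cntb
        congr 1
        ext y
        simp only [mem_filter]
        constructor
        · rintro ⟨hyS, hy⟩
          refine ⟨hyS, ?_⟩
          by_contra hyt
          push_neg at hyt
          have : y ∈ S.filter (t ≤ ·) := mem_filter.mpr ⟨hyS, hyt⟩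
          have := (S.filter (t ≤ ·)).min'_le y this
          omega
        · rintro ⟨hyS, hy⟩
          exact ⟨hyS, by omega⟩
      have hx := h x₀ hx₀S
      rw [hcnt] at hx
      omega
    · have hall : S.filter (· < t) = S := by
        apply filter_true_of_mem
        intro x hx
        by_contra hxt
        push_neg at hxt
        exact hcase ⟨x, mem_filter.mpr ⟨hx, hxt⟩⟩
      unfold cntb
      rw [hall, hc]
      omega

lemma image_orderEmbOfFin (S : Finset ℕ) {m : ℕ} (h : S.card = m) :
    univ.image (S.orderEmbOfFin h) = S := by
  apply coe_injective
  rw [coe_image, coe_univ, Set.image_univ]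
  exact S.range_orderEmbOfFin h

lemma rank_orderEmbOfFin (S : Finset ℕ) {m : ℕ} (h : S.card = m) (i : Fin m) :
    cntb S (S.orderEmbOfFin h i) = i := by
  classical
  unfold cntb
  have hkey : S.filter (· < S.orderEmbOfFin h i)
      = (univ.image (S.orderEmbOfFin h)).filter (· < S.orderEmbOfFin h i) := by
    rw [image_orderEmbOfFin]
  rw [hkey, filter_image, card_image_of_injective _ (S.orderEmbOfFin h).injective]
  have heq : (univ.filter fun j => S.orderEmbOfFin h j < S.orderEmbOfFin h i)
      = univ.filter (· < i) := by
    ext j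
    simp [OrderEmbedding.lt_iff_lt]
  rw [heq]
  have : univ.filter (· < i) = Finset.Iio i := by
    ext j
    simp
  rw [this, Fin.card_Iio]

lemma zero_mem_of_good {k n L : ℕ} {S : Finset ℕ} (hS : S ⊆ range L) (hc : S.card = n)
    (hn : 0 < n) (hL : L = k * n + 1) (hg : goodS k L S) : 0 ∈ S := by
  have hne : S.Nonempty := card_pos.mp (by omega)
  set x₀ := S.min' hne with hx₀
  have hx₀S : x₀ ∈ S := S.min'_mem hne
  have hcnt : cntb S x₀ = 0 := by
    unfold cntb
    rw [card_eq_zero]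
    apply filter_eq_empty_iff.mpr
    intro y hy
    have := S.min'_le y hy
    omega
  have := ((good_iff_local hS hc hL).mp hg) x₀ hx₀S
  rw [hcnt] at this
  have : x₀ = 0 := by omega
  rwa [← this]

/-- The bridge: flag sequences are in bijection with good subsets. -/
lemma bridge (k m : ℕ) (hk : 1 ≤ k) :
    Nat.card {f : Fin m → Fin (k * m) // IsFlagSeq (m + 1) k f} =
      #((((range (k * (m + 1) + 1)).powersetCard (m + 1))).filter (goodS k (k * (m + 1) + 1))) := by
  classical
  set L := k * (m + 1) + 1 with hLdef
  have hL : L = k * (m + 1) + 1 := rfl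
  have hL0 : 0 < L := by positivity
  rw [Nat.card_eq_fintype_card, Fintype.card_subtype]
  apply card_bij (fun f _ => insert 0 ((univ : Finset (Fin m)).image (fun j => (f j : ℕ) + 1)))
  · -- maps to target
    rintro f hf
    have hflag : IsFlagSeq (m + 1) k f := (mem_filter.mp hf).2
    obtain ⟨hmono, hbd⟩ := hflag
    have hginj : Function.Injective (fun j : Fin m => (f j : ℕ) + 1) :=
      fun a b hab => hmono.injective (Fin.ext (Nat.succ_injective hab))
    have h0not : (0 : ℕ) ∉ (univ : Finset (Fin m)).image (fun j => (f j : ℕ) + 1) := by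
      simp only [mem_image, not_exists]
      intro j
      simp
    have hcard : (insert 0 ((univ : Finset (Fin m)).image (fun j => (f j : ℕ) + 1))).card
        = m + 1 := by
      rw [card_insert_of_notMem h0not, card_image_of_injective _ hginj, card_univ,
        Fintype.card_fin]
    have hsub : insert 0 ((univ : Finset (Fin m)).image (fun j => (f j : ℕ) + 1))
        ⊆ range L := by
      intro x hx
      rcases mem_insert.mp hx with rfl | hx
      · exact mem_range.mpr hL0
      · obtain ⟨j, _, rfl⟩ := mem_image.mp hx
        have := (f j).isLt
        have := hbd j
        have := j.isLt
        apply mem_range.mpr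
        calc (f j : ℕ) + 1 ≤ k * m + 1 := by omega
          _ < L := by rw [hL]; nlinarith
    refine mem_filter.mpr ⟨mem_powersetCard.mpr ⟨hsub, hcard⟩, ?_⟩
    rw [good_iff_local hsub hcard hL]
    intro x hx
    rcases mem_insert.mp hx with rfl | hx
    · omega
    · obtain ⟨j, _, rfl⟩ := mem_image.mp hx
      have hrank : cntb (insert 0 ((univ : Finset (Fin m)).image (fun j => (f j : ℕ) + 1)))
          ((f j : ℕ) + 1) = (j : ℕ) + 1 := by
        unfold cntb
        rw [filter_insert]
        rw [if_pos (by omega)]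
        rw [filter_image]
        have himg : (univ.filter fun j' : Fin m => ((f j' : ℕ) + 1 < (f j : ℕ) + 1))
            = univ.filter (· < j) := by
          ext j'
          simp only [mem_filter, mem_univ, true_and]
          constructor
          · intro h
            exact hmono.lt_iff_lt.mp (by exact Fin.lt_def.mpr (by omega))
          · intro h
            have := hmono h
            rw [Fin.lt_def] at this
            omega
        rw [himg]
        rw [card_insert_of_notMem (by
          simp only [mem_image, not_exists]
          intro j'
          simp)]
        rw [card_image_of_injective _ hginj]
        have : univ.filter (· < j) = Finset.Iio j := by ext; simp
        rw [this, Fin.card_Iio]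
      rw [hrank]
      have := hbd j
      omega
  · -- injective
    intro f hf f' hf' heq
    have hmono := ((mem_filter.mp hf).2).1
    have hmono' := ((mem_filter.mp hf').2).1
    have h0not : ∀ (g : Fin m → Fin (k * m)),
        (0 : ℕ) ∉ (univ : Finset (Fin m)).image (fun j => (g j : ℕ) + 1) := by
      intro g
      simp only [mem_image, not_exists]
      intro j
      simp
    have himg : (univ : Finset (Fin m)).image (fun j => (f j : ℕ) + 1)
        = (univ : Finset (Fin m)).image (fun j => (f' j : ℕ) + 1) := by
      have := congrArg (fun s => Finset.erase s 0) heq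
      simpa [erase_insert (h0not f), erase_insert (h0not f')] using this
    have hginjf : Function.Injective (fun j : Fin m => (f j : ℕ) + 1) :=
      fun a b hab => hmono.injective (Fin.ext (Nat.succ_injective hab))
    have hcard : ((univ : Finset (Fin m)).image (fun j => (f j : ℕ) + 1)).card = m := by
      rw [card_image_of_injective _ hginjf, card_univ, Fintype.card_fin]
    have hmonog : StrictMono (fun j : Fin m => (f j : ℕ) + 1) := by
      intro a b hab
      show (f a : ℕ) + 1 < (f b : ℕ) + 1
      have := hmono hab
      rw [Fin.lt_def] at this
      omega
    have hmonog' : StrictMono (fun j : Fin m => (f' j : ℕ) + 1) := by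
      intro a b hab
      show (f' a : ℕ) + 1 < (f' b : ℕ) + 1
      have := hmono' hab
      rw [Fin.lt_def] at this
      omega
    have he1 := orderEmbOfFin_unique hcard (f := fun j : Fin m => (f j : ℕ) + 1)
      (fun x => mem_image_of_mem _ (mem_univ x)) hmonog
    have he2 := orderEmbOfFin_unique hcard (f := fun j : Fin m => (f' j : ℕ) + 1)
      (fun x => by rw [himg]; exact mem_image_of_mem _ (mem_univ x)) hmonog'
    funext j
    have : (f j : ℕ) + 1 = (f' j : ℕ) + 1 := by
      rw [congrFun he1 j, congrFun he2 j]
    exact Fin.ext (by omega)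
  · -- surjective
    intro S hS
    obtain ⟨hS1, hSgood⟩ := mem_filter.mp hS
    obtain ⟨hSsub, hScard⟩ := mem_powersetCard.mp hS1
    have hlocal := (good_iff_local hSsub hScard hL).mp hSgood
    have h0S : 0 ∈ S := zero_mem_of_good hSsub hScard (by omega) hL hSgood
    set S' := S.erase 0 with hS'
    have hS'card : S'.card = m := by
      rw [hS', card_erase_of_mem h0S, hScard]
      omega
    set e := S'.orderEmbOfFin hS'card with he
    have heS' : ∀ j, e j ∈ S' := fun j => S'.orderEmbOfFin_mem hS'card j
    have heS : ∀ j, e j ∈ S := fun j => (mem_erase.mp (heS' j)).2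
    have he1 : ∀ j, 1 ≤ e j := by
      intro j
      have := (mem_erase.mp (heS' j)).1
      omega
    have hrankS : ∀ j, cntb S (e j) = (j : ℕ) + 1 := by
      intro j
      have h1 : cntb S' (e j) = (j : ℕ) := rank_orderEmbOfFin S' hS'card j
      unfold cntb at *
      have : S = insert 0 S' := (insert_erase h0S).symm
      rw [this, filter_insert, if_pos (by have := he1 j; omega)]
      rw [card_insert_of_notMem (by
        intro hmem
        have := (mem_erase.mp (mem_filter.mp hmem).1).1
        exact this rfl)]
      omega
    have hebd : ∀ j : Fin m, e j ≤ k * ((j : ℕ) + 1) := by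
      intro j
      have := hlocal (e j) (heS j)
      rw [hrankS j] at this
      exact this
    have hfbd : ∀ j : Fin m, e j - 1 < k * m := by
      intro j
      have h1 := hebd j
      have h2 := he1 j
      have h3 : (j : ℕ) + 1 ≤ m := j.isLt
      have : k * ((j : ℕ) + 1) ≤ k * m := Nat.mul_le_mul_left k h3
      omega
    refine ⟨fun j => ⟨e j - 1, hfbd j⟩, ?_, ?_⟩
    · apply mem_filter.mpr
      refine ⟨mem_univ _, ?_, ?_⟩
      · intro a b hab
        have h1 := (e.strictMono) hab
        have h2 := he1 a
        have h3 := he1 b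
        show (⟨e a - 1, hfbd a⟩ : Fin (k * m)) < ⟨e b - 1, hfbd b⟩
        rw [Fin.lt_def]
        show e a - 1 < e b - 1
        omega
      · intro j
        have h1 := hebd j
        have h2 := he1 j
        show ((⟨e j - 1, hfbd j⟩ : Fin (k * m)) : ℕ) < k * ((j : ℕ) + 1)
        show e j - 1 < k * ((j : ℕ) + 1)
        omega
    · -- insert 0 (image ...) = S
      have himg : (univ : Finset (Fin m)).image (fun j => ((e j - 1 : ℕ)) + 1)
          = (univ : Finset (Fin m)).image e := by
        apply image_congr
        intro j _
        show e j - 1 + 1 = e j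
        have := he1 j
        omega
      calc insert 0 ((univ : Finset (Fin m)).image (fun j => ((⟨e j - 1, hfbd j⟩ : Fin (k * m)) : ℕ) + 1))
          = insert 0 ((univ : Finset (Fin m)).image e) := by rw [← himg]
        _ = insert 0 S' := by rw [image_orderEmbOfFin]
        _ = S := insert_erase h0S

end FussAux

/-- The number `F_{k,n}` of flag sequences `(f_j)_{j∈[1,n-1]}` (nonnegative,
strictly increasing, with `f_m < k*m`) equals the generalised Fuss–Catalan
number `C_n^{(k)} = binom(kn, n) / ((k-1)n + 1)`; moreover `(k-1)n + 1`
divides `binom(kn, n)`. -/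
theorem stmt5 (n k : ℕ) (hn : 1 ≤ n) (hk : 1 ≤ k) :
    Nat.card {f : Fin (n - 1) → Fin (k * (n - 1)) // IsFlagSeq n k f} =
      (k * n).choose n / ((k - 1) * n + 1) ∧
    ((k - 1) * n + 1) ∣ (k * n).choose n := by
  classical
  obtain ⟨m, rfl⟩ : ∃ m, n = m + 1 := ⟨n - 1, by omega⟩
  obtain ⟨k', rfl⟩ : ∃ k', k = k' + 1 := ⟨k - 1, by omega⟩
  set k := k' + 1 with hkdef
  set L := k * (m + 1) + 1 with hLdef
  set F := #((((range L).powersetCard (m + 1))).filter (FussAux.goodS k L)) with hF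
  have hkey : Nat.choose L (m + 1) = L * F := FussAux.double_count k (m + 1) L rfl
  have hbridge : Nat.card {f : Fin m → Fin (k * m) // IsFlagSeq (m + 1) k f} = F :=
    FussAux.bridge k m (by omega)
  have hD : k * (m + 1) + 1 - (m + 1) = (k - 1) * (m + 1) + 1 := by
    have h1 : k * (m + 1) = k' * (m + 1) + (m + 1) := by rw [hkdef]; ring
    have h2 : (k - 1) * (m + 1) = k' * (m + 1) := by
      have h : k - 1 = k' := by omega
      rw [h]
    omega
  set D := (k - 1) * (m + 1) + 1 with hDdef
  have hid := Nat.choose_mul_succ_eq (k * (m + 1)) (m + 1)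
  rw [hD, hkey] at hid
  -- hid : C * L = L * F * D
  have hL0 : 0 < L := by positivity
  have hC : (k * (m + 1)).choose (m + 1) = F * D := by
    apply Nat.eq_of_mul_eq_mul_left hL0
    calc L * ((k * (m + 1)).choose (m + 1)) = (k * (m + 1)).choose (m + 1) * L := by ring
      _ = L * F * D := hid
      _ = L * (F * D) := by ring
  have hD0 : 0 < D := by positivity
  refine ⟨?_, ⟨F, by rw [hC]; ring⟩⟩
  have hb2 : Nat.card {f : Fin (m + 1 - 1) → Fin (k * (m + 1 - 1)) // IsFlagSeq (m + 1) k f}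
      = F := hbridge
  rw [hb2]
  symm
  exact Nat.div_eq_of_eq_mul_left hD0 hC
end

section
/- For all integers n ≥ 1 and k ≥ 1, there is a bijection between the set of k-ary trees with n internal nodes and the set of flag sequences (f_j)_{j∈[1,n−1]} for n and k. Explicitly, encoding a k-ary tree with n internal nodes by the bitmap of length kn obtained from a breadth-first left-to-right traversal (omitting the root, writing 1 for each internal node and 0 for each external node), the map sending the tree to the sequence of positions of the 1's in its bitmap is a bijection onto the set of flag sequences. -/
/-- A `k`-ary tree: either an external node (leaf) or an internal node with an
ordered sequence of `k` `k`-ary subtrees. -/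
inductive KTree (k : ℕ) where
  | leaf : KTree k
  | node : (Fin k → KTree k) → KTree k

/-- Number of internal nodes of a `k`-ary tree. -/
def internalCount {k : ℕ} : KTree k → ℕ
  | .leaf => 0
  | .node ts => 1 + ∑ i : Fin k, internalCount (ts i)

/-- Total number of nodes of a `k`-ary tree. -/
def totalCount {k : ℕ} : KTree k → ℕ
  | .leaf => 1
  | .node ts => 1 + ∑ i : Fin k, totalCount (ts i)

/-- Breadth-first left-to-right traversal of a queue of trees, recording `1`
(`true`) for each internal node and `0` (`false`) for each external node;
children are enqueued left-to-right.  The first argument is fuel. -/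
def bfsBitmapAux {k : ℕ} : ℕ → List (KTree k) → List Bool
  | 0, _ => []
  | _ + 1, [] => []
  | fuel + 1, .leaf :: rest => false :: bfsBitmapAux fuel rest
  | fuel + 1, .node ts :: rest =>
      true :: bfsBitmapAux fuel (rest ++ (List.finRange k).map ts)

/-- The bitmap of a `k`-ary tree: breadth-first left-to-right traversal
omitting the root, writing `1` for internal and `0` for external nodes. -/
def treeBitmap {k : ℕ} : KTree k → List Bool
  | .leaf => []
  | .node ts => bfsBitmapAux (∑ i : Fin k, totalCount (ts i)) ((List.finRange k).map ts)

/-- The (increasing) list of positions of the `1`s in a bitmap. -/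
def onesPositions (l : List Bool) : List ℕ :=
  (List.range l.length).filter (fun i => l.getD i false)

/-- A flag sequence for `n` and `k`, as an increasing list of naturals of
length `n - 1` whose `j`-th entry (`0`-based) is `< k*(j+1)`. -/
def IsFlagList (n k : ℕ) (f : List ℕ) : Prop :=
  f.length = n - 1 ∧ f.Chain' (· < ·) ∧ ∀ j < f.length, f.getD j 0 < k * (j + 1)


namespace Stmt6Aux

variable {k : ℕ}

def sumTC (q : List (KTree k)) : ℕ := (q.map totalCount).sum
def sumIC (q : List (KTree k)) : ℕ := (q.map internalCount).sum
def B (q : List (KTree k)) : List Bool := bfsBitmapAux (sumTC q) q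

lemma sumTC_children (ts : Fin k → KTree k) :
    sumTC ((List.finRange k).map ts) = ∑ i : Fin k, totalCount (ts i) := by
  simp [sumTC, List.map_map, ← List.ofFn_eq_map, List.sum_ofFn]

lemma sumIC_children (ts : Fin k → KTree k) :
    sumIC ((List.finRange k).map ts) = ∑ i : Fin k, internalCount (ts i) := by
  simp [sumIC, List.map_map, ← List.ofFn_eq_map, List.sum_ofFn]

lemma B_nil : B ([] : List (KTree k)) = [] := rfl

lemma B_leaf (rest : List (KTree k)) : B (.leaf :: rest) = false :: B rest := by
  have h : sumTC (KTree.leaf :: rest) = sumTC rest + 1 := by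
    simp [sumTC, totalCount]; omega
  rw [B, h, bfsBitmapAux]; rfl

lemma B_node (ts : Fin k → KTree k) (rest : List (KTree k)) :
    B (.node ts :: rest) = true :: B (rest ++ (List.finRange k).map ts) := by
  have h : sumTC (KTree.node ts :: rest)
      = sumTC (rest ++ (List.finRange k).map ts) + 1 := by
    simp [sumTC, totalCount, List.map_append, List.sum_append, List.map_map,
      ← List.ofFn_eq_map, List.sum_ofFn]
    omega
  rw [B, h, bfsBitmapAux]; rfl

lemma treeBitmap_node (ts : Fin k → KTree k) :
    treeBitmap (.node ts) = B ((List.finRange k).map ts) := by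
  rw [treeBitmap, B, sumTC_children]

end Stmt6Aux

namespace Stmt6Aux

variable {k : ℕ}

lemma tc_eq (t : KTree k) : totalCount t = k * internalCount t + 1 := by
  induction t with
  | leaf => simp [totalCount, internalCount]
  | node ts ih =>
    simp only [totalCount, internalCount]
    rw [Finset.sum_congr rfl (fun i _ => ih i), Finset.sum_add_distrib,
      ← Finset.mul_sum, Finset.sum_const, Finset.card_univ, Fintype.card_fin,
      smul_eq_mul, mul_one]
    ring

lemma sumTC_eq (q : List (KTree k)) : sumTC q = q.length + k * sumIC q := by
  induction q with
  | nil => simp [sumTC, sumIC]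
  | cons t q ih =>
    have h1 : sumTC (t :: q) = totalCount t + sumTC q := by simp [sumTC]
    have h2 : sumIC (t :: q) = internalCount t + sumIC q := by simp [sumIC]
    rw [h1, h2, ih, tc_eq t, Nat.mul_add]
    simp; omega

lemma B_spec : ∀ N (q : List (KTree k)), sumTC q = N →
    (B q).length = sumTC q ∧ (B q).count true = sumIC q ∧
    ∀ i < (B q).length, i < q.length + k * ((B q).take i).count true := by
  intro N
  induction N using Nat.strong_induction_on with
  | _ N ih =>
    intro q hq
    match q with
    | [] => simp [B_nil, sumTC, sumIC]
    | .leaf :: rest =>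
      have hs : sumTC (KTree.leaf :: rest) = sumTC rest + 1 := by
        simp [sumTC, totalCount]; omega
      have hlt : sumTC rest < N := by omega
      obtain ⟨h1, h2, h3⟩ := ih _ hlt rest rfl
      rw [B_leaf]
      refine ⟨by simp [hs, h1], ?_, ?_⟩
      · have : sumIC (KTree.leaf :: rest) = sumIC rest := by
          simp [sumIC, internalCount]
        simp [this, h2]
      · intro i hi
        match i with
        | 0 => simp
        | i + 1 =>
          have hi' : i < (B rest).length := by simpa using hi
          have := h3 i hi'
          simp only [List.take_succ_cons, List.count_cons, List.length_cons]
          simp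
          omega
    | .node ts :: rest =>
      have hs : sumTC (KTree.node ts :: rest)
          = sumTC (rest ++ (List.finRange k).map ts) + 1 := by
        simp [sumTC, totalCount, List.map_append, List.sum_append, List.map_map,
          ← List.ofFn_eq_map, List.sum_ofFn]
        omega
      have hlt : sumTC (rest ++ (List.finRange k).map ts) < N := by omega
      obtain ⟨h1, h2, h3⟩ := ih _ hlt _ rfl
      rw [B_node]
      have hic : sumIC (KTree.node ts :: rest)
          = sumIC (rest ++ (List.finRange k).map ts) + 1 := by
        simp [sumIC, internalCount, List.map_append, List.sum_append, List.map_map,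
          ← List.ofFn_eq_map, List.sum_ofFn]
        omega
      refine ⟨by simp [hs, h1], by simp [hic, h2], ?_⟩
      intro i hi
      match i with
      | 0 => simp
      | i + 1 =>
        have hi' : i < (B (rest ++ (List.finRange k).map ts)).length := by simpa using hi
        have := h3 i hi'
        have hlen : (rest ++ (List.finRange k).map ts).length = rest.length + k := by simp
        rw [hlen] at this
        simp only [List.take_succ_cons, List.count_cons, List.length_cons]
        simp [Nat.mul_succ, List.length_append] at this ⊢
        omega

lemma B_length (q : List (KTree k)) : (B q).length = sumTC q := (B_spec _ q rfl).1
lemma B_count (q : List (KTree k)) : (B q).count true = sumIC q := (B_spec _ q rfl).2.1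
lemma B_valid (q : List (KTree k)) :
    ∀ i < (B q).length, i < q.length + k * ((B q).take i).count true := (B_spec _ q rfl).2.2

end Stmt6Aux


namespace Stmt6Aux

variable {k : ℕ}

lemma map_getD_finRange (q : List (KTree k)) (hq : q.length = k) :
    (List.finRange k).map (fun i : Fin k => q.getD i .leaf) = q := by
  apply List.ext_getElem
  · simp [hq]
  · intro i h1 h2
    simp only [List.getElem_map, List.getElem_finRange]
    rw [List.getD_eq_getElem _ _ (by simpa [hq] using h2)]
    simp [Fin.cast]

lemma children_eq (ts1 ts2 : Fin k → KTree k)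
    (h : (List.finRange k).map ts1 = (List.finRange k).map ts2) : ts1 = ts2 := by
  apply List.ofFn_injective
  rwa [List.ofFn_eq_map, List.ofFn_eq_map]

lemma B_inj : ∀ N (q1 q2 : List (KTree k)), sumTC q1 = N →
    q1.length = q2.length → B q1 = B q2 → q1 = q2 := by
  intro N
  induction N using Nat.strong_induction_on with
  | _ N ih =>
    intro q1 q2 hN hlen hB
    match q1, q2 with
    | [], [] => rfl
    | [], _ :: _ => simp at hlen
    | _ :: _, [] => simp at hlen
    | .leaf :: r1, .leaf :: r2 =>
      rw [B_leaf, B_leaf] at hB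
      have hs : sumTC (KTree.leaf :: r1) = sumTC r1 + 1 := by
        simp [sumTC, totalCount]; omega
      have := ih (sumTC r1) (by omega) r1 r2 rfl (by simpa using hlen)
        (by simpa using hB)
      rw [this]
    | .leaf :: r1, .node ts2 :: r2 =>
      rw [B_leaf, B_node] at hB
      simp at hB
    | .node ts1 :: r1, .leaf :: r2 =>
      rw [B_leaf, B_node] at hB
      simp at hB
    | .node ts1 :: r1, .node ts2 :: r2 =>
      rw [B_node, B_node] at hB
      have hs : sumTC (KTree.node ts1 :: r1)
          = sumTC (r1 ++ (List.finRange k).map ts1) + 1 := by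
        simp [sumTC, totalCount, List.map_append, List.sum_append, List.map_map,
          ← List.ofFn_eq_map, List.sum_ofFn]
        omega
      have hr : r1.length = r2.length := by simpa using hlen
      have hq := ih (sumTC (r1 ++ (List.finRange k).map ts1)) (by omega)
        (r1 ++ (List.finRange k).map ts1) (r2 ++ (List.finRange k).map ts2) rfl
        (by simp [hr]) (by simpa using hB)
      obtain ⟨h1, h2⟩ := List.append_inj hq hr
      rw [h1, children_eq ts1 ts2 h2]

lemma B_surj : ∀ (l : List Bool) (m : ℕ), l.length = m + k * l.count true →
    (∀ i < l.length, i < m + k * ((l.take i).count true)) →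
    ∃ q : List (KTree k), q.length = m ∧ B q = l := by
  intro l
  induction l with
  | nil =>
    intro m h1 _
    refine ⟨[], ?_, B_nil⟩
    simp at h1 ⊢
    omega
  | cons b l ih =>
    intro m h1 h2
    have hm : 1 ≤ m := by
      have := h2 0 (by simp)
      simp at this; omega
    cases b with
    | false =>
      have h1' : l.length = (m - 1) + k * l.count true := by
        simp [List.count_cons] at h1
        omega
      have h2' : ∀ i < l.length, i < (m - 1) + k * ((l.take i).count true) := by
        intro i hi
        have := h2 (i + 1) (by simpa using hi)
        simp [List.count_cons] at this
        omega
      obtain ⟨q, hq1, hq2⟩ := ih (m - 1) h1' h2'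
      refine ⟨.leaf :: q, by simp [hq1]; omega, ?_⟩
      rw [B_leaf, hq2]
    | true =>
      have h1' : l.length = (m - 1 + k) + k * l.count true := by
        simp [List.count_cons, Nat.mul_succ] at h1
        omega
      have h2' : ∀ i < l.length, i < (m - 1 + k) + k * ((l.take i).count true) := by
        intro i hi
        have := h2 (i + 1) (by simpa using hi)
        simp [List.count_cons, Nat.mul_succ] at this
        omega
      obtain ⟨q, hq1, hq2⟩ := ih (m - 1 + k) h1' h2'
      set rest := q.take (m - 1) with hrest
      set ch := q.drop (m - 1) with hch
      have hchlen : ch.length = k := by simp only [hch, List.length_drop, hq1]; omega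
      set ts : Fin k → KTree k := fun i => ch.getD i .leaf with hts
      have hmap : (List.finRange k).map ts = ch := map_getD_finRange ch hchlen
      refine ⟨.node ts :: rest, by simp [hrest]; omega, ?_⟩
      rw [B_node, hmap]
      have : rest ++ ch = q := by simp [hrest, hch]
      rw [this, hq2]

end Stmt6Aux


namespace Stmt6Aux

lemma ones_cons (b : Bool) (l : List Bool) :
    onesPositions (b :: l) =
      (if b then [0] else []) ++ (onesPositions l).map (· + 1) := by
  unfold onesPositions
  rw [List.length_cons, List.range_succ_eq_map, List.filter_cons]
  have hmap : (List.map Nat.succ (List.range l.length)).filter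
      (fun i => (b :: l).getD i false)
      = ((List.range l.length).filter (fun i => l.getD i false)).map (· + 1) := by
    rw [List.filter_map]
    have hpred : ((fun i => (b :: l).getD i false) ∘ Nat.succ)
        = fun i => l.getD i false := by
      funext i
      simp [Function.comp, List.getD_cons_succ]
    rw [hpred]
  rw [hmap]
  cases b with
  | false => simp [List.getD_cons_zero]
  | true => simp [List.getD_cons_zero]

lemma length_ones (l : List Bool) : (onesPositions l).length = l.count true := by
  induction l with
  | nil => rfl
  | cons b l ih =>
    rw [ones_cons]
    cases b <;> simp [List.count_cons, ih] <;> omega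

lemma pairwise_ones (l : List Bool) : (onesPositions l).Pairwise (· < ·) :=
  (List.pairwise_lt_range).filter _

lemma ones_inj : ∀ (l1 l2 : List Bool), l1.length = l2.length →
    onesPositions l1 = onesPositions l2 → l1 = l2 := by
  intro l1
  induction l1 with
  | nil =>
    intro l2 h _
    exact (List.length_eq_zero_iff.mp h.symm).symm
  | cons b1 l1 ih =>
    intro l2 h hones
    match l2 with
    | [] => simp at h
    | b2 :: l2 =>
      rw [ones_cons, ones_cons] at hones
      match b1, b2 with
      | true, true =>
        simp only [if_pos, List.singleton_append, List.cons.injEq, true_and] at hones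
        have := ih l2 (by simpa using h)
          (List.map_injective_iff.mpr (fun a b hab => by omega) hones)
        rw [this]
      | false, false =>
        simp only [if_neg, Bool.false_eq_true, not_false_iff, List.nil_append] at hones
        have := ih l2 (by simpa using h)
          (List.map_injective_iff.mpr (fun a b hab => by omega) hones)
        rw [this]
      | true, false =>
        exfalso
        have h0 : (0 : ℕ) ∈ (if (false : Bool) then [0] else [])
            ++ (onesPositions l2).map (· + 1) := by
          rw [← hones]; simp
        simp at h0
      | false, true =>
        exfalso
        have h0 : (0 : ℕ) ∈ (if (false : Bool) then [0] else [])
            ++ (onesPositions l1).map (· + 1) := by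
          rw [hones]; simp
        simp at h0

lemma ones_getD_lt (k : ℕ) : ∀ (l : List Bool) (m : ℕ),
    (∀ i < l.length, i < m + k * ((l.take i).count true)) →
    ∀ j < (onesPositions l).length, (onesPositions l).getD j 0 < m + k * j := by
  intro l
  induction l with
  | nil => intro m _ j hj; simp [onesPositions] at hj
  | cons b l ih =>
    intro m hV j hj
    have hm : 1 ≤ m := by
      have := hV 0 (by simp)
      simp at this; omega
    rw [ones_cons] at hj ⊢
    cases b with
    | true =>
      have hV' : ∀ i < l.length, i < (m + k - 1) + k * ((l.take i).count true) := by
        intro i hi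
        have := hV (i + 1) (by simpa using hi)
        simp [List.count_cons, Nat.mul_succ] at this
        omega
      match j with
      | 0 => simpa using (show 0 < m by omega)
      | j + 1 =>
        have hj' : j < (onesPositions l).length := by simpa using hj
        have h1 := ih (m + k - 1) hV' j hj'
        have h2 : ((if true then [0] else []) ++ (onesPositions l).map (· + 1)).getD (j + 1) 0
            = (onesPositions l).getD j 0 + 1 := by
          simp only [if_pos, List.singleton_append, List.getD_cons_succ]
          rw [List.getD_eq_getElem _ _ (by simpa using hj'),
            List.getD_eq_getElem _ _ hj', List.getElem_map]
        rw [h2, Nat.mul_succ]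
        omega
    | false =>
      have hV' : ∀ i < l.length, i < (m - 1) + k * ((l.take i).count true) := by
        intro i hi
        have := hV (i + 1) (by simpa using hi)
        simp [List.count_cons] at this
        omega
      have hj' : j < (onesPositions l).length := by simpa using hj
      have h1 := ih (m - 1) hV' j hj'
      have h2 : ((if false then [0] else []) ++ (onesPositions l).map (· + 1)).getD j 0
          = (onesPositions l).getD j 0 + 1 := by
        simp only [if_neg, Bool.false_eq_true, not_false_iff, List.nil_append]
        rw [List.getD_eq_getElem _ _ (by simpa using hj'),
          List.getD_eq_getElem _ _ hj', List.getElem_map]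
      rw [h2]
      omega

lemma valid_of_ones (k : ℕ) : ∀ (l : List Bool) (m : ℕ),
    l.length ≤ m + k * l.count true →
    (∀ j < (onesPositions l).length, (onesPositions l).getD j 0 < m + k * j) →
    ∀ i < l.length, i < m + k * ((l.take i).count true) := by
  intro l
  induction l with
  | nil => intro m _ _ i hi; simp at hi
  | cons b l ih =>
    intro m hlen hF i hi
    have hm : 1 ≤ m := by
      by_contra hm'
      have hm0 : m = 0 := by omega
      cases b with
      | true =>
        have hcc : (true :: l).count true = l.count true + 1 := by
          simp [List.count_cons]
        have h0 : 0 < (onesPositions (true :: l)).length := by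
          rw [length_ones, hcc]; omega
        have := hF 0 h0
        rw [ones_cons] at this
        simp [hm0] at this
      | false =>
        have hlen2 : l.length + 1 ≤ m + k * l.count true := by
          simpa [List.count_cons] using hlen
        have hcount : 1 ≤ l.count true := by
          by_contra hc
          have hc0 : l.count true = 0 := by omega
          rw [hc0, hm0] at hlen2
          omega
        have hcc : (false :: l).count true = l.count true := by
          simp [List.count_cons]
        have h0 : 0 < (onesPositions (false :: l)).length := by
          rw [length_ones, hcc]; omega
        have := hF 0 h0
        rw [ones_cons] at this
        have h2 : ((if false then [0] else []) ++ (onesPositions l).map (· + 1)).getD 0 0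
            = (onesPositions l).getD 0 0 + 1 := by
          have hl0 : 0 < (onesPositions l).length := by rw [length_ones]; omega
          simp only [if_neg, Bool.false_eq_true, not_false_iff, List.nil_append]
          rw [List.getD_eq_getElem _ _ (by simpa using hl0),
            List.getD_eq_getElem _ _ hl0, List.getElem_map]
        rw [h2, hm0] at this
        omega
    match i with
    | 0 => simpa using by omega
    | i + 1 =>
      have hi' : i < l.length := by simpa using hi
      cases b with
      | true =>
        have hlen' : l.length ≤ (m - 1 + k) + k * l.count true := by
          simp [List.count_cons, Nat.mul_succ] at hlen
          omega
        have hF' : ∀ j < (onesPositions l).length,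
            (onesPositions l).getD j 0 < (m - 1 + k) + k * j := by
          intro j hj
          have := hF (j + 1) (by rw [ones_cons]; simpa using hj)
          rw [ones_cons] at this
          have h2 : ((if true then [0] else []) ++ (onesPositions l).map (· + 1)).getD (j + 1) 0
              = (onesPositions l).getD j 0 + 1 := by
            simp only [if_pos, List.singleton_append, List.getD_cons_succ]
            rw [List.getD_eq_getElem _ _ (by simpa using hj),
              List.getD_eq_getElem _ _ hj, List.getElem_map]
          rw [h2, Nat.mul_succ] at this
          omega
        have := ih (m - 1 + k) hlen' hF' i hi'
        simp only [List.take_succ_cons, List.count_cons, List.length_cons]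
        simp [Nat.mul_succ]
        omega
      | false =>
        have hlen' : l.length ≤ (m - 1) + k * l.count true := by
          simp [List.count_cons] at hlen
          omega
        have hF' : ∀ j < (onesPositions l).length,
            (onesPositions l).getD j 0 < (m - 1) + k * j := by
          intro j hj
          have := hF j (by rw [ones_cons]; simpa using hj)
          rw [ones_cons] at this
          have h2 : ((if false then [0] else []) ++ (onesPositions l).map (· + 1)).getD j 0
              = (onesPositions l).getD j 0 + 1 := by
            simp only [if_neg, Bool.false_eq_true, not_false_iff, List.nil_append]
            rw [List.getD_eq_getElem _ _ (by simpa using hj),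
              List.getD_eq_getElem _ _ hj, List.getElem_map]
          rw [h2] at this
          omega
        have := ih (m - 1) hlen' hF' i hi'
        simp only [List.take_succ_cons, List.count_cons, List.length_cons]
        simp
        omega

end Stmt6Aux


namespace Stmt6Aux

def mkList (len : ℕ) (f : List ℕ) : List Bool :=
  (List.range len).map (fun i => decide (i ∈ f))

lemma length_mkList (len : ℕ) (f : List ℕ) : (mkList len f).length = len := by
  simp [mkList]

lemma ones_mkList (len : ℕ) (f : List ℕ) (hp : f.Pairwise (· < ·))
    (hb : ∀ x ∈ f, x < len) : onesPositions (mkList len f) = f := by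
  have h1 : onesPositions (mkList len f)
      = (List.range len).filter (fun i => decide (i ∈ f)) := by
    unfold onesPositions
    rw [length_mkList]
    apply List.filter_congr
    intro i hi
    rw [List.mem_range] at hi
    rw [List.getD_eq_getElem _ _ (by simpa [length_mkList] using hi)]
    simp [mkList]
  rw [h1]
  have hnd1 : ((List.range len).filter (fun i => decide (i ∈ f))).Nodup :=
    (List.nodup_range (n := len)).filter _
  have hnd2 : f.Nodup := hp.imp (fun h => ne_of_lt h)
  have hperm : List.Perm ((List.range len).filter (fun i => decide (i ∈ f))) f := by
    rw [List.perm_ext_iff_of_nodup hnd1 hnd2]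
    intro a
    simp only [List.mem_filter, List.mem_range, decide_eq_true_eq]
    exact ⟨fun h => h.2, fun h => ⟨hb a h, h⟩⟩
  have hs1 : ((List.range len).filter (fun i => decide (i ∈ f))).Pairwise (· ≤ ·) :=
    ((List.pairwise_lt_range (n := len)).filter _).imp le_of_lt
  have hs2 : f.Pairwise (· ≤ ·) := hp.imp le_of_lt
  exact List.Perm.eq_of_pairwise' hs1 hs2 hperm

end Stmt6Aux


open Stmt6Aux

/-- The map sending a `k`-ary tree with `n` internal nodes to the sequence of
positions of the `1`s in its bitmap is a bijection from the set of `k`-ary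
trees with `n` internal nodes onto the set of flag sequences for `n` and `k`. -/
theorem stmt6 (n k : ℕ) (hn : 1 ≤ n) (hk : 1 ≤ k) :
    Set.BijOn (fun t => onesPositions (treeBitmap t))
      {t : KTree k | internalCount t = n} {f : List ℕ | IsFlagList n k f} := by
  have hmul : k * n = k + k * (n - 1) := by
    cases n with
    | zero => omega
    | succ n => rw [Nat.succ_sub_one, Nat.mul_succ]; omega
  refine ⟨?_, ?_, ?_⟩
  · -- MapsTo
    intro t ht
    simp only [Set.mem_setOf_eq] at ht ⊢
    cases t with
    | leaf => simp [internalCount] at ht; omega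
    | node ts =>
      set ch := (List.finRange k).map ts with hch
      have hic : sumIC ch = n - 1 := by
        rw [hch, sumIC_children]
        rw [internalCount] at ht
        omega
      have hchlen : ch.length = k := by simp [hch]
      have hcount : (B ch).count true = n - 1 := by rw [B_count, hic]
      rw [treeBitmap_node, ← hch]
      refine ⟨?_, ?_, ?_⟩
      · rw [length_ones, hcount]
      · exact List.isChain_iff_pairwise.mpr (pairwise_ones _)
      · intro j hj
        have hv : ∀ i < (B ch).length, i < k + k * (((B ch).take i).count true) := by
          intro i hi
          have := B_valid ch i hi
          rwa [hchlen] at this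
        have := ones_getD_lt k (B ch) k hv j hj
        rw [Nat.mul_succ]
        omega
  · -- InjOn
    intro t1 h1 t2 h2 heq
    simp only [Set.mem_setOf_eq] at h1 h2
    cases t1 with
    | leaf => simp [internalCount] at h1; omega
    | node ts1 =>
      cases t2 with
      | leaf => simp [internalCount] at h2; omega
      | node ts2 =>
        set ch1 := (List.finRange k).map ts1 with hc1
        set ch2 := (List.finRange k).map ts2 with hc2
        have hlen : ∀ (ts : Fin k → KTree k),
            internalCount (KTree.node ts) = n →
            (B ((List.finRange k).map ts)).length = k * n := by
          intro ts hts
          rw [internalCount] at hts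
          have hsum : ∑ i : Fin k, internalCount (ts i) = n - 1 := by omega
          rw [B_length, sumTC_eq, sumIC_children, hsum]
          have : (List.map ts (List.finRange k)).length = k := by simp
          rw [this, hmul]
        simp only [treeBitmap_node] at heq
        have hBeq : B ch1 = B ch2 :=
          ones_inj _ _ (by rw [hc1, hc2, hlen ts1 h1, hlen ts2 h2]) heq
        have hcheq : ch1 = ch2 := by
          refine B_inj (sumTC ch1) ch1 ch2 rfl ?_ hBeq
          rw [hc1, hc2]; simp
        rw [children_eq ts1 ts2 (by rw [← hc1, ← hc2]; exact hcheq)]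
  · -- SurjOn
    intro f hf
    simp only [Set.mem_setOf_eq] at hf
    obtain ⟨hflen, hchain, hgetD⟩ := hf
    have hp : f.Pairwise (· < ·) := List.isChain_iff_pairwise.mp hchain
    have hb : ∀ x ∈ f, x < k * n := by
      intro x hx
      obtain ⟨j, hj, hjx⟩ := List.getElem_of_mem hx
      have h1 : f.getD j 0 = x := by rw [List.getD_eq_getElem _ _ hj, hjx]
      have h2 := hgetD j hj
      have h3 : k * (j + 1) ≤ k * n := Nat.mul_le_mul_left k (by omega)
      omega
    set l := mkList (k * n) f with hl
    have hones : onesPositions l = f := ones_mkList _ _ hp hb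
    have hcount : l.count true = n - 1 := by
      rw [← length_ones, hones, hflen]
    have hlenl : l.length = k + k * l.count true := by
      rw [hl, length_mkList, hcount, hmul]
    have hvalid : ∀ i < l.length, i < k + k * ((l.take i).count true) := by
      refine valid_of_ones k l k (le_of_eq hlenl) ?_
      rw [hones]
      intro j hj
      have := hgetD j hj
      rw [Nat.mul_succ] at this
      omega
    obtain ⟨q, hqlen, hqB⟩ := B_surj l k hlenl hvalid
    set ts : Fin k → KTree k := fun i => q.getD i .leaf with hts
    have hmap : (List.finRange k).map ts = q := map_getD_finRange q hqlen
    refine ⟨KTree.node ts, ?_, ?_⟩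
    · simp only [Set.mem_setOf_eq, internalCount]
      rw [← sumIC_children ts, hmap, ← B_count, hqB, hcount]
      omega
    · simp only
      rw [treeBitmap_node, hmap, hqB, hones]
end

section
/- Fix integers n ≥ 2 and k ≥ 1 and a flag sequence (f_j)_{j∈[1,n−1]} for n and k. The number of strings (s_i)_{i∈[0,kn−1]} with s_i ∈ [0,n−1] satisfying rules (R1) and (R2) whose sequence of first-occurrence indices of the values 1,…,n−1 is exactly (f_j)_{j∈[1,n−1]} equals ∏_{i=2}^{n} i^{f_i−f_{i−1}−1}, where f_n = kn. Equivalently, such strings are exactly those with s_i = 0 for i < f_1, s_{f_j} = j for j ∈ [1,n−1], s_i ∈ [0,j] for f_j < i < f_{j+1} (j ∈ [1,n−2]), and s_i ∈ [0,n−1] for i > f_{n−1}. -/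
/-- `f` is the sequence of first-occurrence indices of the values `1, …, n-1`
in the string `s`:  for each `j ∈ [1, n-1]`, `f j < k*n`, `s (f j) = j`, and
no earlier position carries the value `j`. -/
def HasFlags (n k : ℕ) (s : Fin (k * n) → Fin n) (f : ℕ → ℕ) : Prop :=
  ∀ j : ℕ, 1 ≤ j → j ≤ n - 1 → ∃ hj : f j < k * n,
    (s ⟨f j, hj⟩ : ℕ) = j ∧ ∀ i : Fin (k * n), (i : ℕ) < f j → (s i : ℕ) ≠ j

/-- The pointwise constraint at position `i` for value `v`. -/
def Qaux (n : ℕ) (f : ℕ → ℕ) (i : ℕ) (v : Fin n) : Prop :=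
  (i < f 1 → (v : ℕ) = 0) ∧
  (∀ j : ℕ, 1 ≤ j → j ≤ n - 1 → i = f j → (v : ℕ) = j) ∧
  (∀ j : ℕ, 1 ≤ j → j ≤ n - 2 → f j < i → i < f (j + 1) → (v : ℕ) ≤ j)

lemma card_val_eq {n : ℕ} (c : ℕ) (hc : c < n) :
    Nat.card {v : Fin n // (v : ℕ) = c} = 1 := by
  rw [Nat.card_eq_one_iff_unique]
  exact ⟨⟨fun a b => Subtype.ext (Fin.ext (a.2.trans b.2.symm))⟩, ⟨⟨c, hc⟩, rfl⟩⟩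

lemma card_val_le {n : ℕ} (t : ℕ) (ht : t < n) :
    Nat.card {v : Fin n // (v : ℕ) ≤ t} = t + 1 := by
  have e : {v : Fin n // (v : ℕ) ≤ t} ≃ Fin (t + 1) :=
    { toFun := fun v => ⟨v.1, Nat.lt_succ_of_le v.2⟩
      invFun := fun w => ⟨⟨w.1, lt_of_le_of_lt (Nat.le_of_lt_succ w.2) ht⟩,
        Nat.le_of_lt_succ w.2⟩
      left_inv := fun v => rfl
      right_inv := fun w => rfl }
  rw [Nat.card_congr e, Nat.card_eq_fintype_card, Fintype.card_fin]

/-- Fix `n ≥ 2`, `k ≥ 1` and a flag sequence `(f_j)_{j∈[1,n-1]}` (strictly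
increasing, with `f_m < k*m`), extended by `f n = k*n`.  The number of strings
satisfying (R1) and (R2) whose first-occurrence indices of `1, …, n-1` are
exactly the `f_j` equals `∏_{i=2}^{n} i^(f_i - f_{i-1} - 1)`; equivalently,
such strings are exactly those with `s_i = 0` for `i < f_1`, `s_{f_j} = j` for
`j ∈ [1, n-1]`, `s_i ∈ [0, j]` for `f_j < i < f_{j+1}` with `j ∈ [1, n-2]`
(and `s_i ∈ [0, n-1]` for `i > f_{n-1}`, which is automatic). -/
theorem stmt7 (n k : ℕ) (hn : 2 ≤ n) (hk : 1 ≤ k)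
    (f : ℕ → ℕ)
    (hmono : ∀ j : ℕ, 2 ≤ j → j ≤ n - 1 → f (j - 1) < f j)
    (hbound : ∀ m : ℕ, 1 ≤ m → m ≤ n - 1 → f m < k * m)
    (hfn : f n = k * n) :
    Nat.card {s : Fin (k * n) → Fin n //
        RuleR1 n k s ∧ RuleR2 n k s ∧ HasFlags n k s f} =
      ∏ i ∈ Finset.Icc 2 n, i ^ (f i - f (i - 1) - 1) ∧
    ∀ s : Fin (k * n) → Fin n,
      (RuleR1 n k s ∧ RuleR2 n k s ∧ HasFlags n k s f) ↔
      ∀ i : Fin (k * n),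
        ((i : ℕ) < f 1 → (s i : ℕ) = 0) ∧
        (∀ j : ℕ, 1 ≤ j → j ≤ n - 1 → (i : ℕ) = f j → (s i : ℕ) = j) ∧
        (∀ j : ℕ, 1 ≤ j → j ≤ n - 2 → f j < (i : ℕ) → (i : ℕ) < f (j + 1) →
          (s i : ℕ) ≤ j) := by
  -- strict monotonicity of `f` on `[1, n]`
  have hstep : ∀ b : ℕ, 2 ≤ b → b ≤ n → f (b - 1) < f b := by
    intro b hb2 hbn
    rcases Nat.lt_or_ge b n with hb | hb
    · exact hmono b hb2 (by omega)
    · have hbn' : b = n := le_antisymm hbn hb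
      subst hbn'
      have h1 : f (b - 1) < k * (b - 1) := hbound (b - 1) (by omega) (by omega)
      have : k * (b - 1) ≤ k * b := Nat.mul_le_mul_left k (by omega)
      omega
  have hlt0 : ∀ d a : ℕ, 1 ≤ a → a + d + 1 ≤ n → f a < f (a + d + 1) := by
    intro d
    induction d with
    | zero =>
      intro a ha h
      have := hstep (a + 1) (by omega) (by omega)
      simpa using this
    | succ c ih =>
      intro a ha h
      have h1 := ih a ha (by omega)
      have h2 := hstep (a + c + 2) (by omega) (by omega)
      have he : a + c + 2 - 1 = a + c + 1 := by omega
      rw [he] at h2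
      have : a + (c + 1) + 1 = a + c + 2 := by omega
      rw [this]
      omega
  have hlt : ∀ a b : ℕ, 1 ≤ a → a < b → b ≤ n → f a < f b := by
    intro a b ha hab hbn
    have := hlt0 (b - a - 1) a ha (by omega)
    have he : a + (b - a - 1) + 1 = b := by omega
    rwa [he] at this
  have hle : ∀ a b : ℕ, 1 ≤ a → a ≤ b → b ≤ n → f a ≤ f b := by
    intro a b ha hab hbn
    rcases Nat.eq_or_lt_of_le hab with rfl | h
    · exact le_rfl
    · exact le_of_lt (hlt a b ha h hbn)
  have hfkn : ∀ j : ℕ, 1 ≤ j → j ≤ n - 1 → f j < k * n := by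
    intro j h1 h2
    have := hbound j h1 h2
    have : k * j ≤ k * n := Nat.mul_le_mul_left k (by omega)
    omega
  -- zone decomposition
  have hzone : ∀ i : ℕ, i < k * n → i < f 1 ∨
      ∃ t : ℕ, 1 ≤ t ∧ t ≤ n - 1 ∧ f t ≤ i ∧ i < f (t + 1) := by
    intro i hi
    rcases Nat.lt_or_ge i (f 1) with h | h
    · exact Or.inl h
    · right
      classical
      set P : ℕ → Prop := fun t => f t ≤ i with hP
      set t := Nat.findGreatest P (n - 1) with hT
      have ht1 : P t := Nat.findGreatest_spec (P := P) (by omega : 1 ≤ n - 1) h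
      have htle : t ≤ n - 1 := Nat.findGreatest_le (n - 1)
      have ht0 : 1 ≤ t := by
        by_contra h0
        have : t < 1 := by omega
        exact (Nat.findGreatest_is_greatest (P := P) this (by omega)) h
      refine ⟨t, ht0, htle, ht1, ?_⟩
      rcases Nat.lt_or_ge (t + 1) n with hlt' | hge
      · -- t + 1 ≤ n - 1
        have := Nat.findGreatest_is_greatest (P := P) (by omega : Nat.findGreatest P (n-1) < t + 1)
          (by omega : t + 1 ≤ n - 1)
        omega
      · have : t + 1 = n := by omega
        rw [this, hfn]; exact hi
  -- the key pointwise predicate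
  set Q : ℕ → Fin n → Prop := fun i v => Qaux n f i v with hQdef
  -- the iff
  have hiff : ∀ s : Fin (k * n) → Fin n,
      (RuleR1 n k s ∧ RuleR2 n k s ∧ HasFlags n k s f) ↔
      ∀ i : Fin (k * n), Q (i : ℕ) (s i) := by
    intro s
    constructor
    · rintro ⟨h1, h2, h3⟩ i
      have key : ∀ i : Fin (k * n), ∀ m : ℕ, 1 ≤ m → m ≤ n - 1 →
          (s i : ℕ) = m → f m ≤ (i : ℕ) := by
        intro i m hm1 hm2 hsi
        obtain ⟨hj, hsf, hfirst⟩ := h3 m hm1 hm2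
        by_contra hc
        exact hfirst i (by omega) hsi
      refine ⟨?_, ?_, ?_⟩
      · intro hi
        by_contra hne
        have hm1 : 1 ≤ (s i : ℕ) := by omega
        have hm2 : (s i : ℕ) ≤ n - 1 := by have := (s i).isLt; omega
        have h4 := key i (s i : ℕ) hm1 hm2 rfl
        have h5 := hle 1 (s i : ℕ) le_rfl hm1 (by omega)
        omega
      · intro j hj1 hj2 hij
        obtain ⟨hj, hsf, hfirst⟩ := h3 j hj1 hj2
        have : i = ⟨f j, hj⟩ := Fin.ext hij
        rw [this]; exact hsf
      · intro j hj1 hj2 hlo hhi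
        by_contra hc
        have hm1 : 1 ≤ (s i : ℕ) := by omega
        have hm2 : (s i : ℕ) ≤ n - 1 := by have := (s i).isLt; omega
        have h4 := key i (s i : ℕ) hm1 hm2 rfl
        have h5 := hle (j + 1) (s i : ℕ) (by omega) (by omega) (by omega)
        omega
    · intro h
      have keyB : ∀ i : Fin (k * n), ∀ m : ℕ, 1 ≤ m → (s i : ℕ) = m →
          f m ≤ (i : ℕ) := by
        intro i m hm1 hsi
        have hm2 : m ≤ n - 1 := by have := (s i).isLt; omega
        rcases hzone (i : ℕ) i.isLt with hz | ⟨t, ht1, ht2, htle, htlt⟩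
        · have := (h i).1 hz; omega
        · rcases Nat.eq_or_lt_of_le htle with heq | hltz
          · have := (h i).2.1 t ht1 ht2 heq.symm
            have : m = t := by omega
            subst this; omega
          · rcases Nat.lt_or_ge t (n - 1) with hc | hc
            · have := (h i).2.2 t ht1 (by omega) hltz htlt
              have : f m ≤ f t := hle m t hm1 (by omega) (by omega)
              omega
            · have htn : t = n - 1 := by omega
              have : f m ≤ f t := hle m t hm1 (by omega) (by omega)
              omega
      have sfl : ∀ j : ℕ, 1 ≤ j → j ≤ n - 1 → ∀ hj : f j < k * n,
          (s ⟨f j, hj⟩ : ℕ) = j := by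
        intro j hj1 hj2 hj
        exact (h ⟨f j, hj⟩).2.1 j hj1 hj2 rfl
      refine ⟨?_, ?_, ?_⟩
      · intro m hm2 hm1 i hsi
        have hfm : f m ≤ (i : ℕ) := keyB i m (by omega) hsi
        have hmm : f (m - 1) < f m := by
          have := hstep m hm2 (by omega); exact this
        have hjlt : f (m - 1) < k * n := hfkn (m - 1) (by omega) (by omega)
        refine ⟨⟨f (m - 1), hjlt⟩, by simpa using (by omega : f (m-1) < (i:ℕ)), ?_⟩
        exact sfl (m - 1) (by omega) (by omega) hjlt
      · intro m hm1 hm2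
        have hjlt : f m < k * n := hfkn m hm1 hm2
        exact ⟨⟨f m, hjlt⟩, by simpa using hbound m hm1 hm2,
          sfl m hm1 hm2 hjlt⟩
      · intro j hj1 hj2
        have hjlt : f j < k * n := hfkn j hj1 hj2
        refine ⟨hjlt, sfl j hj1 hj2 hjlt, ?_⟩
        intro i hi hsi
        have := keyB i j hj1 hsi
        omega
  -- count function
  set g : ℕ → ℕ := fun i => Nat.card {v : Fin n // Q i v} with hg
  -- zone values of g
  have gz0 : ∀ i : ℕ, i < f 1 → g i = 1 := by
    intro i hi
    have hiffv : ∀ v : Fin n, Q i v ↔ (v : ℕ) = 0 := by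
      intro v
      constructor
      · intro hq; exact hq.1 hi
      · intro hv
        refine ⟨fun _ => hv, ?_, ?_⟩
        · intro j hj1 hj2 hij
          have : f 1 ≤ f j := hle 1 j le_rfl hj1 (by omega)
          omega
        · intro j hj1 hj2 hlo hhi
          have : f 1 ≤ f j := hle 1 j le_rfl hj1 (by omega)
          omega
    show Nat.card {v : Fin n // Q i v} = 1
    rw [Nat.card_congr (Equiv.subtypeEquivRight hiffv)]
    exact card_val_eq 0 (by omega)
  have gflag : ∀ t : ℕ, 1 ≤ t → t ≤ n - 1 → g (f t) = 1 := by
    intro t ht1 ht2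
    have hiffv : ∀ v : Fin n, Q (f t) v ↔ (v : ℕ) = t := by
      intro v
      constructor
      · intro hq; exact hq.2.1 t ht1 ht2 rfl
      · intro hv
        refine ⟨?_, ?_, ?_⟩
        · intro hcon
          have : f 1 ≤ f t := hle 1 t le_rfl ht1 (by omega)
          omega
        · intro j hj1 hj2 hij
          rcases lt_trichotomy t j with hc | hc | hc
          · have := hlt t j ht1 hc (by omega); omega
          · omega
          · have := hlt j t hj1 hc (by omega); omega
        · intro j hj1 hj2 hlo hhi
          exfalso
          rcases Nat.lt_or_ge j t with hc | hc
          · have := hle (j + 1) t (by omega) (by omega) (by omega); omega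
          · have := hle t j ht1 hc (by omega); omega
    show Nat.card {v : Fin n // Q (f t) v} = 1
    rw [Nat.card_congr (Equiv.subtypeEquivRight hiffv)]
    exact card_val_eq t (by omega)
  have gmid : ∀ t i : ℕ, 1 ≤ t → t ≤ n - 1 → f t < i → i < f (t + 1) →
      g i = t + 1 := by
    intro t i ht1 ht2 hlo hhi
    have hiffv : ∀ v : Fin n, Q i v ↔ (v : ℕ) ≤ t := by
      intro v
      constructor
      · intro hq
        rcases Nat.lt_or_ge t (n - 1) with hc | hc
        · exact hq.2.2 t ht1 (by omega) hlo hhi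
        · have := v.isLt; omega
      · intro hv
        refine ⟨?_, ?_, ?_⟩
        · intro hcon
          have : f 1 ≤ f t := hle 1 t le_rfl ht1 (by omega)
          omega
        · intro j hj1 hj2 hij
          exfalso
          rcases Nat.lt_or_ge j (t + 1) with hc | hc
          · have := hle j t hj1 (by omega) (by omega); omega
          · have := hle (t + 1) j (by omega) hc (by omega); omega
        · intro j hj1 hj2 hlo' hhi'
          have hjt : j = t := by
            rcases Nat.lt_or_ge j t with hc | hc
            · have := hle (j + 1) t (by omega) (by omega) (by omega); omega
            · rcases Nat.lt_or_ge t j with hc' | hc'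
              · have := hle (t + 1) j (by omega) hc' (by omega); omega
              · omega
          omega
    show Nat.card {v : Fin n // Q i v} = t + 1
    rw [Nat.card_congr (Equiv.subtypeEquivRight hiffv)]
    exact card_val_le t (by omega)
  -- the product over blocks
  have hP : ∀ t : ℕ, 1 ≤ t → t ≤ n →
      (∏ i ∈ Finset.range (f t), g i) = ∏ j ∈ Finset.Icc 2 t, j ^ (f j - f (j - 1) - 1) := by
    intro t
    induction t with
    | zero => omega
    | succ c ih =>
      intro h1 h2
      rcases Nat.eq_or_lt_of_le h1 with hbase | hstep'
      · -- c + 1 = 1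
        have hc0 : c = 0 := by omega
        subst hc0
        rw [show Finset.Icc 2 1 = ∅ from Finset.Icc_eq_empty (by omega), Finset.prod_empty]
        apply Finset.prod_eq_one
        intro i hi
        exact gz0 i (Finset.mem_range.mp hi)
      · -- c ≥ 1
        have hc1 : 1 ≤ c := by omega
        have hcn : c ≤ n := by omega
        have hflt : f c < f (c + 1) := hlt c (c + 1) hc1 (Nat.lt_succ_self c) h2
        rw [Finset.range_eq_Ico,
          ← Finset.prod_Ico_consecutive g (Nat.zero_le (f c)) (le_of_lt hflt),
          ← Finset.range_eq_Ico, ih hc1 hcn,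
          Finset.prod_eq_prod_Ico_succ_bot hflt g,
          gflag c hc1 (by omega)]
        have hconst : (∏ i ∈ Finset.Ico (f c + 1) (f (c + 1)), g i)
            = (c + 1) ^ (f (c + 1) - f c - 1) := by
          have h1 : ∀ i ∈ Finset.Ico (f c + 1) (f (c + 1)), g i = c + 1 := by
            intro i hi
            rw [Finset.mem_Ico] at hi
            exact gmid c i hc1 (by omega) (by omega) hi.2
          rw [Finset.prod_congr rfl h1, Finset.prod_const, Nat.card_Ico]
          congr 1
          try omega
        rw [hconst, Finset.prod_Icc_succ_top (by omega : 2 ≤ c + 1)]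
        simp [one_mul]
  -- assemble
  have hcard : Nat.card {s : Fin (k * n) → Fin n //
      RuleR1 n k s ∧ RuleR2 n k s ∧ HasFlags n k s f} =
      ∏ i ∈ Finset.Icc 2 n, i ^ (f i - f (i - 1) - 1) := by
    rw [Nat.card_congr (Equiv.subtypeEquivRight hiff)]
    rw [Nat.card_congr (Equiv.subtypePiEquivPi (p := fun (i : Fin (k * n)) v => Q (i : ℕ) v))]
    rw [Nat.card_pi]
    have : (∏ i : Fin (k * n), Nat.card {v : Fin n // Q (i : ℕ) v})
        = ∏ i ∈ Finset.range (k * n), g i := by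
      exact Fin.prod_univ_eq_prod_range g (k * n)
    rw [this, ← hfn]
    exact hP n (by omega) le_rfl
  exact ⟨hcard, hiff⟩
end

section
/- For all integers n ≥ 2 and k ≥ 1, the number of strings (s_i)_{i∈[0,kn−1]} with s_i ∈ [0,n−1] satisfying rules (R1) and (R2) is B_{k,n} = Σ_{f_1=0}^{k−1} Σ_{f_2=f_1+1}^{2k−1} Σ_{f_3=f_2+1}^{3k−1} ⋯ Σ_{f_{n−1}=f_{n−2}+1}^{k(n−1)−1} ∏_{i=2}^{n} i^{f_i−f_{i−1}−1}, where f_n = kn. -/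
/-- The extension of a flag sequence to indices `1, …, n`:  `flagExt f i = f_i`
for `i ∈ [1, n-1]` and `flagExt f n = k*n`. -/
def flagExt (n k : ℕ) (f : Fin (n - 1) → Fin (k * (n - 1))) (i : ℕ) : ℕ :=
  if h : i - 1 < n - 1 then (f ⟨i - 1, h⟩ : ℕ) else k * n

def Cfun (r : ℕ) (F : ℕ → ℕ) (i : ℕ) : ℕ :=
  if i ∈ (Finset.range r).image F then 1
  else 1 + ((Finset.range r).filter (fun m => F m < i)).card

lemma Cfun_key : ∀ (r L : ℕ) (F : ℕ → ℕ),
    (∀ a b, a < b → b < r → F a < F b) → (∀ a, a < r → F a < L) →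
    ∏ i ∈ Finset.range L, Cfun r F i
      = ∏ t ∈ Finset.Icc 1 r, (t + 1) ^ ((if t < r then F t else L) - F (t - 1) - 1) := by
  intro r
  induction r with
  | zero =>
    intro L F _ _
    simp [Cfun]
  | succ r ih =>
    intro L F hmono hL
    have hFr : ∀ a, a < r → F a < F r := fun a ha => hmono a r ha (Nat.lt_succ_self r)
    have hFrL : F r < L := hL r (Nat.lt_succ_self r)
    -- split the product
    have hsplit : ∏ i ∈ Finset.range L, Cfun (r+1) F i
        = (∏ i ∈ Finset.range (F r + 1), Cfun (r+1) F i)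
          * ∏ i ∈ Finset.Ico (F r + 1) L, Cfun (r+1) F i := by
      rw [Finset.range_eq_Ico, ← Finset.prod_Ico_consecutive _ (Nat.zero_le _) hFrL,
        ← Finset.range_eq_Ico]
    have h2 : Cfun (r+1) F (F r) = 1 := by
      have : F r ∈ (Finset.range (r+1)).image F :=
        Finset.mem_image.2 ⟨r, Finset.self_mem_range_succ r, rfl⟩
      simp [Cfun, this]
    have h1 : ∏ i ∈ Finset.range (F r), Cfun (r+1) F i
        = ∏ i ∈ Finset.range (F r), Cfun r F i := by
      refine Finset.prod_congr rfl fun i hi => ?_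
      have hilt : i < F r := Finset.mem_range.1 hi
      have himg : i ∈ (Finset.range (r+1)).image F ↔ i ∈ (Finset.range r).image F := by
        rw [Finset.range_add_one, Finset.image_insert, Finset.mem_insert]
        constructor
        · rintro (h | h)
          · omega
          · exact h
        · exact Or.inr
      have hfil : (Finset.range (r+1)).filter (fun m => F m < i)
          = (Finset.range r).filter (fun m => F m < i) := by
        rw [Finset.range_add_one, Finset.filter_insert, if_neg (by omega)]
      unfold Cfun
      rw [hfil]
      by_cases h : i ∈ (Finset.range r).image F
      · rw [if_pos (himg.2 h), if_pos h]
      · rw [if_neg (fun hh => h (himg.1 hh)), if_neg h]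
    have h3 : ∏ i ∈ Finset.Ico (F r + 1) L, Cfun (r+1) F i = (r + 2) ^ (L - F r - 1) := by
      have : ∀ i ∈ Finset.Ico (F r + 1) L, Cfun (r+1) F i = r + 2 := by
        intro i hi
        have hi' : F r < i := by
          have := Finset.mem_Ico.1 hi; omega
        have hFi : ∀ m, m < r + 1 → F m < i := by
          intro m hm
          rcases Nat.lt_or_ge m r with h | h
          · exact lt_trans (hFr m h) hi'
          · have : m = r := by omega
            subst this; exact hi'
        have himg : i ∉ (Finset.range (r+1)).image F := by
          intro h
          obtain ⟨m, hm, hFm⟩ := Finset.mem_image.1 h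
          have := hFi m (Finset.mem_range.1 hm); omega
        have hfil : (Finset.range (r+1)).filter (fun m => F m < i) = Finset.range (r+1) :=
          Finset.filter_true_of_mem fun m hm => hFi m (Finset.mem_range.1 hm)
        unfold Cfun
        rw [if_neg himg, hfil, Finset.card_range]
        omega
      rw [Finset.prod_congr rfl this, Finset.prod_const, Nat.card_Ico]
      congr 1
    rw [hsplit, Finset.prod_range_succ, h2, h1, h3, mul_one,
      ih (F r) F (fun a b hab hb => hmono a b hab (by omega)) hFr]
    rw [Finset.prod_Icc_succ_top (Nat.le_add_left 1 r)]
    congr 1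
    · refine Finset.prod_congr rfl fun t ht => ?_
      have ht' := Finset.mem_Icc.1 ht
      congr 1
      rcases Nat.lt_or_ge t r with h | h
      · rw [if_pos h, if_pos (by omega)]
      · have : t = r := by omega
        subst this
        rw [if_neg (by omega), if_pos (by omega)]
    · rw [if_neg (by omega)]
      norm_num

def Qp (n k : ℕ) (f : Fin (n - 1) → Fin (k * (n - 1))) (i : ℕ) (v : Fin n) : Prop :=
  (∀ m : Fin (n - 1), (f m : ℕ) = i → (v : ℕ) = (m : ℕ) + 1) ∧
  (∀ m : Fin (n - 1), (m : ℕ) + 1 = (v : ℕ) → (f m : ℕ) ≤ i)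

def FO (n k : ℕ) (f : Fin (n - 1) → Fin (k * (n - 1))) (s : Fin (k * n) → Fin n) : Prop :=
  ∀ i : Fin (k * n), Qp n k f (i : ℕ) (s i)

lemma card_Qp (n k : ℕ) (hn : 2 ≤ n) (f : Fin (n - 1) → Fin (k * (n - 1)))
    (hf : IsFlagSeq n k f) (i : ℕ) :
    Nat.card {v : Fin n // Qp n k f i v}
      = Cfun (n - 1) (fun m => flagExt n k f (m + 1)) i := by
  classical
  have hn0 : 0 < n := by omega
  set F : ℕ → ℕ := fun m => flagExt n k f (m + 1) with hFdef
  have hF : ∀ (m : ℕ) (h : m < n - 1), F m = (f ⟨m, h⟩ : ℕ) := by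
    intro m h
    simp only [hFdef, flagExt, Nat.add_sub_cancel, dif_pos h]
  have himgiff : i ∈ (Finset.range (n-1)).image F ↔ ∃ m : Fin (n-1), (f m : ℕ) = i := by
    constructor
    · rintro h
      obtain ⟨m, hm, hFm⟩ := Finset.mem_image.1 h
      have hm' := Finset.mem_range.1 hm
      exact ⟨⟨m, hm'⟩, by rw [← hF m hm']; exact hFm⟩
    · rintro ⟨m, hm⟩
      exact Finset.mem_image.2 ⟨(m : ℕ), Finset.mem_range.2 m.isLt,
        by rw [hF m m.isLt]; simpa using hm⟩
  by_cases hcase : ∃ m : Fin (n-1), (f m : ℕ) = i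
  · obtain ⟨m0, hm0⟩ := hcase
    have hlt : (m0 : ℕ) + 1 < n := by have := m0.isLt; omega
    haveI : Unique {v : Fin n // Qp n k f i v} := by
      refine ⟨⟨⟨⟨(m0 : ℕ) + 1, hlt⟩, ?_, ?_⟩⟩, ?_⟩
      · intro m hm
        have : f m = f m0 := Fin.ext (by rw [hm0]; exact_mod_cast hm)
        have := hf.1.injective this
        subst this
        rfl
      · intro m hm
        have hmm : m = m0 := Fin.ext (by simpa using hm)
        subst hmm
        omega
      · rintro ⟨v, hv1, hv2⟩
        have := hv1 m0 hm0
        exact Subtype.ext (Fin.ext this)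
    rw [Nat.card_unique, Cfun, if_pos (himgiff.2 ⟨m0, hm0⟩)]
  · rw [Cfun, if_neg (fun h => hcase (himgiff.1 h))]
    rw [Nat.card_eq_fintype_card, Fintype.card_subtype]
    have hemb : ∀ m : Fin (n-1), (m : ℕ) + 1 < n := fun m => by have := m.isLt; omega
    set e : Fin (n-1) → Fin n := fun m => ⟨(m : ℕ) + 1, hemb m⟩ with hedef
    have hins : Finset.univ.filter (fun v : Fin n => Qp n k f i v)
        = insert (⟨0, hn0⟩ : Fin n)
            ((Finset.univ.filter (fun m : Fin (n-1) => (f m : ℕ) < i)).image e) := by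
      ext v
      simp only [Finset.mem_filter, Finset.mem_univ, true_and, Finset.mem_insert,
        Finset.mem_image]
      constructor
      · rintro ⟨h1, h2⟩
        rcases Nat.eq_zero_or_pos (v : ℕ) with h0 | h0
        · left; exact Fin.ext h0
        · right
          have hv1 : (v : ℕ) - 1 < n - 1 := by have := v.isLt; omega
          refine ⟨⟨(v : ℕ) - 1, hv1⟩, ?_, ?_⟩
          · have hle := h2 ⟨(v : ℕ) - 1, hv1⟩ (by show (v:ℕ) - 1 + 1 = (v:ℕ); omega)
            have hne : (f ⟨(v : ℕ) - 1, hv1⟩ : ℕ) ≠ i := fun h => hcase ⟨_, h⟩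
            omega
          · exact Fin.ext (by show (v:ℕ) - 1 + 1 = (v:ℕ); omega)
      · rintro (h0 | ⟨m, hm, hme⟩)
        · subst h0
          constructor
          · intro m hm; exact absurd ⟨m, hm⟩ hcase
          · intro m hm
            have : (m : ℕ) + 1 = 0 := hm
            omega
        · subst hme
          constructor
          · intro m' hm'; exact absurd ⟨m', hm'⟩ hcase
          · intro m' hm'
            have hh : (m' : ℕ) + 1 = (m : ℕ) + 1 := hm'
            have : m' = m := Fin.ext (by omega)
            subst this
            omega
    have hnotmem : (⟨0, hn0⟩ : Fin n)
        ∉ (Finset.univ.filter (fun m : Fin (n-1) => (f m : ℕ) < i)).image e := by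
      intro h
      obtain ⟨m, _, hm⟩ := Finset.mem_image.1 h
      have : (m : ℕ) + 1 = 0 := congrArg Fin.val hm
      omega
    have hinj : Set.InjOn e (Finset.univ.filter (fun m : Fin (n-1) => (f m : ℕ) < i)) := by
      intro a _ b _ hab
      have : (a : ℕ) + 1 = (b : ℕ) + 1 := congrArg Fin.val hab
      exact Fin.ext (by omega)
    have hcard : (Finset.univ.filter (fun m : Fin (n-1) => (f m : ℕ) < i)).card
        = ((Finset.range (n-1)).filter (fun m => F m < i)).card := by
      rw [Finset.card_filter, Finset.card_filter,
        ← Fin.sum_univ_eq_sum_range (fun m => if F m < i then 1 else 0) (n-1)]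
      refine Finset.sum_congr rfl fun m _ => ?_
      rw [hF m m.isLt]
    rw [hins, Finset.card_insert_of_notMem hnotmem, Finset.card_image_of_injOn hinj, hcard]
    omega

lemma card_fiber (n k : ℕ) (hn : 2 ≤ n)
    (f : Fin (n - 1) → Fin (k * (n - 1))) (hf : IsFlagSeq n k f) :
    Nat.card {s : Fin (k * n) → Fin n // FO n k f s}
      = ∏ i ∈ Finset.Icc 2 n, i ^ (flagExt n k f i - flagExt n k f (i - 1) - 1) := by
  classical
  set F : ℕ → ℕ := fun m => flagExt n k f (m + 1) with hFdef
  have hF : ∀ (m : ℕ) (h : m < n - 1), F m = (f ⟨m, h⟩ : ℕ) := fun m h => by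
    simp only [hFdef, flagExt, Nat.add_sub_cancel, dif_pos h]
  have e1 : Nat.card {s : Fin (k * n) → Fin n // FO n k f s}
      = ∏ i : Fin (k * n), Nat.card {v : Fin n // Qp n k f (i : ℕ) v} :=
    (Nat.card_congr
      (Equiv.subtypePiEquivPi (p := fun (i : Fin (k*n)) (v : Fin n) => Qp n k f (i : ℕ) v))).trans
      Nat.card_pi
  have e2 : (∏ i : Fin (k * n), Nat.card {v : Fin n // Qp n k f (i : ℕ) v})
      = ∏ i : Fin (k * n), Cfun (n-1) F ((i : ℕ)) :=
    Finset.prod_congr rfl (fun i _ => card_Qp n k hn f hf (i : ℕ))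
  rw [e1, e2, Fin.prod_univ_eq_prod_range (fun i => Cfun (n-1) F i) (k*n)]
  have hmono : ∀ a b, a < b → b < n - 1 → F a < F b := by
    intro a b hab hb
    rw [hF a (by omega), hF b hb]
    exact hf.1 (show (⟨a, by omega⟩ : Fin (n-1)) < ⟨b, hb⟩ from hab)
  have hL : ∀ a, a < n - 1 → F a < k * n := by
    intro a ha
    rw [hF a ha]
    calc (f ⟨a, ha⟩ : ℕ) < k * (n - 1) := (f ⟨a, ha⟩).isLt
      _ ≤ k * n := Nat.mul_le_mul_left k (by omega)
  rw [Cfun_key (n-1) (k*n) F hmono hL]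
  have hIf : ∀ t, (if t < n - 1 then F t else k * n) = flagExt n k f (t + 1) := by
    intro t
    by_cases h : t < n - 1
    · rw [if_pos h]
    · rw [if_neg h]
      simp only [flagExt, Nat.add_sub_cancel, dif_neg h]
  refine Finset.prod_nbij' (fun t => t + 1) (fun i => i - 1) ?_ ?_ ?_ ?_ ?_
  · intro t ht
    simp only [Finset.mem_Icc] at ht ⊢
    omega
  · intro i hi
    simp only [Finset.mem_Icc] at hi ⊢
    omega
  · intro t ht
    simp only [Finset.mem_Icc] at ht
    omega
  · intro i hi
    simp only [Finset.mem_Icc] at hi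
    omega
  · intro t ht
    have ht' := Finset.mem_Icc.1 ht
    rw [hIf]
    have h2 : F (t - 1) = flagExt n k f t := by
      have h3 : t - 1 + 1 = t := by omega
      rw [hFdef]
      dsimp only
      rw [h3]
    rw [h2]
    have h4 : t + 1 - 1 = t := by omega
    rw [h4]

noncomputable def firstIdx (n k : ℕ) (s : Fin (k * n) → Fin n) (v : ℕ) : ℕ :=
  sInf {i : ℕ | ∃ h : i < k * n, (s ⟨i, h⟩ : ℕ) = v}

lemma firstIdx_le (n k : ℕ) (s : Fin (k * n) → Fin n) (v : ℕ) (i : Fin (k * n))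
    (hi : (s i : ℕ) = v) : firstIdx n k s v ≤ (i : ℕ) :=
  Nat.sInf_le ⟨i.isLt, hi⟩

lemma firstIdx_spec (n k : ℕ) (s : Fin (k * n) → Fin n) (h2 : RuleR2 n k s)
    (v : ℕ) (hv1 : 1 ≤ v) (hv2 : v ≤ n - 1) :
    firstIdx n k s v < k * v ∧
      ∃ h : firstIdx n k s v < k * n, (s ⟨firstIdx n k s v, h⟩ : ℕ) = v := by
  obtain ⟨j, hj, hsj⟩ := h2 v hv1 hv2
  have hne : {i : ℕ | ∃ h : i < k * n, (s ⟨i, h⟩ : ℕ) = v}.Nonempty :=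
    ⟨(j : ℕ), j.isLt, hsj⟩
  have hmem := Nat.sInf_mem hne
  have hle : firstIdx n k s v ≤ (j : ℕ) := Nat.sInf_le ⟨j.isLt, hsj⟩
  exact ⟨by omega, hmem⟩

lemma firstIdx_adj (n k : ℕ) (s : Fin (k * n) → Fin n)
    (h1 : RuleR1 n k s) (h2 : RuleR2 n k s)
    (v : ℕ) (hv1 : 2 ≤ v) (hv2 : v ≤ n - 1) :
    firstIdx n k s (v - 1) < firstIdx n k s v := by
  obtain ⟨-, h, hs⟩ := firstIdx_spec n k s h2 v (by omega) hv2
  obtain ⟨j, hj, hsj⟩ := h1 v hv1 hv2 ⟨firstIdx n k s v, h⟩ hs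
  have hj' : (j : ℕ) < firstIdx n k s v := hj
  have := firstIdx_le n k s (v - 1) j hsj
  omega

lemma firstIdx_mono (n k : ℕ) (s : Fin (k * n) → Fin n)
    (h1 : RuleR1 n k s) (h2 : RuleR2 n k s) :
    ∀ a b, 1 ≤ a → a < b → b ≤ n - 1 → firstIdx n k s a < firstIdx n k s b := by
  intro a b ha hab
  induction b, hab using Nat.le_induction with
  | base =>
    intro hb
    have := firstIdx_adj n k s h1 h2 (a + 1) (by omega) hb
    simpa using this
  | succ b hb ih =>
    intro hb1
    have h3 := firstIdx_adj n k s h1 h2 (b + 1) (by omega) hb1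
    have h4 := ih (by omega)
    simp only [Nat.add_sub_cancel] at h3
    omega

noncomputable def flagOf (n k : ℕ) (hn : 2 ≤ n) (s : Fin (k * n) → Fin n)
    (h2 : RuleR2 n k s) : Fin (n - 1) → Fin (k * (n - 1)) :=
  fun m => ⟨firstIdx n k s ((m : ℕ) + 1), by
    have hm := m.isLt
    have := (firstIdx_spec n k s h2 ((m : ℕ) + 1) (by omega) (by omega)).1
    have : k * ((m : ℕ) + 1) ≤ k * (n - 1) := Nat.mul_le_mul_left k (by omega)
    omega⟩

lemma flagOf_isFlagSeq (n k : ℕ) (hn : 2 ≤ n) (s : Fin (k * n) → Fin n)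
    (h1 : RuleR1 n k s) (h2 : RuleR2 n k s) :
    IsFlagSeq n k (flagOf n k hn s h2) := by
  constructor
  · intro a b hab
    have hb := b.isLt
    exact firstIdx_mono n k s h1 h2 ((a : ℕ) + 1) ((b : ℕ) + 1) (by omega)
      (by exact_mod_cast Nat.add_lt_add_right hab 1) (by omega)
  · intro m
    have hm := m.isLt
    exact (firstIdx_spec n k s h2 ((m : ℕ) + 1) (by omega) (by omega)).1

lemma FO_flagOf (n k : ℕ) (hn : 2 ≤ n) (s : Fin (k * n) → Fin n)
    (h1 : RuleR1 n k s) (h2 : RuleR2 n k s) :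
    FO n k (flagOf n k hn s h2) s := by
  intro i
  constructor
  · intro m hm
    have hmlt := m.isLt
    obtain ⟨-, h, hs⟩ := firstIdx_spec n k s h2 ((m : ℕ) + 1) (by omega) (by omega)
    have hii : (⟨firstIdx n k s ((m : ℕ) + 1), h⟩ : Fin (k * n)) = i := Fin.ext hm
    rw [← hii]
    exact hs
  · intro m hm
    exact firstIdx_le n k s ((m : ℕ) + 1) i hm.symm

lemma valid_of_FO (n k : ℕ) (hn : 2 ≤ n) (f : Fin (n - 1) → Fin (k * (n - 1)))
    (hf : IsFlagSeq n k f) (s : Fin (k * n) → Fin n) (hs : FO n k f s) :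
    RuleR1 n k s ∧ RuleR2 n k s := by
  have hkn : k * (n - 1) ≤ k * n := Nat.mul_le_mul_left k (by omega)
  constructor
  · intro m hm2 hmn i hsi
    have h1lt : m - 1 < n - 1 := by omega
    have h2lt : m - 2 < n - 1 := by omega
    have hle : (f ⟨m - 1, h1lt⟩ : ℕ) ≤ (i : ℕ) := (hs i).2 ⟨m - 1, h1lt⟩ (by simp; omega)
    have hlt : f ⟨m - 2, h2lt⟩ < f ⟨m - 1, h1lt⟩ := hf.1 (by simp [Fin.mk_lt_mk]; omega)
    refine ⟨⟨(f ⟨m - 2, h2lt⟩ : ℕ), by have := (f ⟨m - 2, h2lt⟩).isLt; omega⟩, ?_, ?_⟩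
    · have : (f ⟨m - 2, h2lt⟩ : ℕ) < (f ⟨m - 1, h1lt⟩ : ℕ) := hlt
      simpa using by omega
    · have := (hs ⟨(f ⟨m - 2, h2lt⟩ : ℕ), by have := (f ⟨m - 2, h2lt⟩).isLt; omega⟩).1
        ⟨m - 2, h2lt⟩ rfl
      simp only [this]
      omega
  · intro m hm1 hmn
    have h1lt : m - 1 < n - 1 := by omega
    refine ⟨⟨(f ⟨m - 1, h1lt⟩ : ℕ), by have := (f ⟨m - 1, h1lt⟩).isLt; omega⟩, ?_, ?_⟩
    · have := hf.2 ⟨m - 1, h1lt⟩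
      simp only [Fin.val_mk] at this ⊢
      have hm1' : m - 1 + 1 = m := by omega
      rw [hm1'] at this
      exact this
    · have := (hs ⟨(f ⟨m - 1, h1lt⟩ : ℕ), by have := (f ⟨m - 1, h1lt⟩).isLt; omega⟩).1
        ⟨m - 1, h1lt⟩ rfl
      simp only [this]
      omega

lemma flagOf_eq (n k : ℕ) (hn : 2 ≤ n) (f : Fin (n - 1) → Fin (k * (n - 1)))
    (hf : IsFlagSeq n k f) (s : Fin (k * n) → Fin n) (hs : FO n k f s)
    (h2 : RuleR2 n k s) : flagOf n k hn s h2 = f := by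
  have hkn : k * (n - 1) ≤ k * n := Nat.mul_le_mul_left k (by omega)
  funext m
  apply Fin.ext
  show firstIdx n k s ((m : ℕ) + 1) = (f m : ℕ)
  have hflt : (f m : ℕ) < k * n := by have := (f m).isLt; omega
  have hle : firstIdx n k s ((m : ℕ) + 1) ≤ (f m : ℕ) := by
    have hsm := (hs ⟨(f m : ℕ), hflt⟩).1 m rfl
    exact firstIdx_le n k s ((m : ℕ) + 1) ⟨(f m : ℕ), hflt⟩ hsm
  have hmlt := m.isLt
  obtain ⟨-, h, hsv⟩ := firstIdx_spec n k s h2 ((m : ℕ) + 1) (by omega) (by omega)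
  have hge : (f m : ℕ) ≤ firstIdx n k s ((m : ℕ) + 1) :=
    (hs ⟨firstIdx n k s ((m : ℕ) + 1), h⟩).2 m hsv.symm
  omega

/-- The number of strings satisfying (R1) and (R2) is
`B_{k,n} = Σ_{f_1=0}^{k-1} Σ_{f_2=f_1+1}^{2k-1} ⋯ Σ_{f_{n-1}=f_{n-2}+1}^{k(n-1)-1}
∏_{i=2}^{n} i^(f_i - f_{i-1} - 1)` (with `f_n = kn`), the inner nested sums
being expressed as a single sum over all flag sequences. -/
theorem stmt8 (n k : ℕ) (hn : 2 ≤ n) (hk : 1 ≤ k) :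
    Nat.card {s : Fin (k * n) → Fin n // RuleR1 n k s ∧ RuleR2 n k s} =
      ∑ᶠ f : {f : Fin (n - 1) → Fin (k * (n - 1)) // IsFlagSeq n k f},
        ∏ i ∈ Finset.Icc 2 n, i ^ (flagExt n k f.1 i - flagExt n k f.1 (i - 1) - 1) := by
  classical
  have E : {s : Fin (k * n) → Fin n // RuleR1 n k s ∧ RuleR2 n k s}
      ≃ Σ f : {f : Fin (n - 1) → Fin (k * (n - 1)) // IsFlagSeq n k f},
          {s : Fin (k * n) → Fin n // FO n k f.1 s} :=
    { toFun := fun s =>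
        ⟨⟨flagOf n k hn s.1 s.2.2, flagOf_isFlagSeq n k hn s.1 s.2.1 s.2.2⟩,
          ⟨s.1, FO_flagOf n k hn s.1 s.2.1 s.2.2⟩⟩
      invFun := fun p => ⟨p.2.1, valid_of_FO n k hn p.1.1 p.1.2 p.2.1 p.2.2⟩
      left_inv := fun s => rfl
      right_inv := fun p => by
        obtain ⟨⟨f, hf⟩, ⟨s, hs⟩⟩ := p
        have hval := valid_of_FO n k hn f hf s hs
        have heq : flagOf n k hn s hval.2 = f := flagOf_eq n k hn f hf s hs hval.2
        subst heq
        rfl }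
  rw [Nat.card_congr E, Nat.card_eq_fintype_card, Fintype.card_sigma,
    finsum_eq_sum_of_fintype]
  refine Finset.sum_congr rfl fun f _ => ?_
  rw [← Nat.card_eq_fintype_card]
  exact card_fiber n k hn f.1 f.2
end

section
/- Fix integers n ≥ 2 and k ≥ 1, and define the table N_{m,j} by the recurrence N_{n−1,j} = n^{nk−1−j} for j ∈ [n−2,(n−1)k−1], and N_{m,j} = Σ_{i=0}^{(m+1)k−j−2} (m+1)^i · N_{m+1, j+i+1} for m ∈ [1,n−2] and j ∈ [m−1, mk−1]. Then B_{k,n} = Σ_{l=0}^{k−1} N_{1,l}, where B_{k,n} is the number of strings (s_i)_{i∈[0,kn−1]} with s_i ∈ [0,n−1] satisfying rules (R1) and (R2). -/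
/-- The table `N_{m,j}`:  `N_{n-1,j} = n^(nk-1-j)` and, for `m < n-1`,
`N_{m,j} = Σ_{i=0}^{(m+1)k-j-2} (m+1)^i · N_{m+1, j+i+1}`. -/
def Ntab (n k : ℕ) (m j : ℕ) : ℕ :=
  if n - 1 ≤ m then n ^ (n * k - 1 - j)
  else ∑ i ∈ Finset.range ((m + 1) * k - j - 1), (m + 1) ^ i * Ntab n k (m + 1) (j + i + 1)
termination_by n - 1 - m
decreasing_by omega


/-- canonical prefix value at position `i`, for a prefix of length `p` ending with value `m`. -/
def cval (m p i : ℕ) : ℕ := if i + 1 = p then m else if i + 2 ≤ m then i + 1 else 0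

lemma cval_le (m p i : ℕ) : cval m p i ≤ m := by unfold cval; split_ifs <;> omega

/-- `GP n k m p s` : the string is valid and its first `p` values form the canonical prefix. -/
def GP (n k m p : ℕ) (s : Fin (k * n) → Fin n) : Prop :=
  (∀ i : Fin (k * n), (i : ℕ) < p → (s i : ℕ) = cval m p i) ∧ RuleR1 n k s ∧ RuleR2 n k s

noncomputable def G (n k m p : ℕ) : ℕ := Nat.card {s : Fin (k * n) → Fin n // GP n k m p s}

lemma G_eq_card (n k m p : ℕ) [DecidablePred (GP n k m p)] :
    G n k m p = (Finset.univ.filter (fun s => GP n k m p s)).card := by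
  rw [G, Nat.card_eq_fintype_card, Fintype.card_subtype]

/-- If `s idx` has a value `≥ w ≥ 1`, then `w` occurs at or before `idx`. -/
lemma chainDown (n k w : ℕ) (hw : 1 ≤ w) (s : Fin (k * n) → Fin n) (h1 : RuleR1 n k s) :
    ∀ v, w ≤ v → ∀ idx : Fin (k * n), (s idx : ℕ) = v →
      ∃ j : Fin (k * n), (j : ℕ) ≤ (idx : ℕ) ∧ (s j : ℕ) = w := by
  intro v hv
  induction v, hv using Nat.le_induction with
  | base => exact fun idx h => ⟨idx, le_refl _, h⟩
  | succ v hv ih =>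
    intro idx h
    have hlt : v + 1 < n := h ▸ (s idx).isLt
    obtain ⟨j, hj, hjv⟩ := h1 (v + 1) (by omega) (by omega) idx h
    obtain ⟨j', hj', hj'v⟩ := ih j (by rw [hjv]; omega)
    exact ⟨j', by omega, hj'v⟩

/-- The exchange lemma: validity only depends on the suffix, given matching good prefixes. -/
lemma exchange (n k M J : ℕ) (s s' : Fin (k * n) → Fin n)
    (hagree : ∀ i : Fin (k * n), J < (i : ℕ) → s i = s' i)
    (ha : ∀ i : Fin (k * n), (i : ℕ) ≤ J → (s i : ℕ) ≤ M)
    (hb' : ∀ v, 1 ≤ v → v ≤ M →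
      ∃ i : Fin (k * n), (i : ℕ) ≤ J ∧ (i : ℕ) < k * v ∧ (s' i : ℕ) = v)
    (hc' : ∀ v, 2 ≤ v → ∀ i : Fin (k * n), (i : ℕ) ≤ J → (s' i : ℕ) = v →
      ∃ j : Fin (k * n), (j : ℕ) < (i : ℕ) ∧ (s' j : ℕ) = v - 1)
    (h1 : RuleR1 n k s) (h2 : RuleR2 n k s) : RuleR1 n k s' ∧ RuleR2 n k s' := by
  constructor
  · intro v hv2 hvn idx hidx
    by_cases hJ : (idx : ℕ) ≤ J
    · exact hc' v hv2 idx hJ hidx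
    · push_neg at hJ
      have hsv : (s idx : ℕ) = v := by rw [hagree idx hJ]; exact hidx
      by_cases hvM : v - 1 ≤ M
      · obtain ⟨i, hiJ, _, hiv⟩ := hb' (v - 1) (by omega) hvM
        exact ⟨i, by omega, hiv⟩
      · obtain ⟨j, hj, hjv⟩ := h1 v hv2 hvn idx hsv
        have hjJ : J < (j : ℕ) := by
          by_contra hcon
          have := ha j (by omega)
          omega
        exact ⟨j, hj, by rw [← hagree j hjJ]; exact hjv⟩
  · intro v hv1 hvn
    by_cases hvM : v ≤ M
    · obtain ⟨i, _, hik, hiv⟩ := hb' v hv1 hvM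
      exact ⟨i, hik, hiv⟩
    · obtain ⟨j, hjk, hjv⟩ := h2 v hv1 hvn
      have hjJ : J < (j : ℕ) := by
        by_contra hcon
        have := ha j (by omega)
        omega
      exact ⟨j, hjk, by rw [← hagree j hjJ]; exact hjv⟩


/-- counting strings with a fixed prefix of length `p`. -/
lemma card_prefix_fixed (N n p : ℕ) (hn : 0 < n) (hp : p ≤ N) (c : ℕ → ℕ)
    (hc : ∀ i, i < p → c i < n)
    [D : DecidablePred (fun s : Fin N → Fin n => ∀ i : Fin N, (i : ℕ) < p → (s i : ℕ) = c (i : ℕ))] :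
    (Finset.univ.filter (fun s : Fin N → Fin n =>
      ∀ i : Fin N, (i : ℕ) < p → (s i : ℕ) = c (i : ℕ))).card = n ^ (N - p) := by
  classical
  have key : (Finset.univ.filter (fun s : Fin N → Fin n =>
      ∀ i : Fin N, (i : ℕ) < p → (s i : ℕ) = c (i : ℕ))).card
      = (Finset.univ : Finset (Fin (N - p) → Fin n)).card := by
    refine Finset.card_nbij'
      (i := fun (s : Fin N → Fin n) (t : Fin (N - p)) => s ⟨p + (t : ℕ), by omega⟩)
      (j := fun (f : Fin (N - p) → Fin n) (idx : Fin N) =>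
        if h : (idx : ℕ) < p then ⟨c (idx : ℕ), hc _ h⟩ else f ⟨(idx : ℕ) - p, by omega⟩)
      ?_ ?_ ?_ ?_
    · intro s _; exact Finset.mem_univ _
    · intro f _
      simp only [Finset.mem_coe, Finset.mem_filter, Finset.mem_univ, true_and]
      intro i hi
      rw [dif_pos hi]
    · intro s hs
      simp only [Finset.mem_coe, Finset.mem_filter, Finset.mem_univ, true_and] at hs
      funext idx
      dsimp only
      by_cases h : (idx : ℕ) < p
      · rw [dif_pos h]
        exact Fin.ext (hs idx h).symm
      · rw [dif_neg h]
        congr 1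
        exact Fin.ext (by simp; omega)
    · intro f _
      funext t
      dsimp only
      rw [dif_neg (by omega)]
      congr 1
      exact Fin.ext (by simp)
  rw [key, Finset.card_univ, Fintype.card_fun]
  simp

/-- prefix-only characterisation at `m = n-1`. -/
lemma GP_top_iff (n k p : ℕ) (hn : 2 ≤ n) (hp1 : n - 1 ≤ p) (hp2 : p ≤ (n-1) * k)
    (s : Fin (k * n) → Fin n) :
    GP n k (n-1) p s ↔ ∀ i : Fin (k * n), (i : ℕ) < p → (s i : ℕ) = cval (n-1) p i := by
  have hlin : (n-1) * k + k = k * n := by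
    rcases n with _ | n
    · omega
    · simp [Nat.mul_comm]; ring
  constructor
  · exact fun h => h.1
  · intro hpre
    refine ⟨hpre, ?_, ?_⟩
    · -- RuleR1
      intro v hv2 hvn idx hidx
      have hkn : v - 2 < k * n := by omega
      have hlt : v - 2 < (idx : ℕ) := by
        by_cases hJ : (idx : ℕ) < p
        · have := hpre idx hJ
          unfold cval at this
          split_ifs at this <;> omega
        · omega
      refine ⟨⟨v - 2, hkn⟩, hlt, ?_⟩
      have hvp : v - 2 < p := by omega
      rw [hpre ⟨v - 2, hkn⟩ hvp]
      show cval (n-1) p (v-2) = v - 1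
      unfold cval
      split_ifs <;> omega
    · -- RuleR2
      intro v hv1 hvn
      by_cases hv : v = n - 1
      · have h1 : p - 1 < k * n := by omega
        refine ⟨⟨p - 1, h1⟩, ?_, ?_⟩
        · show p - 1 < k * v
          subst hv
          have hc : k * (n-1) = (n-1) * k := Nat.mul_comm _ _
          omega
        · rw [hpre ⟨p - 1, h1⟩ (by show p - 1 < p; omega)]
          show cval (n-1) p (p-1) = v
          unfold cval
          split_ifs <;> omega
      · have h1 : v - 1 < k * n := by omega
        have hk0 : 0 < k := by
          rcases Nat.eq_zero_or_pos k with h | h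
          · subst h; simp at h1
          · exact h
        refine ⟨⟨v - 1, h1⟩, by
          show v - 1 < k * v
          calc v - 1 < v := by omega
            _ ≤ k * v := Nat.le_mul_of_pos_left v hk0, ?_⟩
        rw [hpre ⟨v - 1, h1⟩ (by show v - 1 < p; omega)]
        show cval (n-1) p (v-1) = v
        unfold cval
        split_ifs <;> omega

lemma base_card (n k p : ℕ) (hn : 2 ≤ n) (hk : 1 ≤ k) (hp1 : n - 1 ≤ p) (hp2 : p ≤ (n-1) * k) :
    G n k (n-1) p = n ^ (n * k - p) := by
  classical
  have hlin : (n-1) * k + k = k * n := by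
    rcases n with _ | n
    · omega
    · simp [Nat.mul_comm]; ring
  rw [G_eq_card]
  rw [show (Finset.univ.filter (fun s => GP n k (n-1) p s))
      = Finset.univ.filter (fun s : Fin (k*n) → Fin n =>
          ∀ i : Fin (k * n), (i : ℕ) < p → (s i : ℕ) = cval (n-1) p (i : ℕ)) by
    apply Finset.filter_congr
    intro s _
    simpa using GP_top_iff n k p hn hp1 hp2 s]
  rw [card_prefix_fixed (k*n) n p (by omega) (by omega) (cval (n-1) p)
    (fun i _ => lt_of_le_of_lt (cval_le _ _ _) (by omega))]
  congr 1
  have : n * k = k * n := Nat.mul_comm n k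
  omega

/-- first occurrence of value `w` is at position `q`. -/
def FA (n k w q : ℕ) (s : Fin (k * n) → Fin n) : Prop :=
  (∃ t : Fin (k * n), (t : ℕ) = q ∧ (s t : ℕ) = w) ∧
  ∀ t : Fin (k * n), (t : ℕ) < q → (s t : ℕ) ≠ w

lemma lt_of_first (n k w q : ℕ) (hw : 1 ≤ w) (s : Fin (k * n) → Fin n) (h1 : RuleR1 n k s)
    (hmin : ∀ t : Fin (k * n), (t : ℕ) < q → (s t : ℕ) ≠ w) :
    ∀ idx : Fin (k * n), (idx : ℕ) < q → (s idx : ℕ) < w := by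
  intro idx h
  by_contra hge
  push_neg at hge
  obtain ⟨j, hj, hjw⟩ := chainDown n k w hw s h1 _ hge idx rfl
  exact hmin j (by omega) hjw

lemma cval_self (m p : ℕ) (h1 : 1 ≤ m) (h2 : m ≤ p) : cval m p (p - 1) = m := by
  unfold cval; split_ifs <;> omega

lemma cval_small (m p v : ℕ) (h1 : 1 ≤ v) (h2 : v + 1 ≤ m) (h3 : m ≤ p) :
    cval m p (v - 1) = v := by
  unfold cval; split_ifs <;> omega

lemma cval_occ (k m p v : ℕ) (hk : 1 ≤ k) (h1 : 1 ≤ v) (h2 : v ≤ m) (h3 : m ≤ p)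
    (h4 : p ≤ m * k) : ∃ q, q < p ∧ q < k * v ∧ cval m p q = v := by
  by_cases hv : v = m
  · subst hv
    have hc : k * v = v * k := Nat.mul_comm _ _
    exact ⟨p - 1, by omega, by omega, cval_self v p h1 h3⟩
  · have hvk : v ≤ k * v := Nat.le_mul_of_pos_left v (by omega)
    exact ⟨v - 1, by omega, by omega, cval_small m p v h1 (by omega) h3⟩

lemma cval_R1 (m p v idx : ℕ) (h3 : m ≤ p) (h2 : 2 ≤ v) (hidx : idx < p)
    (hv : cval m p idx = v) : ∃ q, q < idx ∧ cval m p q = v - 1 := by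
  unfold cval at hv
  split_ifs at hv with h h'
  · -- idx = p - 1, v = m
    refine ⟨m - 2, by omega, ?_⟩
    have := cval_small m p (m - 1) (by omega) (by omega) h3
    rw [show m - 1 - 1 = m - 2 by omega] at this
    rw [this]; omega
  · -- v = idx + 1
    refine ⟨idx - 1, by omega, ?_⟩
    have := cval_small m p idx (by omega) (by omega) h3
    rw [this]; omega
  · omega

/-- forward map, first component: the values strictly between `p-1` and `p+i`. -/
def fwdA (n k m p i : ℕ) (hp : p + i < k * n) (s : Fin (k*n) → Fin n) (u : Fin i) :
    Fin (m+1) :=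
  ⟨min ((s ⟨p + (u : ℕ), by have := u.isLt; omega⟩ : Fin n) : ℕ) m, by omega⟩

/-- forward map, second component: replace prefix by the canonical one. -/
def fwdB (n k m p i : ℕ) (hn : 0 < n) (s : Fin (k*n) → Fin n) (idx : Fin (k*n)) : Fin n :=
  if (idx : ℕ) < p + i + 1 then ⟨cval (m+1) (p+i+1) (idx : ℕ) % n, Nat.mod_lt _ hn⟩
  else s idx

/-- backward map. -/
def bwdF (n k m p i : ℕ) (hn : 0 < n) (hm : m + 1 < n) (hkn : p + i < k * n)
    (pr : (Fin i → Fin (m+1)) × (Fin (k*n) → Fin n)) (idx : Fin (k*n)) : Fin n :=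
  if h1 : (idx : ℕ) < p then ⟨cval m p (idx : ℕ) % n, Nat.mod_lt _ hn⟩
  else if h2 : (idx : ℕ) < p + i then
    ⟨(pr.1 ⟨(idx : ℕ) - p, by have := idx.isLt; omega⟩ : ℕ), by
        have := (pr.1 ⟨(idx : ℕ) - p, by have := idx.isLt; omega⟩).isLt; omega⟩
  else if h3 : (idx : ℕ) = p + i then ⟨m+1, hm⟩
  else pr.2 idx

lemma fwdA_val (n k m p i : ℕ) (hp : p + i < k * n) (s : Fin (k*n) → Fin n) (u : Fin i) :
    (fwdA n k m p i hp s u : ℕ)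
      = min ((s ⟨p + (u : ℕ), by have := u.isLt; omega⟩ : Fin n) : ℕ) m := rfl

lemma fwdB_le (n k m p i : ℕ) (hn : 0 < n) (hm : m + 1 < n) (s : Fin (k*n) → Fin n)
    (idx : Fin (k*n)) (h : (idx : ℕ) < p + i + 1) :
    (fwdB n k m p i hn s idx : ℕ) = cval (m+1) (p+i+1) (idx : ℕ) := by
  unfold fwdB
  rw [if_pos h]
  exact Nat.mod_eq_of_lt (lt_of_le_of_lt (cval_le _ _ _) hm)

lemma fwdB_gt (n k m p i : ℕ) (hn : 0 < n) (s : Fin (k*n) → Fin n)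
    (idx : Fin (k*n)) (h : p + i < (idx : ℕ)) :
    fwdB n k m p i hn s idx = s idx := by
  unfold fwdB
  rw [if_neg (by omega)]

lemma bwdF_lo (n k m p i : ℕ) (hn : 0 < n) (hm : m + 1 < n) (hkn : p + i < k * n)
    (pr : (Fin i → Fin (m+1)) × (Fin (k*n) → Fin n)) (idx : Fin (k*n))
    (h : (idx : ℕ) < p) :
    (bwdF n k m p i hn hm hkn pr idx : ℕ) = cval m p (idx : ℕ) := by
  unfold bwdF
  rw [dif_pos h]
  exact Nat.mod_eq_of_lt (lt_of_le_of_lt (cval_le _ _ _) (by omega))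

lemma bwdF_mid (n k m p i : ℕ) (hn : 0 < n) (hm : m + 1 < n) (hkn : p + i < k * n)
    (pr : (Fin i → Fin (m+1)) × (Fin (k*n) → Fin n)) (idx : Fin (k*n))
    (h1 : p ≤ (idx : ℕ)) (h2 : (idx : ℕ) < p + i) :
    (bwdF n k m p i hn hm hkn pr idx : ℕ)
      = (pr.1 ⟨(idx : ℕ) - p, by omega⟩ : ℕ) := by
  unfold bwdF
  rw [dif_neg (by omega), dif_pos h2]

lemma bwdF_eq (n k m p i : ℕ) (hn : 0 < n) (hm : m + 1 < n) (hkn : p + i < k * n)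
    (pr : (Fin i → Fin (m+1)) × (Fin (k*n) → Fin n)) (idx : Fin (k*n))
    (h : (idx : ℕ) = p + i) :
    (bwdF n k m p i hn hm hkn pr idx : ℕ) = m + 1 := by
  unfold bwdF
  rw [dif_neg (by omega), dif_neg (by omega), dif_pos h]

lemma bwdF_hi (n k m p i : ℕ) (hn : 0 < n) (hm : m + 1 < n) (hkn : p + i < k * n)
    (pr : (Fin i → Fin (m+1)) × (Fin (k*n) → Fin n)) (idx : Fin (k*n))
    (h : p + i < (idx : ℕ)) :
    bwdF n k m p i hn hm hkn pr idx = pr.2 idx := by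
  unfold bwdF
  rw [dif_neg (by omega), dif_neg (by omega), dif_neg (by omega)]

open Classical in
lemma key_card (n k m p i : ℕ) (hn : 2 ≤ n) (hk : 1 ≤ k) (hm : m ≤ n - 2)
    (hp1 : m ≤ p) (hp2 : p ≤ m * k) (hi : i < (m+1) * k - p) :
    (Finset.univ.filter (fun s : Fin (k*n) → Fin n =>
        GP n k m p s ∧ FA n k (m+1) (p+i) s)).card
      = (m+1)^i * G n k (m+1) (p+i+1) := by
  have e1 : m * k + k = (m+1) * k := by ring
  have e2 : (m+2) * k ≤ k * n := by
    calc (m+2) * k ≤ n * k := Nat.mul_le_mul_right k (by omega)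
      _ = k * n := Nat.mul_comm _ _
  have e3 : (m+1) * k + k = (m+2) * k := by ring
  have e4 : k * (m+1) = (m+1) * k := Nat.mul_comm _ _
  have hpin : p + i + 1 ≤ (m+1) * k := by omega
  have hkn : p + i < k * n := by omega
  have hn0 : 0 < n := by omega
  have hm1n : m + 1 < n := by omega
  rw [G_eq_card]
  have hcard : (Finset.univ.filter (fun s : Fin (k*n) → Fin n =>
        GP n k m p s ∧ FA n k (m+1) (p+i) s)).card
      = ((Finset.univ : Finset (Fin i → Fin (m+1))) ×ˢ
          (Finset.univ.filter (fun s : Fin (k*n) → Fin n => GP n k (m+1) (p+i+1) s))).card := by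
    refine Finset.card_nbij'
      (i := fun (s : Fin (k*n) → Fin n) => (fwdA n k m p i hkn s, fwdB n k m p i hn0 s))
      (j := fun pr => bwdF n k m p i hn0 hm1n hkn pr)
      ?_ ?_ ?_ ?_
    · -- forward maps into the product set
      intro s hs
      simp only [Finset.mem_coe, Finset.mem_filter, Finset.mem_univ, true_and] at hs
      obtain ⟨hGP, hFA⟩ := hs
      simp only [Finset.mem_coe, Finset.mem_product, Finset.mem_univ, true_and, Finset.mem_filter]
      have hagree : ∀ idx : Fin (k*n), p + i < (idx : ℕ) →
          s idx = fwdB n k m p i hn0 s idx :=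
        fun idx h => (fwdB_gt n k m p i hn0 s idx h).symm
      have hpre : ∀ idx : Fin (k*n), (idx : ℕ) < p + i + 1 →
          (fwdB n k m p i hn0 s idx : ℕ) = cval (m+1) (p+i+1) (idx : ℕ) :=
        fun idx h => fwdB_le n k m p i hn0 hm1n s idx h
      have hval := exchange n k (m+1) (p+i) s _ hagree
        (by -- ha
          intro idx hidx
          rcases Nat.lt_or_ge (idx : ℕ) (p+i) with h | h
          · have := lt_of_first n k (m+1) (p+i) (by omega) s hGP.2.1 hFA.2 idx h
            omega
          · obtain ⟨tt, htt, httv⟩ := hFA.1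
            have : tt = idx := Fin.ext (by omega)
            subst this
            omega)
        (by -- hb'
          intro v hv1 hv2
          obtain ⟨q, hq1, hq2, hq3⟩ := cval_occ k (m+1) (p+i+1) v hk hv1 hv2 (by omega) hpin
          refine ⟨⟨q, by omega⟩, ?_, ?_, ?_⟩
          · show q ≤ p + i; omega
          · show q < k * v; omega
          · rw [hpre ⟨q, by omega⟩ (by show q < p + i + 1; omega)]
            exact hq3)
        (by -- hc'
          intro v hv2 idx hidx hv
          rw [hpre idx (by omega)] at hv
          obtain ⟨q, hq1, hq2⟩ := cval_R1 (m+1) (p+i+1) v (idx : ℕ) (by omega) hv2 (by omega) hv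
          refine ⟨⟨q, by omega⟩, ?_, ?_⟩
          · show q < (idx : ℕ); omega
          · rw [hpre ⟨q, by omega⟩ (by show q < p + i + 1; omega)]
            exact hq2)
        hGP.2.1 hGP.2.2
      exact ⟨hpre, hval.1, hval.2⟩
    · -- backward maps into the filtered set
      intro pr hpr
      simp only [Finset.mem_coe, Finset.mem_product, Finset.mem_univ, true_and, Finset.mem_filter] at hpr
      simp only [Finset.mem_coe, Finset.mem_filter, Finset.mem_univ, true_and]
      set s := bwdF n k m p i hn0 hm1n hkn pr with hsdef
      have hlo : ∀ idx : Fin (k*n), (idx : ℕ) < p → (s idx : ℕ) = cval m p (idx : ℕ) :=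
        fun idx h => bwdF_lo n k m p i hn0 hm1n hkn pr idx h
      have hmid : ∀ idx : Fin (k*n), ∀ h1 : p ≤ (idx : ℕ), ∀ h2 : (idx : ℕ) < p + i,
          (s idx : ℕ) = (pr.1 ⟨(idx : ℕ) - p, by omega⟩ : ℕ) :=
        fun idx h1 h2 => bwdF_mid n k m p i hn0 hm1n hkn pr idx h1 h2
      have heq : ∀ idx : Fin (k*n), (idx : ℕ) = p + i → (s idx : ℕ) = m + 1 :=
        fun idx h => bwdF_eq n k m p i hn0 hm1n hkn pr idx h
      have hhi : ∀ idx : Fin (k*n), p + i < (idx : ℕ) → s idx = pr.2 idx :=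
        fun idx h => bwdF_hi n k m p i hn0 hm1n hkn pr idx h
      have hval := exchange n k (m+1) (p+i) pr.2 s
        (fun idx h => (hhi idx h).symm)
        (by -- ha for pr.2
          intro idx hidx
          have := hpr.1 idx (by omega)
          have := cval_le (m+1) (p+i+1) (idx : ℕ)
          omega)
        (by -- hb' for s
          intro v hv1 hv2
          rcases Nat.lt_or_ge v (m+1) with hv | hv
          · obtain ⟨q, hq1, hq2, hq3⟩ := cval_occ k m p v hk hv1 (by omega) hp1 hp2
            refine ⟨⟨q, by omega⟩, ?_, ?_, ?_⟩
            · show q ≤ p + i; omega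
            · show q < k * v; omega
            · rw [hlo ⟨q, by omega⟩ (by show q < p; omega)]
              exact hq3
          · have hv' : v = m + 1 := by omega
            subst hv'
            refine ⟨⟨p + i, by omega⟩, ?_, ?_, ?_⟩
            · show p + i ≤ p + i; omega
            · show p + i < k * (m+1); omega
            · exact heq ⟨p + i, by omega⟩ rfl)
        (by -- hc' for s
          intro v hv2 idx hidx hv
          rcases Nat.lt_or_ge (idx : ℕ) p with h1 | h1
          · rw [hlo idx h1] at hv
            obtain ⟨q, hq1, hq2⟩ := cval_R1 m p v (idx : ℕ) hp1 hv2 h1 hv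
            refine ⟨⟨q, by omega⟩, ?_, ?_⟩
            · show q < (idx : ℕ); omega
            · rw [hlo ⟨q, by omega⟩ (by show q < p; omega)]
              exact hq2
          · rcases Nat.lt_or_ge (idx : ℕ) (p+i) with h2 | h2
            · -- a middle value, v ≤ m
              have hm2 := hmid idx h1 h2
              have hbd := (pr.1 ⟨(idx : ℕ) - p, by omega⟩).isLt
              have hvm : v ≤ m := by omega
              have hc := cval_small m p (v-1) (by omega) (by omega) hp1
              rw [show v - 1 - 1 = v - 2 by omega] at hc
              refine ⟨⟨v - 2, by omega⟩, ?_, ?_⟩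
              · show v - 2 < (idx : ℕ); omega
              · rw [hlo ⟨v - 2, by omega⟩ (by show v - 2 < p; omega)]
                exact hc
            · -- idx = p + i, v = m+1
              have hpi : (idx : ℕ) = p + i := by omega
              have hvm : v = m + 1 := by
                have := heq idx hpi
                omega
              have hm1 : 1 ≤ m := by omega
              have hc := cval_self m p hm1 hp1
              refine ⟨⟨p - 1, by omega⟩, ?_, ?_⟩
              · show p - 1 < (idx : ℕ); omega
              · have hc2 : cval m p (((⟨p - 1, by omega⟩ : Fin (k*n))) : ℕ) = m := hc
                rw [hlo ⟨p - 1, by omega⟩ (by show p - 1 < p; omega), hc2]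
                omega)
        hpr.2.1 hpr.2.2
      refine ⟨⟨fun idx h => hlo idx h, hval.1, hval.2⟩, ?_, ?_⟩
      · exact ⟨⟨p + i, hkn⟩, rfl, heq ⟨p + i, hkn⟩ rfl⟩
      · intro t ht
        rcases Nat.lt_or_ge (t : ℕ) p with h1 | h1
        · have := hlo t h1
          have := cval_le m p (t : ℕ)
          omega
        · have := hmid t h1 ht
          have := (pr.1 ⟨(t : ℕ) - p, by omega⟩).isLt
          omega
    · -- left inverse
      intro s hs
      simp only [Finset.mem_coe, Finset.mem_filter, Finset.mem_univ, true_and] at hs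
      obtain ⟨hGP, hFA⟩ := hs
      funext idx
      show bwdF n k m p i hn0 hm1n hkn (fwdA n k m p i hkn s, fwdB n k m p i hn0 s) idx = s idx
      apply Fin.ext
      rcases Nat.lt_or_ge (idx : ℕ) p with h1 | h1
      · rw [bwdF_lo n k m p i hn0 hm1n hkn _ idx h1]
        exact (hGP.1 idx (by omega)).symm
      · rcases Nat.lt_or_ge (idx : ℕ) (p+i) with h2 | h2
        · rw [bwdF_mid n k m p i hn0 hm1n hkn _ idx h1 h2]
          rw [fwdA_val n k m p i hkn s ⟨(idx : ℕ) - p, by omega⟩]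
          have heq2 : p + ((idx : ℕ) - p) = (idx : ℕ) := by omega
          simp only [heq2, Fin.eta]
          have := lt_of_first n k (m+1) (p+i) (by omega) s hGP.2.1 hFA.2 idx h2
          omega
        · rcases Nat.lt_or_ge (idx : ℕ) (p+i+1) with h3 | h3
          · rw [bwdF_eq n k m p i hn0 hm1n hkn _ idx (by omega)]
            obtain ⟨tt, htt, httv⟩ := hFA.1
            have : tt = idx := Fin.ext (by omega)
            subst this
            omega
          · rw [bwdF_hi n k m p i hn0 hm1n hkn _ idx (by omega)]
            show ((fwdB n k m p i hn0 s idx : Fin n) : ℕ) = _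
            rw [fwdB_gt n k m p i hn0 s idx (by omega)]
    · -- right inverse
      intro pr hpr
      simp only [Finset.mem_coe, Finset.mem_product, Finset.mem_univ, true_and, Finset.mem_filter] at hpr
      refine Prod.ext ?_ ?_
      · funext u
        apply Fin.ext
        show (fwdA n k m p i hkn (bwdF n k m p i hn0 hm1n hkn pr) u : ℕ) = _
        rw [fwdA_val]
        rw [bwdF_mid n k m p i hn0 hm1n hkn pr ⟨p + (u : ℕ), by have := u.isLt; omega⟩
          (by show p ≤ p + (u : ℕ); omega) (by show p + (u : ℕ) < p + i; have := u.isLt; omega)]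
        have heq2 : (((⟨p + (u : ℕ), by have := u.isLt; omega⟩ : Fin (k*n)) : ℕ)) - p = (u : ℕ) := by
          show p + (u : ℕ) - p = (u : ℕ); omega
        simp only [heq2, Fin.eta]
        have := (pr.1 u).isLt
        omega
      · funext idx
        apply Fin.ext
        show (fwdB n k m p i hn0 (bwdF n k m p i hn0 hm1n hkn pr) idx : ℕ) = _
        rcases Nat.lt_or_ge (idx : ℕ) (p+i+1) with h | h
        · rw [fwdB_le n k m p i hn0 hm1n _ idx h]
          exact (hpr.1 idx h).symm
        · rw [fwdB_gt n k m p i hn0 _ idx (by omega)]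
          rw [bwdF_hi n k m p i hn0 hm1n hkn pr idx (by omega)]
  rw [hcard, Finset.card_product, Finset.card_univ, Fintype.card_fun, Fintype.card_fin,
    Fintype.card_fin]

open Classical in
lemma step_card (n k m p : ℕ) (hn : 2 ≤ n) (hk : 1 ≤ k) (hm : m ≤ n - 2)
    (hp1 : m ≤ p) (hp2 : p ≤ m * k) :
    G n k m p = ∑ i ∈ Finset.range ((m+1) * k - p), (m+1)^i * G n k (m+1) (p+i+1) := by
  have e1 : m * k + k = (m+1) * k := by ring
  have e4 : k * (m+1) = (m+1) * k := Nat.mul_comm _ _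
  rw [G_eq_card]
  have hcover : Finset.univ.filter (fun s : Fin (k*n) → Fin n => GP n k m p s)
      = (Finset.range ((m+1)*k - p)).biUnion (fun i => Finset.univ.filter
          (fun s : Fin (k*n) → Fin n => GP n k m p s ∧ FA n k (m+1) (p+i) s)) := by
    apply Finset.Subset.antisymm
    · intro s hs
      simp only [Finset.mem_filter, Finset.mem_univ, true_and] at hs
      obtain ⟨j0, hj0k, hj0v⟩ := hs.2.2 (m+1) (by omega) (by omega)
      have hex : ∃ q : ℕ, ∃ t : Fin (k*n), (t : ℕ) = q ∧ (s t : ℕ) = m+1 :=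
        ⟨j0, j0, rfl, hj0v⟩
      set Q := Nat.find hex with hQ
      obtain ⟨t, htQ, htv⟩ := Nat.find_spec hex
      have hmin : ∀ t' : Fin (k*n), (t' : ℕ) < Q → (s t' : ℕ) ≠ m+1 := by
        intro t' hlt h'
        have : Nat.find hex ≤ (t' : ℕ) := Nat.find_le ⟨t', rfl, h'⟩
        omega
      have hQle : Q ≤ (j0 : ℕ) := by
        have : Nat.find hex ≤ (j0 : ℕ) := Nat.find_le ⟨j0, rfl, hj0v⟩
        omega
      have hQp : p ≤ Q := by
        by_contra hc
        push_neg at hc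
        have h1 := hs.1 t (by omega)
        have h2 := cval_le m p (t : ℕ)
        omega
      simp only [Finset.mem_biUnion, Finset.mem_range, Finset.mem_filter, Finset.mem_univ,
        true_and]
      refine ⟨Q - p, by omega, hs, ⟨t, by omega, htv⟩, ?_⟩
      intro t' h
      exact hmin t' (by omega)
    · intro s hs
      simp only [Finset.mem_biUnion, Finset.mem_range, Finset.mem_filter, Finset.mem_univ,
        true_and] at hs ⊢
      obtain ⟨i, hi, hGP, _⟩ := hs
      exact hGP
  rw [hcover, Finset.card_biUnion]
  · exact Finset.sum_congr rfl fun i hi =>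
      key_card n k m p i hn hk hm hp1 hp2 (Finset.mem_range.mp hi)
  · intro a ha b hb hab
    simp only [Finset.mem_coe, Finset.mem_range] at ha hb
    rw [Function.onFun, Finset.disjoint_left]
    intro s hsa hsb
    simp only [Finset.mem_filter, Finset.mem_univ, true_and] at hsa hsb
    obtain ⟨-, ⟨ta, hta, htav⟩, hmina⟩ := hsa
    obtain ⟨-, ⟨tb, htb, htbv⟩, hminb⟩ := hsb
    rcases Nat.lt_or_ge a b with h | h
    · exact hminb ta (by omega) htav
    · exact hmina tb (by omega) htbv

lemma G_eq_Ntab (n k : ℕ) (hn : 2 ≤ n) (hk : 1 ≤ k) :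
    ∀ d m p, n - 1 = m + d → 1 ≤ m → m ≤ p → p ≤ m * k →
      G n k m p = Ntab n k m (p - 1) := by
  intro d
  induction d with
  | zero =>
    intro m p hd hm1 hp1 hp2
    have hm : m = n - 1 := by omega
    subst hm
    rw [base_card n k p hn hk hp1 hp2, Ntab]
    rw [if_pos (le_refl _)]
    congr 1
    have h1 : 1 ≤ n * k := by nlinarith
    omega
  | succ d ih =>
    intro m p hd hm1 hp1 hp2
    have hm : m ≤ n - 2 := by omega
    rw [step_card n k m p hn hk hm hp1 hp2, Ntab, if_neg (by omega)]
    rw [show (m+1) * k - (p-1) - 1 = (m+1) * k - p by omega]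
    apply Finset.sum_congr rfl
    intro i hi
    simp only [Finset.mem_range] at hi
    congr 1
    rw [ih (m+1) (p+i+1) (by omega) (by omega) (by omega) (by omega)]
    congr 1
    omega

/-- `B_{k,n} = Σ_{l=0}^{k-1} N_{1,l}`, where `B_{k,n}` is the number of
strings satisfying rules (R1) and (R2). -/
theorem stmt10 (n k : ℕ) (hn : 2 ≤ n) (hk : 1 ≤ k) :
    Nat.card {s : Fin (k * n) → Fin n // RuleR1 n k s ∧ RuleR2 n k s} =
      ∑ l ∈ Finset.range k, Ntab n k 1 l := by
  have h0 : Nat.card {s : Fin (k * n) → Fin n // RuleR1 n k s ∧ RuleR2 n k s} = G n k 0 0 := by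
    rw [G]
    exact Nat.card_congr (Equiv.subtypeEquivRight fun s => by
      constructor
      · intro h
        exact ⟨fun i hi => absurd hi (by omega), h.1, h.2⟩
      · intro h
        exact ⟨h.2.1, h.2.2⟩)
  rw [h0, step_card n k 0 0 hn hk (by omega) (le_refl 0) (by simp)]
  rw [show (0+1) * k - 0 = k by omega]
  apply Finset.sum_congr rfl
  intro i hi
  simp only [Finset.mem_range] at hi
  norm_num
  rw [G_eq_Ntab n k hn hk (n - 2) 1 (i+1) (by omega) (by omega) (by omega) (by omega)]
  norm_num
end

section
/- Fix integers n ≥ 2 and k ≥ 1, let m ∈ [1,n−1] and j ∈ [m−1, mk−1], and fix a prefix (s_0,…,s_j) with entries in [0,m] such that the values occurring in the prefix are exactly 0,1,…,m, the first occurrences of 1,…,m appear in increasing order of value, the first occurrence of each l ∈ [1,m] is at an index < kl, and the first occurrence of m is at index j. Then the number of completions (s_{j+1},…,s_{kn−1}) with entries in [0,n−1] such that the full string (s_i)_{i∈[0,kn−1]} satisfies rules (R1) and (R2) equals N_{m,j}; in particular this number is independent of the particular admissible prefix chosen. -/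
def Sset (n k j : ℕ) (p : ℕ → ℕ) :=
  {s : Fin (k * n) → Fin n //
    (∀ i : Fin (k * n), (i : ℕ) ≤ j → (s i : ℕ) = p i) ∧ RuleR1 n k s ∧ RuleR2 n k s}

structure Adm (n k m j : ℕ) (p g : ℕ → ℕ) : Prop where
  hm1 : 1 ≤ m
  hm2 : m ≤ n - 1
  hj1 : m - 1 ≤ j
  hj2 : j ≤ m * k - 1
  hpval : ∀ i ≤ j, p i ≤ m
  hzero : ∃ i ≤ j, p i = 0
  hg : ∀ v : ℕ, 1 ≤ v → v ≤ m → g v ≤ j ∧ p (g v) = v ∧ ∀ i < g v, p i ≠ v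
  hgmono : ∀ v : ℕ, 2 ≤ v → v ≤ m → g (v - 1) < g v
  hgbound : ∀ v : ℕ, 1 ≤ v → v ≤ m → g v < k * v
  hgm : g m = j

lemma chain (n k : ℕ) (s : Fin (k * n) → Fin n) (h1 : RuleR1 n k s) (w : ℕ) (hw : 1 ≤ w) :
    ∀ t : Fin (k * n), w ≤ (s t : ℕ) → ∃ u : Fin (k * n), (u : ℕ) ≤ (t : ℕ) ∧ (s u : ℕ) = w := by
  have key : ∀ T : ℕ, ∀ t : Fin (k * n), (t : ℕ) ≤ T → w ≤ (s t : ℕ) →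
      ∃ u : Fin (k * n), (u : ℕ) ≤ (t : ℕ) ∧ (s u : ℕ) = w := by
    intro T
    induction T with
    | zero =>
      intro t ht hw'
      rcases eq_or_lt_of_le hw' with h | h
      · exact ⟨t, le_refl _, h.symm⟩
      · obtain ⟨u, hu, _⟩ := h1 (s t) (by omega) (by have := (s t).isLt; omega) t rfl
        omega
    | succ T ih =>
      intro t ht hw'
      rcases eq_or_lt_of_le hw' with h | h
      · exact ⟨t, le_refl _, h.symm⟩
      · obtain ⟨u, hu, hsu⟩ := h1 (s t) (by omega) (by have := (s t).isLt; omega) t rfl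
        obtain ⟨u', hu', hsu'⟩ := ih u (by omega) (by omega)
        exact ⟨u', by omega, hsu'⟩
  exact fun t => key (t : ℕ) t le_rfl

open Classical in
noncomputable def firstM (n k m : ℕ) (s : Fin (k * n) → Fin n)
    (hex : ∃ t : ℕ, ∃ h : t < k * n, (s ⟨t, h⟩ : ℕ) = m + 1) : ℕ :=
  Nat.find hex

open Classical in
lemma firstM_spec (n k m : ℕ) (s : Fin (k * n) → Fin n)
    (hex : ∃ t : ℕ, ∃ h : t < k * n, (s ⟨t, h⟩ : ℕ) = m + 1) :
    ∃ h : firstM n k m s hex < k * n, (s ⟨firstM n k m s hex, h⟩ : ℕ) = m + 1 :=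
  Nat.find_spec hex

open Classical in
lemma firstM_min (n k m : ℕ) (s : Fin (k * n) → Fin n)
    (hex : ∃ t : ℕ, ∃ h : t < k * n, (s ⟨t, h⟩ : ℕ) = m + 1)
    (t : ℕ) (ht : t < firstM n k m s hex) : ¬ ∃ h : t < k * n, (s ⟨t, h⟩ : ℕ) = m + 1 :=
  Nat.find_min hex ht

open Classical in
lemma firstM_le (n k m : ℕ) (s : Fin (k * n) → Fin n)
    (hex : ∃ t : ℕ, ∃ h : t < k * n, (s ⟨t, h⟩ : ℕ) = m + 1)
    (t : ℕ) (h : ∃ h : t < k * n, (s ⟨t, h⟩ : ℕ) = m + 1) : firstM n k m s hex ≤ t :=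
  Nat.find_min' hex h

lemma card_fiber_s11 {α : Type*} {ι : Type*} [Finite α] [Fintype ι] (f : α → ι) :
    Nat.card α = ∑ i : ι, Nat.card {a : α // f a = i} := by
  classical
  letI := Fintype.ofFinite α
  calc Nat.card α = Nat.card (Σ i : ι, {a : α // f a = i}) :=
        (Nat.card_congr (Equiv.sigmaFiberEquiv f)).symm
    _ = ∑ i : ι, Nat.card {a : α // f a = i} := by
        rw [Nat.card_eq_fintype_card, Fintype.card_sigma]
        exact Finset.sum_congr rfl fun i _ => (Nat.card_eq_fintype_card).symm

instance (n k j : ℕ) (p : ℕ → ℕ) : Finite (Sset n k j p) := by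
  unfold Sset; infer_instance

lemma baseCase (n k m j : ℕ) (hn : 2 ≤ n) (hk : 1 ≤ k) (hge : n - 1 ≤ m)
    (p g : ℕ → ℕ) (A : Adm n k m j p g) :
    Nat.card (Sset n k j p) = Ntab n k m j := by
  have hm : m = n - 1 := le_antisymm A.hm2 hge
  subst hm
  have hjkn : j + 1 ≤ k * n := by
    have h1 : j ≤ (n - 1) * k - 1 := A.hj2
    have h2 : (n - 1) * k + k = n * k := by
      have : n - 1 + 1 = n := by omega
      calc (n - 1) * k + k = (n - 1 + 1) * k := by ring
        _ = n * k := by rw [this]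
    have h3 : 1 ≤ (n - 1) * k := Nat.mul_pos (by omega) hk
    have : k * n = n * k := Nat.mul_comm _ _
    omega
  -- the equivalence with free tails
  have E : Sset n k j p ≃ (Fin (k * n - (j + 1)) → Fin n) := by
    refine
      { toFun := fun s t => s.1 ⟨j + 1 + (t : ℕ), by have := t.isLt; omega⟩
        invFun := fun f =>
          ⟨fun t => if h : (t : ℕ) ≤ j then
              ⟨p (t : ℕ), by have := A.hpval (t : ℕ) h; omega⟩
            else f ⟨(t : ℕ) - (j + 1), by have := t.isLt; omega⟩, ?_, ?_, ?_⟩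
        left_inv := ?_
        right_inv := ?_ }
    · intro i hi
      simp [dif_pos hi]
    · -- R1
      intro w hw2 hwn i hsi
      have hw1 : 1 ≤ w - 1 := by omega
      have hwm : w - 1 ≤ n - 1 := by omega
      obtain ⟨hg1, hg2, hg3⟩ := A.hg (w - 1) hw1 hwm
      have hglt : g (w - 1) < k * (w - 1) := A.hgbound (w - 1) hw1 hwm
      have hgkn : g (w - 1) < k * n := by
        have : k * (w - 1) ≤ k * n := Nat.mul_le_mul_left k (by omega)
        omega
      refine ⟨⟨g (w - 1), hgkn⟩, ?_, ?_⟩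
      · -- g (w-1) < i
        by_cases hij : (i : ℕ) ≤ j
        · -- i is in the prefix;  p i = w so i ≥ g w > g (w-1)
          have hpi : p (i : ℕ) = w := by
            have := hsi
            simp only [dif_pos hij] at this
            exact this
          have hgw := A.hg w (by omega) hwn
          have : g w ≤ (i : ℕ) := by
            by_contra hc
            exact hgw.2.2 (i : ℕ) (by omega) hpi
          have := A.hgmono w hw2 hwn
          simp only []
          omega
        · have : g (w - 1) ≤ j := hg1
          simp only []
          omega
      · simp only [dif_pos hg1, hg2]
    · -- R2
      intro w hw1 hwn
      obtain ⟨hg1, hg2, hg3⟩ := A.hg w hw1 hwn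
      have hglt : g w < k * w := A.hgbound w hw1 hwn
      have hgkn : g w < k * n := by
        have : k * w ≤ k * n := Nat.mul_le_mul_left k (by omega)
        omega
      exact ⟨⟨g w, hgkn⟩, by simpa [dif_pos hg1] using hglt,
        by simp [dif_pos hg1, hg2]⟩
    · intro s
      apply Subtype.ext
      funext t
      by_cases h : (t : ℕ) ≤ j
      · simp only [dif_pos h]
        exact Fin.ext (by rw [s.2.1 t h])
      · simp only [dif_neg h]
        have hidx : (⟨j + 1 + ((t : ℕ) - (j + 1)), by have := t.isLt; omega⟩ : Fin (k * n)) = t :=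
          Fin.ext (show j + 1 + ((t : ℕ) - (j + 1)) = (t : ℕ) by omega)
        rw [hidx]
    · intro f
      funext t
      have h1 : ¬ (j + 1 + (t : ℕ) ≤ j) := by omega
      simp only [dif_neg h1]
      congr 1
      exact Fin.ext (by simp)
  rw [Nat.card_congr E, Nat.card_eq_fintype_card, Fintype.card_fun, Fintype.card_fin,
    Fintype.card_fin]
  rw [Ntab, if_pos hge]
  have hc : k * n = n * k := Nat.mul_comm _ _
  congr 1
  omega

/-! ### Step machinery -/

lemma hexS (n k m j : ℕ) (p : ℕ → ℕ) (hlt : m + 1 ≤ n - 1) (s : Sset n k j p) :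
    ∃ t : ℕ, ∃ h : t < k * n, (s.1 ⟨t, h⟩ : ℕ) = m + 1 := by
  obtain ⟨u, hu1, hu2⟩ := s.2.2.2 (m + 1) (by omega) hlt
  exact ⟨(u : ℕ), u.isLt, by simpa using hu2⟩

noncomputable def FS (n k m j : ℕ) (p : ℕ → ℕ) (hlt : m + 1 ≤ n - 1) (s : Sset n k j p) : ℕ :=
  firstM n k m s.1 (hexS n k m j p hlt s)

lemma FS_spec (n k m j : ℕ) (p : ℕ → ℕ) (hlt : m + 1 ≤ n - 1) (s : Sset n k j p) :
    ∃ h : FS n k m j p hlt s < k * n, (s.1 ⟨FS n k m j p hlt s, h⟩ : ℕ) = m + 1 :=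
  firstM_spec n k m s.1 (hexS n k m j p hlt s)

lemma FS_min (n k m j : ℕ) (p : ℕ → ℕ) (hlt : m + 1 ≤ n - 1) (s : Sset n k j p)
    (t : ℕ) (ht : t < FS n k m j p hlt s) : ¬ ∃ h : t < k * n, (s.1 ⟨t, h⟩ : ℕ) = m + 1 :=
  firstM_min n k m s.1 (hexS n k m j p hlt s) t ht

lemma FS_lt (n k m j : ℕ) (p : ℕ → ℕ) (hlt : m + 1 ≤ n - 1) (s : Sset n k j p) :
    FS n k m j p hlt s < k * (m + 1) := by
  obtain ⟨u, hu1, hu2⟩ := s.2.2.2 (m + 1) (by omega) hlt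
  have := firstM_le n k m s.1 (hexS n k m j p hlt s) (u : ℕ) ⟨u.isLt, by simpa using hu2⟩
  unfold FS
  omega

lemma FS_gt (n k m j : ℕ) (p : ℕ → ℕ) (hlt : m + 1 ≤ n - 1)
    (hpval : ∀ i ≤ j, p i ≤ m) (s : Sset n k j p) : j < FS n k m j p hlt s := by
  by_contra hc
  push_neg at hc
  obtain ⟨h, hval⟩ := FS_spec n k m j p hlt s
  have h1 := s.2.1 ⟨FS n k m j p hlt s, h⟩ hc
  have h2 := hpval (FS n k m j p hlt s) hc
  simp only [h1] at hval
  omega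

lemma FS_mid (n k m j : ℕ) (p : ℕ → ℕ) (hlt : m + 1 ≤ n - 1) (s : Sset n k j p)
    (t : ℕ) (h : t < k * n) (h2 : t < FS n k m j p hlt s) : (s.1 ⟨t, h⟩ : ℕ) ≤ m := by
  by_contra hc
  push_neg at hc
  obtain ⟨u, hu1, hu2⟩ := chain n k s.1 s.2.2.1 (m + 1) (by omega) ⟨t, h⟩ hc
  exact FS_min n k m j p hlt s (u : ℕ) (by simp at hu1; omega) ⟨u.isLt, by simpa using hu2⟩

noncomputable def HS (n k m j : ℕ) (p : ℕ → ℕ) (hlt : m + 1 ≤ n - 1)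
    (hpval : ∀ i ≤ j, p i ≤ m) (s : Sset n k j p) :
    Σ i : Fin ((m + 1) * k - j - 1), (Fin (i : ℕ) → Fin (m + 1)) :=
  ⟨⟨FS n k m j p hlt s - j - 1, by
      have h1 := FS_lt n k m j p hlt s
      have h2 := FS_gt n k m j p hlt hpval s
      have h3 : k * (m + 1) = (m + 1) * k := Nat.mul_comm _ _
      omega⟩,
   fun t => ⟨(s.1 ⟨j + 1 + (t : ℕ), by
      have h1 := FS_lt n k m j p hlt s
      have h2 := FS_gt n k m j p hlt hpval s
      have h4 : k * (m + 1) ≤ k * n := Nat.mul_le_mul_left k (by omega)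
      have h5 : (t : ℕ) < FS n k m j p hlt s - j - 1 := t.isLt
      omega⟩ : ℕ), by
      have h1 := FS_lt n k m j p hlt s
      have h2 := FS_gt n k m j p hlt hpval s
      have h4 : k * (m + 1) ≤ k * n := Nat.mul_le_mul_left k (by omega)
      have h5 : (t : ℕ) < FS n k m j p hlt s - j - 1 := t.isLt
      have h6 := FS_mid n k m j p hlt s (j + 1 + (t : ℕ)) (by omega) (by omega)
      omega⟩⟩

lemma HS_eq_iff (n k m j : ℕ) (p : ℕ → ℕ) (hlt : m + 1 ≤ n - 1)
    (hpval : ∀ i ≤ j, p i ≤ m) (s : Sset n k j p)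
    (i : Fin ((m + 1) * k - j - 1)) (v : Fin (i : ℕ) → Fin (m + 1)) :
    HS n k m j p hlt hpval s = ⟨i, v⟩ ↔
      (FS n k m j p hlt s = j + (i : ℕ) + 1 ∧
       ∀ (t : ℕ) (ht : t < (i : ℕ)) (hb : j + 1 + t < k * n),
         (s.1 ⟨j + 1 + t, hb⟩ : ℕ) = (v ⟨t, ht⟩ : ℕ)) := by
  have hgt := FS_gt n k m j p hlt hpval s
  constructor
  · intro h
    have e1 : (HS n k m j p hlt hpval s).1 = i := congrArg Sigma.fst h
    have e1' : FS n k m j p hlt s - j - 1 = (i : ℕ) := congrArg Fin.val e1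
    refine ⟨by omega, ?_⟩
    intro t ht hb
    have e2 : HEq (HS n k m j p hlt hpval s).2 v := by rw [h]
    have e3 := (Fin.heq_fun_iff (show ((HS n k m j p hlt hpval s).1 : ℕ) = (i : ℕ) from e1')).mp e2
    have e4 := congrArg Fin.val (e3 ⟨t, show t < FS n k m j p hlt s - j - 1 by omega⟩)
    exact e4
  · rintro ⟨h1, h2⟩
    refine Sigma.ext (Fin.ext (show FS n k m j p hlt s - j - 1 = (i : ℕ) by omega)) ?_
    refine (Fin.heq_fun_iff (show FS n k m j p hlt s - j - 1 = (i : ℕ) by omega)).mpr ?_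
    intro t
    apply Fin.ext
    exact h2 (t : ℕ) (by have : (t : ℕ) < FS n k m j p hlt s - j - 1 := t.isLt; omega) _

def extp (m j : ℕ) (p : ℕ → ℕ) (i : ℕ) (v : Fin i → Fin (m + 1)) : ℕ → ℕ :=
  fun t => if t ≤ j then p t
    else if h : t - (j + 1) < i then (v ⟨t - (j + 1), h⟩ : ℕ)
    else if t = j + i + 1 then m + 1 else 0

lemma extp_le {m j : ℕ} {p : ℕ → ℕ} {i : ℕ} {v : Fin i → Fin (m + 1)} {t : ℕ} (h : t ≤ j) :
    extp m j p i v t = p t := if_pos h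

lemma extp_mid {m j : ℕ} {p : ℕ → ℕ} {i : ℕ} {v : Fin i → Fin (m + 1)} {t : ℕ}
    (h1 : j < t) (h2 : t - (j + 1) < i) :
    extp m j p i v t = (v ⟨t - (j + 1), h2⟩ : ℕ) := by
  unfold extp
  rw [if_neg (by omega), dif_pos h2]

lemma extp_top {m j : ℕ} {p : ℕ → ℕ} {i : ℕ} {v : Fin i → Fin (m + 1)} :
    extp m j p i v (j + i + 1) = m + 1 := by
  unfold extp
  rw [if_neg (by omega), dif_neg (by omega), if_pos rfl]

lemma extpAdm (n k m j : ℕ) (p g : ℕ → ℕ) (hk : 1 ≤ k) (hlt : m + 1 ≤ n - 1)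
    (A : Adm n k m j p g) (i : ℕ) (hiL : i < (m + 1) * k - j - 1) (v : Fin i → Fin (m + 1)) :
    Adm n k (m + 1) (j + i + 1) (extp m j p i v) (fun w => if w ≤ m then g w else j + i + 1) := by
  have hcomm : k * (m + 1) = (m + 1) * k := Nat.mul_comm _ _
  have hA1 := A.hm1
  have hA3 := A.hj1
  constructor
  · omega
  · exact hlt
  · omega
  · omega
  · -- hpval
    intro t ht
    by_cases h : t ≤ j
    · rw [extp_le h]; have := A.hpval t h; omega
    · by_cases h2 : t - (j + 1) < i
      · rw [extp_mid (by omega) h2]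
        have := (v ⟨t - (j + 1), h2⟩).isLt
        omega
      · have : t = j + i + 1 := by omega
        subst this
        rw [extp_top]
  · obtain ⟨t, ht, hpt⟩ := A.hzero
    exact ⟨t, by omega, by rw [extp_le ht]; exact hpt⟩
  · -- hg
    intro w hw1 hw2
    by_cases hwm : w ≤ m
    · obtain ⟨hg1, hg2, hg3⟩ := A.hg w hw1 hwm
      rw [if_pos hwm]
      refine ⟨by omega, by rw [extp_le hg1]; exact hg2, ?_⟩
      intro t ht
      rw [extp_le (by omega)]
      exact hg3 t ht
    · have hw : w = m + 1 := by omega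
      subst hw
      rw [if_neg hwm]
      refine ⟨le_rfl, extp_top, ?_⟩
      intro t ht
      by_cases h : t ≤ j
      · rw [extp_le h]
        have := A.hpval t h
        omega
      · have h2 : t - (j + 1) < i := by omega
        rw [extp_mid (by omega) h2]
        have := (v ⟨t - (j + 1), h2⟩).isLt
        omega
  · -- hgmono
    intro w hw1 hw2
    by_cases hwm : w ≤ m
    · rw [if_pos hwm, if_pos (show w - 1 ≤ m by omega)]
      exact A.hgmono w hw1 hwm
    · have hw : w = m + 1 := by omega
      subst hw
      simp only [Nat.add_sub_cancel, if_pos (le_refl m), if_neg hwm]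
      have h1 := (A.hg m hA1 le_rfl).1
      have := A.hgm
      omega
  · -- hgbound
    intro w hw1 hw2
    by_cases hwm : w ≤ m
    · rw [if_pos hwm]; exact A.hgbound w hw1 hwm
    · have hw : w = m + 1 := by omega
      subst hw
      rw [if_neg hwm]
      omega
  · simp

lemma FS_le (n k m j : ℕ) (p : ℕ → ℕ) (hlt : m + 1 ≤ n - 1) (s : Sset n k j p)
    (t : ℕ) (h : ∃ h : t < k * n, (s.1 ⟨t, h⟩ : ℕ) = m + 1) : FS n k m j p hlt s ≤ t :=
  firstM_le n k m s.1 (hexS n k m j p hlt s) t h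

lemma stepCase (n k m j : ℕ) (hn : 2 ≤ n) (hk : 1 ≤ k) (hlt : m + 1 ≤ n - 1)
    (p g : ℕ → ℕ) (A : Adm n k m j p g)
    (IH : ∀ (j' : ℕ) (p' g' : ℕ → ℕ), Adm n k (m + 1) j' p' g' →
      Nat.card (Sset n k j' p') = Ntab n k (m + 1) j') :
    Nat.card (Sset n k j p) = Ntab n k m j := by
  have hpval := A.hpval
  have hcomm : k * (m + 1) = (m + 1) * k := Nat.mul_comm _ _
  have hkmn : k * (m + 1) ≤ k * n := Nat.mul_le_mul_left k (by omega)
  have hmk1 : 1 ≤ m * k := Nat.mul_pos A.hm1 hk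
  have hkm : (m + 1) * k = m * k + k := by ring
  have hj2 := A.hj2
  rw [card_fiber_s11 (HS n k m j p hlt hpval)]
  have hfib : ∀ b : Σ i : Fin ((m + 1) * k - j - 1), (Fin (i : ℕ) → Fin (m + 1)),
      Nat.card {s : Sset n k j p // HS n k m j p hlt hpval s = b}
        = Ntab n k (m + 1) (j + (b.1 : ℕ) + 1) := by
    rintro ⟨i, v⟩
    have hiL : (i : ℕ) < (m + 1) * k - j - 1 := i.isLt
    -- backward characterization
    have hback : ∀ (y : Sset n k (j + (i : ℕ) + 1) (extp m j p (i : ℕ) v))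
        (z : Sset n k j p), z.1 = y.1 → HS n k m j p hlt hpval z = ⟨i, v⟩ := by
      intro y z hz
      rw [HS_eq_iff]
      have hjin : j + (i : ℕ) + 1 < k * n := by omega
      have hvtop : (z.1 ⟨j + (i : ℕ) + 1, hjin⟩ : ℕ) = m + 1 := by
        rw [hz, y.2.1 ⟨j + (i : ℕ) + 1, hjin⟩ le_rfl]
        exact extp_top
      have hF : FS n k m j p hlt z = j + (i : ℕ) + 1 := by
        apply le_antisymm
        · exact FS_le n k m j p hlt z (j + (i : ℕ) + 1) ⟨hjin, hvtop⟩
        · by_contra hc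
          push_neg at hc
          obtain ⟨hb', hval'⟩ := FS_spec n k m j p hlt z
          set r := FS n k m j p hlt z with hr
          have hy := y.2.1 ⟨r, hb'⟩ (show r ≤ j + (i : ℕ) + 1 by omega)
          rw [hz, hy] at hval'
          by_cases hrj : r ≤ j
          · rw [extp_le hrj] at hval'
            have := A.hpval r hrj
            omega
          · have h2 : r - (j + 1) < (i : ℕ) := by omega
            rw [extp_mid (by omega) h2] at hval'
            have := (v ⟨r - (j + 1), h2⟩).isLt
            omega
      refine ⟨hF, ?_⟩
      intro t ht hb
      have h1 : j + 1 + t ≤ j + (i : ℕ) + 1 := by omega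
      rw [hz, y.2.1 ⟨j + 1 + t, hb⟩ h1,
        extp_mid (show j < j + 1 + t by omega) (show j + 1 + t - (j + 1) < (i : ℕ) by omega)]
      exact congrArg (fun z => ((v z : Fin (m + 1)) : ℕ))
        (Fin.ext (show j + 1 + t - (j + 1) = t by omega))
    -- forward: prefix agreement
    have hfwd : ∀ x : {s : Sset n k j p // HS n k m j p hlt hpval s = ⟨i, v⟩},
        ∀ t : Fin (k * n), (t : ℕ) ≤ j + (i : ℕ) + 1 →
          (x.1.1 t : ℕ) = extp m j p (i : ℕ) v (t : ℕ) := by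
      intro x t ht
      obtain ⟨hF, hv⟩ := (HS_eq_iff n k m j p hlt hpval x.1 i v).mp x.2
      by_cases h : (t : ℕ) ≤ j
      · rw [extp_le h]
        exact x.1.2.1 t h
      · by_cases h2 : (t : ℕ) - (j + 1) < (i : ℕ)
        · rw [extp_mid (by omega) h2]
          have hb : j + 1 + ((t : ℕ) - (j + 1)) < k * n := by have := t.isLt; omega
          have hval := hv ((t : ℕ) - (j + 1)) h2 hb
          have hidx : (⟨j + 1 + ((t : ℕ) - (j + 1)), hb⟩ : Fin (k * n)) = t :=
            Fin.ext (show j + 1 + ((t : ℕ) - (j + 1)) = (t : ℕ) by omega)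
          conv_lhs => rw [← hidx]
          exact hval
        · have hteq : (t : ℕ) = j + (i : ℕ) + 1 := by omega
          rw [hteq, extp_top]
          obtain ⟨hb', hval'⟩ := FS_spec n k m j p hlt x.1
          have hidx : (⟨FS n k m j p hlt x.1, hb'⟩ : Fin (k * n)) = t :=
            Fin.ext (show FS n k m j p hlt x.1 = (t : ℕ) by omega)
          rw [← hidx]
          exact hval'
    have E2 : {s : Sset n k j p // HS n k m j p hlt hpval s = ⟨i, v⟩} ≃
        Sset n k (j + (i : ℕ) + 1) (extp m j p (i : ℕ) v) :=
      { toFun := fun x => ⟨x.1.1, hfwd x, x.1.2.2.1, x.1.2.2.2⟩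
        invFun := fun y => ⟨⟨y.1, fun t ht => by
            rw [y.2.1 t (by omega), extp_le ht], y.2.2.1, y.2.2.2⟩, hback y _ rfl⟩
        left_inv := fun x => Subtype.ext (Subtype.ext rfl)
        right_inv := fun y => Subtype.ext rfl }
    rw [Nat.card_congr E2]
    exact IH (j + (i : ℕ) + 1) (extp m j p (i : ℕ) v) _
      (extpAdm n k m j p g hk hlt A (i : ℕ) hiL v)
  calc ∑ b : Σ i : Fin ((m + 1) * k - j - 1), (Fin (i : ℕ) → Fin (m + 1)),
        Nat.card {s : Sset n k j p // HS n k m j p hlt hpval s = b}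
      = ∑ b : Σ i : Fin ((m + 1) * k - j - 1), (Fin (i : ℕ) → Fin (m + 1)),
          Ntab n k (m + 1) (j + (b.1 : ℕ) + 1) :=
        Finset.sum_congr rfl fun b _ => hfib b
    _ = ∑ i : Fin ((m + 1) * k - j - 1), ∑ _v : Fin (i : ℕ) → Fin (m + 1),
          Ntab n k (m + 1) (j + (i : ℕ) + 1) := by
        rw [← Finset.univ_sigma_univ, Finset.sum_sigma]
    _ = ∑ i : Fin ((m + 1) * k - j - 1), (m + 1) ^ (i : ℕ) * Ntab n k (m + 1) (j + (i : ℕ) + 1) := by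
        refine Finset.sum_congr rfl fun i _ => ?_
        rw [Finset.sum_const, Finset.card_univ, Fintype.card_fun, Fintype.card_fin,
          Fintype.card_fin, smul_eq_mul]
    _ = ∑ i ∈ Finset.range ((m + 1) * k - j - 1), (m + 1) ^ i * Ntab n k (m + 1) (j + i + 1) :=
        Fin.sum_univ_eq_sum_range (fun i => (m + 1) ^ i * Ntab n k (m + 1) (j + i + 1)) _
    _ = Ntab n k m j := by
        conv_rhs => rw [Ntab, if_neg (show ¬ (n - 1 ≤ m) by omega)]

lemma mainLemma (n k : ℕ) (hn : 2 ≤ n) (hk : 1 ≤ k) :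
    ∀ (d m j : ℕ) (p g : ℕ → ℕ), n - 1 - m = d → Adm n k m j p g →
      Nat.card (Sset n k j p) = Ntab n k m j := by
  intro d
  induction d with
  | zero =>
    intro m j p g hd A
    exact baseCase n k m j hn hk (by omega) p g A
  | succ d ih =>
    intro m j p g hd A
    have hlt : m + 1 ≤ n - 1 := by omega
    exact stepCase n k m j hn hk hlt p g A
      (fun j' p' g' A' => ih (m + 1) j' p' g' (by omega) A')


/-- Fix `n ≥ 2`, `k ≥ 1`, `m ∈ [1, n-1]`, `j ∈ [m-1, mk-1]`, and an admissible
prefix `p` on positions `0, …, j`:  its entries lie in `[0, m]`, the values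
occurring are exactly `0, 1, …, m` (here `g v` is the first-occurrence index
of `v` for `v ∈ [1, m]`), the first occurrences of `1, …, m` appear in
increasing order of value, the first occurrence of each `l ∈ [1, m]` is at an
index `< k*l`, and the first occurrence of `m` is at index `j`.  Then the
number of completions of the prefix to a full string of length `k*n` with
entries in `[0, n-1]` satisfying rules (R1) and (R2) equals `N_{m,j}` (in
particular it is independent of the admissible prefix chosen). -/
theorem stmt11 (n k m j : ℕ) (hn : 2 ≤ n) (hk : 1 ≤ k)
    (hm1 : 1 ≤ m) (hm2 : m ≤ n - 1) (hj1 : m - 1 ≤ j) (hj2 : j ≤ m * k - 1)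
    (p : ℕ → ℕ)
    (hpval : ∀ i ≤ j, p i ≤ m)
    (hzero : ∃ i ≤ j, p i = 0)
    (g : ℕ → ℕ)
    (hg : ∀ v : ℕ, 1 ≤ v → v ≤ m → g v ≤ j ∧ p (g v) = v ∧ ∀ i < g v, p i ≠ v)
    (hgmono : ∀ v : ℕ, 2 ≤ v → v ≤ m → g (v - 1) < g v)
    (hgbound : ∀ v : ℕ, 1 ≤ v → v ≤ m → g v < k * v)
    (hgm : g m = j) :
    Nat.card {s : Fin (k * n) → Fin n //
        (∀ i : Fin (k * n), (i : ℕ) ≤ j → (s i : ℕ) = p i) ∧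
        RuleR1 n k s ∧ RuleR2 n k s} = Ntab n k m j := by
  exact mainLemma n k hn hk (n - 1 - m) m j p g rfl
    ⟨hm1, hm2, hj1, hj2, hpval, hzero, hg, hgmono, hgbound, hgm⟩
end
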